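/- arXiv:1402.2823 — 4 statements merged into one kernel-verified Lean document; each statement's English description precedes it below -/
import Mathlib

section
/- Decomposition of the Watson statistic: let p ≥ 2 and n ≥ 1 be integers, θ₀ ∈ S^{p−1}, and let x₁,…,xₙ ∈ S^{p−1} satisfy x_i ≠ ±θ₀ for all i. Writing u_i := u(x_i), S_i := S(x_i), x̄ := (1/n) Σ_{i=1}^n x_i, and W := n(p−1) ⟨x̄, (I_p − θ₀θ₀ᵀ) x̄⟩ / (1 − (1/n) Σ_{i=1}^n ⟨x_i,θ₀⟩²), one has the identity W = (p−1) + (2(p−1)/Σ_{i=1}^n u_i²) Σ_{1≤i<j≤n} u_i u_j ⟨S_i,S_j⟩. -/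
open MeasureTheory Filter
open scoped BigOperators RealInnerProductSpace

lemma pair_sum {g : ℕ → ℕ → ℝ} (hg : ∀ i j, g i j = g j i) (n : ℕ) :
    ∑ j ∈ Finset.Icc 1 n, ∑ i ∈ Finset.Icc 1 n, g i j
      = (∑ i ∈ Finset.Icc 1 n, g i i)
        + 2 * ∑ j ∈ Finset.Icc 1 n, ∑ i ∈ Finset.Icc 1 (j-1), g i j := by
  set s := Finset.Icc 1 n with hs
  have hIcc : ∀ j ∈ s, Finset.Icc 1 (j-1) = s.filter (· < j) := by
    intro j hj
    simp only [hs, Finset.mem_Icc] at hj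
    ext i
    simp only [Finset.mem_Icc, Finset.mem_filter, hs]
    omega
  have hsplit : ∀ j ∈ s, (∑ i ∈ s, g i j)
      = (∑ i ∈ s.filter (· < j), g i j) + g j j + ∑ i ∈ s.filter (j < ·), g i j := by
    intro j hj
    have h : s.filter (fun i => ¬ i < j) = insert j (s.filter (j < ·)) := by
      ext i
      simp only [Finset.mem_filter, Finset.mem_insert, Finset.mem_Icc, hs]
      simp only [hs, Finset.mem_Icc] at hj
      omega
    rw [← Finset.sum_filter_add_sum_filter_not s (· < j) (fun i => g i j), h,
      Finset.sum_insert (by simp)]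
    ring
  have hA : (∑ j ∈ s, ∑ i ∈ s.filter (j < ·), g i j)
      = ∑ j ∈ s, ∑ i ∈ s.filter (· < j), g i j := by
    have h1 : ∀ j, (∑ i ∈ s.filter (j < ·), g i j) = ∑ i ∈ s, if j < i then g i j else 0 := by
      intro j; rw [Finset.sum_filter]
    have h2 : ∀ j, (∑ i ∈ s.filter (· < j), g i j) = ∑ i ∈ s, if i < j then g i j else 0 := by
      intro j; rw [Finset.sum_filter]
    simp only [h1, h2]
    rw [Finset.sum_comm]
    apply Finset.sum_congr rfl
    intro i _
    apply Finset.sum_congr rfl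
    intro j _
    by_cases h : i < j <;> simp [h, hg i j]
  have hB : (∑ j ∈ s, ∑ i ∈ Finset.Icc 1 (j-1), g i j)
      = ∑ j ∈ s, ∑ i ∈ s.filter (· < j), g i j :=
    Finset.sum_congr rfl (fun j hj => by rw [hIcc j hj])
  rw [Finset.sum_congr rfl hsplit, Finset.sum_add_distrib, Finset.sum_add_distrib, hA, hB]
  ring

/-- Decomposition of the Watson statistic: for unit vectors `x₁,…,xₙ` on `S^{p−1}` with
`xᵢ ≠ ±θ₀`, writing `uᵢ = √(1−⟨xᵢ,θ₀⟩²)`, `Sᵢ = (xᵢ−⟨xᵢ,θ₀⟩θ₀)/‖xᵢ−⟨xᵢ,θ₀⟩θ₀‖` and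
`x̄ = (1/n)Σxᵢ`, the Watson statistic
`W = n(p−1)⟨x̄,(I−θ₀θ₀ᵀ)x̄⟩/(1−(1/n)Σ⟨xᵢ,θ₀⟩²)` satisfies
`W = (p−1) + (2(p−1)/Σuᵢ²) Σ_{i<j} uᵢuⱼ⟨Sᵢ,Sⱼ⟩`. -/
theorem statement_6
    (p n : ℕ) (hp : 2 ≤ p) (hn : 1 ≤ n)
    (θ : EuclideanSpace ℝ (Fin p)) (hθ : ‖θ‖ = 1)
    (x : ℕ → EuclideanSpace ℝ (Fin p))
    (hxsph : ∀ i ∈ Finset.Icc 1 n, ‖x i‖ = 1)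
    (hxne : ∀ i ∈ Finset.Icc 1 n, x i ≠ θ ∧ x i ≠ -θ)
    (u : ℕ → ℝ) (hu : ∀ i, u i = Real.sqrt (1 - ⟪x i, θ⟫ ^ 2))
    (S : ℕ → EuclideanSpace ℝ (Fin p))
    (hS : ∀ i ∈ Finset.Icc 1 n,
      S i = ‖x i - ⟪x i, θ⟫ • θ‖⁻¹ • (x i - ⟪x i, θ⟫ • θ))
    (xbar : EuclideanSpace ℝ (Fin p))
    (hxbar : xbar = (n : ℝ)⁻¹ • ∑ i ∈ Finset.Icc 1 n, x i)
    (W : ℝ)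
    (hW : W = (n : ℝ) * ((p : ℝ) - 1) * (‖xbar‖ ^ 2 - ⟪xbar, θ⟫ ^ 2) /
      (1 - (n : ℝ)⁻¹ * ∑ i ∈ Finset.Icc 1 n, ⟪x i, θ⟫ ^ 2)) :
    W = ((p : ℝ) - 1) +
      (2 * ((p : ℝ) - 1) / ∑ i ∈ Finset.Icc 1 n, (u i) ^ 2) *
        ∑ j ∈ Finset.Icc 1 n, ∑ i ∈ Finset.Icc 1 (j - 1),
          u i * u j * ⟪S i, S j⟫ := by
  set s := Finset.Icc 1 n with hs
  have hn0 : (n : ℝ) ≠ 0 := Nat.cast_ne_zero.mpr (by omega)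
  -- pointwise facts
  have hfac : ∀ i ∈ s, 0 < u i ∧ u i ^ 2 = 1 - ⟪x i, θ⟫ ^ 2 ∧
      ‖x i - ⟪x i, θ⟫ • θ‖ = u i ∧ u i • S i = x i - ⟪x i, θ⟫ • θ := by
    intro i hi
    have hx1 : ‖x i‖ = 1 := hxsph i hi
    have h1 : ⟪x i, θ⟫ < 1 :=
      (inner_lt_one_iff_real_of_norm_eq_one hx1 hθ).mpr (hxne i hi).1
    have h2 : -1 < ⟪x i, θ⟫ := by
      have hθ' : ‖-θ‖ = 1 := by rw [norm_neg]; exact hθ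
      have h := (inner_lt_one_iff_real_of_norm_eq_one hx1 hθ').mpr (hxne i hi).2
      rw [inner_neg_right] at h
      linarith
    have hsq : ⟪x i, θ⟫ ^ 2 < 1 := by nlinarith
    have hu2 : u i ^ 2 = 1 - ⟪x i, θ⟫ ^ 2 := by
      rw [hu i]; exact Real.sq_sqrt (by linarith)
    have hupos : 0 < u i := by rw [hu i]; exact Real.sqrt_pos.mpr (by linarith)
    have hv2 : ‖x i - ⟪x i, θ⟫ • θ‖ ^ 2 = u i ^ 2 := by
      rw [norm_sub_sq_real, real_inner_smul_right, norm_smul, hx1, hθ, hu2,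
        Real.norm_eq_abs]
      simp only [mul_one, sq_abs, one_pow]
      ring
    have hnv : ‖x i - ⟪x i, θ⟫ • θ‖ = u i := by
      calc ‖x i - ⟪x i, θ⟫ • θ‖ = Real.sqrt (‖x i - ⟪x i, θ⟫ • θ‖ ^ 2) :=
            (Real.sqrt_sq (norm_nonneg _)).symm
        _ = Real.sqrt (u i ^ 2) := by rw [hv2]
        _ = u i := Real.sqrt_sq hupos.le
    refine ⟨hupos, hu2, hnv, ?_⟩
    rw [hS i hi, hnv, smul_smul, mul_inv_cancel₀ hupos.ne', one_smul]
  have hinner : ∀ i ∈ s, ∀ j ∈ s,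
      ⟪x i - ⟪x i, θ⟫ • θ, x j - ⟪x j, θ⟫ • θ⟫ = u i * u j * ⟪S i, S j⟫ := by
    intro i hi j hj
    rw [← (hfac i hi).2.2.2, ← (hfac j hj).2.2.2, real_inner_smul_left,
      real_inner_smul_right]
    ring
  -- numerator
  have hm : ⟪xbar, θ⟫ = (n : ℝ)⁻¹ * ∑ i ∈ s, ⟪x i, θ⟫ := by
    rw [hxbar, real_inner_smul_left, sum_inner]
  have hxbar' : xbar - ⟪xbar, θ⟫ • θ = (n : ℝ)⁻¹ • ∑ i ∈ s, (x i - ⟪x i, θ⟫ • θ) := by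
    rw [hm, hxbar, Finset.sum_sub_distrib, smul_sub, ← Finset.sum_smul, smul_smul]
  have hnum : ‖xbar‖ ^ 2 - ⟪xbar, θ⟫ ^ 2 = ‖xbar - ⟪xbar, θ⟫ • θ‖ ^ 2 := by
    rw [norm_sub_sq_real, real_inner_smul_right, norm_smul, hθ, Real.norm_eq_abs]
    simp only [mul_one, sq_abs]
    ring
  have hsumnorm : ‖xbar - ⟪xbar, θ⟫ • θ‖ ^ 2
      = (n : ℝ)⁻¹ ^ 2 * ∑ j ∈ s, ∑ i ∈ s, (u i * u j * ⟪S i, S j⟫) := by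
    rw [hxbar', norm_smul, mul_pow]
    congr 1
    · rw [Real.norm_eq_abs, sq_abs]
    · rw [← real_inner_self_eq_norm_sq, sum_inner]
      refine Eq.trans ?_ Finset.sum_comm
      refine Finset.sum_congr rfl fun i hi => ?_
      rw [inner_sum]
      exact Finset.sum_congr rfl fun j hj => hinner i hi j hj
  have hpair := pair_sum (g := fun i j => u i * u j * ⟪S i, S j⟫)
    (fun i j => by rw [real_inner_comm]; ring) n
  have hdiag : (∑ i ∈ s, u i * u i * ⟪S i, S i⟫) = ∑ i ∈ s, u i ^ 2 := by
    refine Finset.sum_congr rfl fun i hi => ?_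
    rw [← hinner i hi i hi, real_inner_self_eq_norm_sq, (hfac i hi).2.2.1]
  have hdouble : (∑ j ∈ s, ∑ i ∈ s, (u i * u j * ⟪S i, S j⟫))
      = (∑ i ∈ s, u i ^ 2) + 2 * ∑ j ∈ s, ∑ i ∈ Finset.Icc 1 (j - 1),
          u i * u j * ⟪S i, S j⟫ := by
    rw [hs] at hdiag ⊢
    rw [hpair, hdiag]
  -- denominator
  have hcard : ((s.card : ℕ) : ℝ) = n := by
    rw [hs, Nat.card_Icc]; simp
  have hU : (∑ i ∈ s, u i ^ 2) = (n : ℝ) - ∑ i ∈ s, ⟪x i, θ⟫ ^ 2 := by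
    rw [Finset.sum_congr rfl (fun i hi => (hfac i hi).2.1), Finset.sum_sub_distrib,
      Finset.sum_const, nsmul_eq_mul, mul_one, hcard]
  have hUpos : 0 < ∑ i ∈ s, u i ^ 2 := by
    refine Finset.sum_pos (fun i hi => pow_pos (hfac i hi).1 2) ?_
    exact ⟨1, by simp only [hs, Finset.mem_Icc]; omega⟩
  have hden : 1 - (n : ℝ)⁻¹ * ∑ i ∈ s, ⟪x i, θ⟫ ^ 2
      = (n : ℝ)⁻¹ * ∑ i ∈ s, u i ^ 2 := by
    have hC : (∑ i ∈ s, ⟪x i, θ⟫ ^ 2) = (n : ℝ) - ∑ i ∈ s, u i ^ 2 := by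
      linarith [hU]
    rw [hC, mul_sub, inv_mul_cancel₀ hn0]
    ring
  rw [hW, hnum, hsumnorm, hdouble, hden]
  set U := ∑ i ∈ s, u i ^ 2 with hUdef
  set T := ∑ j ∈ s, ∑ i ∈ Finset.Icc 1 (j - 1), u i * u j * ⟪S i, S j⟫ with hTdef
  have hU0 : U ≠ 0 := ne_of_gt hUpos
  field_simp
end

section
/- Conditional variance formula: in the fixed-sample setup, for every 2 ≤ ℓ ≤ n, almost surely E[ Y_ℓ² | X₁,…,X_{ℓ−1} ] = (2/(n² E[u₁²])) Σ_{i=1}^{ℓ−1} Σ_{j=1}^{ℓ−1} u_i u_j ⟨S_i,S_j⟩, where Y_ℓ := (√(2(p−1))/(n E[u₁²])) Σ_{i=1}^{ℓ−1} u_i u_ℓ ⟨S_i,S_ℓ⟩. -/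
open MeasureTheory ProbabilityTheory Filter
open scoped BigOperators RealInnerProductSpace

/-- A Borel probability measure on `ℝ^p` is rotationally symmetric about `θ` if it is invariant
under every orthogonal transformation (linear isometry) of `ℝ^p` fixing `θ`. -/
def RotSym {p : ℕ} (θ : EuclideanSpace ℝ (Fin p)) (μ : Measure (EuclideanSpace ℝ (Fin p))) :
    Prop :=
  ∀ O : EuclideanSpace ℝ (Fin p) ≃ₗᵢ[ℝ] EuclideanSpace ℝ (Fin p), O θ = θ →
    Measure.map O μ = μ

section extra
variable {p : ℕ}

lemma coord_abs_le (x : EuclideanSpace ℝ (Fin p)) (k : Fin p) : |x k| ≤ ‖x‖ := by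
  have := abs_real_inner_le_norm (EuclideanSpace.single k (1:ℝ)) x
  simpa [EuclideanSpace.inner_single_left, EuclideanSpace.norm_single] using this

lemma sum_mul_eq_inner (x y : EuclideanSpace ℝ (Fin p)) : ∑ k, x k * y k = ⟪x, y⟫ := by
  rw [PiLp.inner_apply]; simp [RCLike.inner_apply, conj_trivial]; exact Finset.sum_congr rfl (fun _ _ => mul_comm _ _)

lemma coord_sub_smul (x θ : EuclideanSpace ℝ (Fin p)) (c : ℝ) (k : Fin p) :
    (x - c • θ) k = x k - c * θ k := by
  simp [PiLp.sub_apply, PiLp.smul_apply, smul_eq_mul]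

end extra

open MeasureTheory ProbabilityTheory Filter
open scoped BigOperators RealInnerProductSpace


section helper

variable {p : ℕ} {θ : EuclideanSpace ℝ (Fin p)}
  {μ : Measure (EuclideanSpace ℝ (Fin p))}

lemma integrable_inner_mul [IsProbabilityMeasure μ] (hsph : ∀ᵐ x ∂μ, ‖x‖ = 1)
    (a b : EuclideanSpace ℝ (Fin p)) :
    Integrable (fun x => ⟪a, x⟫ * ⟪b, x⟫) μ := by
  refine (integrable_const (‖a‖ * ‖b‖)).mono'
    ((Continuous.inner continuous_const continuous_id).mul
      (Continuous.inner continuous_const continuous_id)).aestronglyMeasurable ?_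
  filter_upwards [hsph] with x hx
  have h1 := abs_real_inner_le_norm a x
  have h2 := abs_real_inner_le_norm b x
  rw [hx, mul_one] at h1 h2
  rw [Real.norm_eq_abs, abs_mul]
  exact mul_le_mul h1 h2 (abs_nonneg _) (norm_nonneg a)

lemma B_invariant (hrot : RotSym θ μ)
    (O : EuclideanSpace ℝ (Fin p) ≃ₗᵢ[ℝ] EuclideanSpace ℝ (Fin p)) (hO : O θ = θ)
    (a b : EuclideanSpace ℝ (Fin p)) :
    ∫ x, ⟪a, x⟫ * ⟪b, x⟫ ∂μ = ∫ x, ⟪O a, x⟫ * ⟪O b, x⟫ ∂μ := by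
  conv_rhs => rw [← hrot O hO]
  rw [integral_map (O.continuous.measurable.aemeasurable)
    ((Continuous.inner continuous_const continuous_id).mul
      (Continuous.inner continuous_const continuous_id)).aestronglyMeasurable]
  simp_rw [LinearIsometryEquiv.inner_map_map]

lemma B_zero [IsProbabilityMeasure μ] (hrot : RotSym θ μ)
    (a b : EuclideanSpace ℝ (Fin p)) (hbθ : ⟪b, θ⟫ = 0) (hab : ⟪a, b⟫ = 0) :
    ∫ x, ⟪a, x⟫ * ⟪b, x⟫ ∂μ = 0 := by
  rcases eq_or_ne b 0 with rfl | hb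
  · simp
  · set O := Submodule.reflection ((ℝ ∙ b)ᗮ) with hOdef
    have hOθ : O θ = θ := Submodule.reflection_mem_subspace_eq_self
      (Submodule.mem_orthogonal_singleton_iff_inner_right.2 hbθ)
    have hOa : O a = a := Submodule.reflection_mem_subspace_eq_self
      (Submodule.mem_orthogonal_singleton_iff_inner_right.2 (by rw [real_inner_comm]; exact hab))
    have hOb : O b = -b :=
      Submodule.reflection_mem_subspace_orthogonal_precomplement_eq_neg (Submodule.mem_span_singleton_self b)
    have h := B_invariant hrot O hOθ a b
    rw [hOa, hOb] at h
    simp only [inner_neg_left, mul_neg, integral_neg] at h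
    linarith

lemma B_swap [IsProbabilityMeasure μ] (hrot : RotSym θ μ)
    (a b : EuclideanSpace ℝ (Fin p)) (haθ : ⟪a, θ⟫ = 0) (hbθ : ⟪b, θ⟫ = 0)
    (ha : ‖a‖ = 1) (hb : ‖b‖ = 1) :
    ∫ x, ⟪a, x⟫ * ⟪a, x⟫ ∂μ = ∫ x, ⟪b, x⟫ * ⟪b, x⟫ ∂μ := by
  rcases eq_or_ne a b with rfl | hab
  · rfl
  · have hw : a - b ≠ 0 := sub_ne_zero.2 hab
    set O := Submodule.reflection ((ℝ ∙ (a - b))ᗮ) with hOdef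
    have hOθ : O θ = θ := Submodule.reflection_mem_subspace_eq_self
      (Submodule.mem_orthogonal_singleton_iff_inner_right.2
        (by rw [inner_sub_left, haθ, hbθ, sub_zero]))
    have h1 : O (a + b) = a + b := Submodule.reflection_mem_subspace_eq_self
      (Submodule.mem_orthogonal_singleton_iff_inner_right.2 (by
        rw [inner_sub_left, inner_add_right, inner_add_right,
          real_inner_self_eq_norm_sq, real_inner_self_eq_norm_sq, ha, hb, real_inner_comm b a]
        ring))
    have h2 : O (a - b) = -(a - b) :=
      Submodule.reflection_mem_subspace_orthogonal_precomplement_eq_neg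
        (Submodule.mem_span_singleton_self _)
    have hOa : O a = b := by
      have ha' : a = (2:ℝ)⁻¹ • ((a + b) + (a - b)) := by module
      rw [ha', _root_.map_smul, map_add, h1, h2]
      module
    have h := B_invariant hrot O hOθ a a
    rw [hOa] at h
    exact h

end helper

section main

variable {p : ℕ} {θ : EuclideanSpace ℝ (Fin p)}
  {μ : Measure (EuclideanSpace ℝ (Fin p))}

lemma B_unit [IsProbabilityMeasure μ] (hp : 2 ≤ p) (hθ : ‖θ‖ = 1)
    (hrot : RotSym θ μ) (hsph : ∀ᵐ x ∂μ, ‖x‖ = 1)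
    (a : EuclideanSpace ℝ (Fin p)) (haθ : ⟪a, θ⟫ = 0) (ha : ‖a‖ = 1) :
    ((p : ℝ) - 1) * ∫ x, ⟪a, x⟫ * ⟪a, x⟫ ∂μ = ∫ x, (1 - ⟪x, θ⟫ ^ 2) ∂μ := by
  classical
  set B : EuclideanSpace ℝ (Fin p) → EuclideanSpace ℝ (Fin p) → ℝ :=
    fun c d => ∫ x, ⟪c, x⟫ * ⟪d, x⟫ ∂μ with hB
  have hint : ∀ c d : EuclideanSpace ℝ (Fin p), Integrable (fun x => ⟪c, x⟫ * ⟪d, x⟫) μ :=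
    fun c d => integrable_inner_mul hsph c d
  -- bilinearity pieces
  have hsmul : ∀ (r : ℝ) (c d : EuclideanSpace ℝ (Fin p)), B (r • c) d = r * B c d := by
    intro r c d
    simp only [hB, real_inner_smul_left]
    rw [← integral_const_mul]
    congr 1; ext x; ring
  have hsmul' : ∀ (r : ℝ) (c d : EuclideanSpace ℝ (Fin p)), B c (r • d) = r * B c d := by
    intro r c d
    simp only [hB, real_inner_smul_left]
    rw [← integral_const_mul]
    congr 1; ext x; ring
  have hadd : ∀ c c' d : EuclideanSpace ℝ (Fin p), B (c + c') d = B c d + B c' d := by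
    intro c c' d
    simp only [hB, inner_add_left, add_mul]
    exact integral_add (hint c d) (hint c' d)
  have hadd' : ∀ c d d' : EuclideanSpace ℝ (Fin p), B c (d + d') = B c d + B c d' := by
    intro c d d'
    simp only [hB, inner_add_left, mul_add]
    exact integral_add (hint c d) (hint c d')
  -- the single vectors
  set e : Fin p → EuclideanSpace ℝ (Fin p) := fun k => EuclideanSpace.single k 1 with he
  set e' : Fin p → EuclideanSpace ℝ (Fin p) := fun k => e k - θ k • θ with he'
  have heθ : ∀ k, ⟪e k, θ⟫ = θ k := by
    intro k; simp [he, EuclideanSpace.inner_single_left]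
  have he'θ : ∀ k, ⟪e' k, θ⟫ = 0 := by
    intro k
    simp only [he', inner_sub_left, real_inner_smul_left, heθ,
      real_inner_self_eq_norm_sq, hθ]
    ring
  have heself : ∀ k, ⟪e k, e k⟫ = 1 := by
    intro k
    simp [he, EuclideanSpace.inner_single_left, EuclideanSpace.single_apply]
  have hθθ : ⟪θ, θ⟫ = (1:ℝ) := by rw [real_inner_self_eq_norm_sq, hθ]; norm_num
  have he'norm : ∀ k, ⟪e' k, e' k⟫ = 1 - θ k ^ 2 := by
    intro k
    have hθe : ⟪θ, e k⟫ = θ k := by rw [real_inner_comm]; exact heθ k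
    have : e' k = e k - θ k • θ := by simp only [he']
    rw [this]
    simp only [inner_sub_left, inner_sub_right, real_inner_smul_left, real_inner_smul_right,
      heθ, heself, hθe, hθθ]
    ring
  -- B e'k e'k = (1 - θk²) * B a a
  have hBe' : ∀ k, B (e' k) (e' k) = (1 - θ k ^ 2) * B a a := by
    intro k
    rcases eq_or_ne (e' k) 0 with h0 | h0
    · have : (1 : ℝ) - θ k ^ 2 = 0 := by
        have := he'norm k; rw [h0] at this; simpa using this.symm
      rw [h0, this, zero_mul]
      simp [hB]
    · have hnorm : ‖e' k‖ ^ 2 = 1 - θ k ^ 2 := by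
        rw [← real_inner_self_eq_norm_sq]; exact he'norm k
      have hnpos : (0:ℝ) < ‖e' k‖ := norm_pos_iff.2 h0
      set w : EuclideanSpace ℝ (Fin p) := ‖e' k‖⁻¹ • e' k with hw
      have hwnorm : ‖w‖ = 1 := by
        rw [hw, norm_smul, norm_inv, norm_norm, inv_mul_cancel₀ hnpos.ne']
      have hwθ : ⟪w, θ⟫ = 0 := by
        rw [hw, real_inner_smul_left, he'θ k, mul_zero]
      have hswap : B w w = B a a := B_swap hrot w a hwθ haθ hwnorm ha
      have : B (e' k) (e' k) = ‖e' k‖ ^ 2 * B w w := by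
        have h1 : e' k = ‖e' k‖ • w := by
          rw [hw, smul_smul, mul_inv_cancel₀ hnpos.ne', one_smul]
        calc B (e' k) (e' k) = B (‖e' k‖ • w) (‖e' k‖ • w) := by rw [← h1]
          _ = ‖e' k‖ ^ 2 * B w w := by rw [hsmul, hsmul', ← mul_assoc, sq]
      rw [this, hswap, hnorm]
  -- B θ e'k = 0
  have hBθe' : ∀ k, B θ (e' k) = 0 := fun k =>
    B_zero hrot θ (e' k) (he'θ k) (by rw [real_inner_comm]; exact he'θ k)
  have hBe'θ : ∀ k, B (e' k) θ = 0 := by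
    intro k
    have : B (e' k) θ = B θ (e' k) := by
      simp only [hB]; congr 1; ext x; ring
    rw [this]; exact hBθe' k
  -- expand B (e k) (e k)
  have hBe : ∀ k, B (e k) (e k) = θ k ^ 2 * B θ θ + (1 - θ k ^ 2) * B a a := by
    intro k
    have hek : e k = θ k • θ + e' k := by simp only [he']; abel
    calc B (e k) (e k) = B (θ k • θ + e' k) (θ k • θ + e' k) := by rw [← hek]
      _ = θ k * (θ k * B θ θ) + θ k * B θ (e' k) + (θ k * B (e' k) θ + B (e' k) (e' k)) := by
          rw [hadd, hadd', hadd', hsmul, hsmul', hsmul', hsmul]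
      _ = θ k ^ 2 * B θ θ + (1 - θ k ^ 2) * B a a := by
          rw [hBθe' k, hBe'θ k, hBe' k]; ring
  -- sum over k
  have hsum : ∑ k, B (e k) (e k) = 1 := by
    have hswap : ∑ k, B (e k) (e k) = ∫ x, ∑ k, ⟪e k, x⟫ * ⟪e k, x⟫ ∂μ :=
      (integral_finset_sum _ (fun k _ => hint (e k) (e k))).symm
    rw [hswap]
    have : ∫ x, ∑ k, ⟪e k, x⟫ * ⟪e k, x⟫ ∂μ = ∫ x, (1:ℝ) ∂μ := by
      refine integral_congr_ae ?_
      filter_upwards [hsph] with x hx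
      have hxx : ∑ k, ⟪e k, x⟫ * ⟪e k, x⟫ = ⟪x, x⟫ := by
        simp only [he, EuclideanSpace.inner_single_left, map_one, one_mul]
        rw [PiLp.inner_apply]
        simp [RCLike.inner_apply, conj_trivial]
        exact Finset.sum_congr rfl (fun _ _ => (sq _).symm)
      rw [hxx, real_inner_self_eq_norm_sq, hx]
      norm_num
    rw [this]; simp
  have hθsum : ∑ k, θ k ^ 2 = 1 := by
    have : ∑ k, θ k * θ k = ⟪θ, θ⟫ := by
      rw [PiLp.inner_apply]; simp [RCLike.inner_apply, conj_trivial]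
      exact Finset.sum_congr rfl (fun _ _ => (sq _).symm)
    have h2 : ⟪θ, θ⟫ = 1 := by rw [real_inner_self_eq_norm_sq, hθ]; norm_num
    calc ∑ k, θ k ^ 2 = ∑ k, θ k * θ k := by simp [sq]
      _ = 1 := by rw [this, h2]
  have hcard : (((Finset.univ : Finset (Fin p)).card : ℕ) : ℝ) = (p : ℝ) := by simp
  have hsum2 : ∑ k, ((1:ℝ) - θ k ^ 2) = (p:ℝ) - 1 := by
    rw [Finset.sum_sub_distrib, hθsum, Finset.sum_const, nsmul_eq_mul, mul_one, hcard]
  have hkey' : ∑ k, B (e k) (e k) = B θ θ + ((p:ℝ) - 1) * B a a := by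
    rw [Finset.sum_congr rfl (fun k _ => hBe k), Finset.sum_add_distrib,
      ← Finset.sum_mul, ← Finset.sum_mul, hθsum, hsum2, one_mul]
  have hkey : 1 = B θ θ + ((p:ℝ) - 1) * B a a := (hkey'.symm.trans hsum).symm
  -- Eu = 1 - B θ θ
  have hEu : ∫ x, (1 - ⟪x, θ⟫ ^ 2) ∂μ = 1 - B θ θ := by
    have hint' : Integrable (fun x => ⟪θ, x⟫ * ⟪θ, x⟫) μ := hint θ θ
    have : ∫ x, (1 - ⟪x, θ⟫ ^ 2) ∂μ = ∫ x, ((1:ℝ) - ⟪θ, x⟫ * ⟪θ, x⟫) ∂μ := by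
      congr 1; ext x; rw [real_inner_comm]; ring
    rw [this, integral_sub (integrable_const 1) hint']
    simp [hB]
  rw [hEu]
  have : B a a = ∫ x, ⟪a, x⟫ * ⟪a, x⟫ ∂μ := rfl
  linarith

lemma rotsym_inner_integral [IsProbabilityMeasure μ] (hp : 2 ≤ p) (hθ : ‖θ‖ = 1)
    (hrot : RotSym θ μ) (hsph : ∀ᵐ x ∂μ, ‖x‖ = 1)
    (a b : EuclideanSpace ℝ (Fin p)) (haθ : ⟪a, θ⟫ = 0) (hbθ : ⟪b, θ⟫ = 0) :
    ((p : ℝ) - 1) * ∫ x, ⟪a, x⟫ * ⟪b, x⟫ ∂μ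
      = (∫ x, (1 - ⟪x, θ⟫ ^ 2) ∂μ) * ⟪a, b⟫ := by
  rcases eq_or_ne a 0 with rfl | ha0
  · simp
  · have hna : (0:ℝ) < ‖a‖ := norm_pos_iff.2 ha0
    set b' : EuclideanSpace ℝ (Fin p) := b - (⟪a, b⟫ / ‖a‖ ^ 2) • a with hb'
    have hb'θ : ⟪b', θ⟫ = 0 := by
      rw [hb', inner_sub_left, real_inner_smul_left, haθ, hbθ]; ring
    have hab' : ⟪a, b'⟫ = 0 := by
      rw [hb', inner_sub_right, real_inner_smul_right, real_inner_self_eq_norm_sq]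
      field_simp
      ring
    have hbdecomp : b = (⟪a, b⟫ / ‖a‖ ^ 2) • a + b' := by simp only [hb']; abel
    have hsplit : ∀ x : EuclideanSpace ℝ (Fin p),
        ⟪a, x⟫ * ⟪b, x⟫ = (⟪a, b⟫ / ‖a‖ ^ 2) * (⟪a, x⟫ * ⟪a, x⟫) + ⟪a, x⟫ * ⟪b', x⟫ := by
      intro x
      have hbx : ⟪b, x⟫ = (⟪a, b⟫ / ‖a‖ ^ 2) * ⟪a, x⟫ + ⟪b', x⟫ := by
        conv_lhs => rw [hbdecomp]
        rw [inner_add_left, real_inner_smul_left]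
      rw [hbx]; ring
    have hint1 := integrable_inner_mul (μ := μ) hsph a a
    have hint2 := integrable_inner_mul (μ := μ) hsph a b'
    have h1 : ∫ x, ⟪a, x⟫ * ⟪b, x⟫ ∂μ
        = (⟪a, b⟫ / ‖a‖ ^ 2) * ∫ x, ⟪a, x⟫ * ⟪a, x⟫ ∂μ := by
      calc ∫ x, ⟪a, x⟫ * ⟪b, x⟫ ∂μ
          = ∫ x, ((⟪a, b⟫ / ‖a‖ ^ 2) * (⟪a, x⟫ * ⟪a, x⟫) + ⟪a, x⟫ * ⟪b', x⟫) ∂μ := by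
            simp_rw [hsplit]
        _ = (⟪a, b⟫ / ‖a‖ ^ 2) * (∫ x, ⟪a, x⟫ * ⟪a, x⟫ ∂μ) + ∫ x, ⟪a, x⟫ * ⟪b', x⟫ ∂μ := by
            rw [integral_add (hint1.const_mul _) hint2, integral_const_mul]
        _ = (⟪a, b⟫ / ‖a‖ ^ 2) * ∫ x, ⟪a, x⟫ * ⟪a, x⟫ ∂μ := by
            rw [B_zero hrot a b' hb'θ hab', add_zero]
    -- normalize a
    set w : EuclideanSpace ℝ (Fin p) := ‖a‖⁻¹ • a with hw
    have hwnorm : ‖w‖ = 1 := by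
      rw [hw, norm_smul, norm_inv, norm_norm, inv_mul_cancel₀ hna.ne']
    have hwθ : ⟪w, θ⟫ = 0 := by rw [hw, real_inner_smul_left, haθ, mul_zero]
    have haw : ∫ x, ⟪a, x⟫ * ⟪a, x⟫ ∂μ = ‖a‖ ^ 2 * ∫ x, ⟪w, x⟫ * ⟪w, x⟫ ∂μ := by
      have h1' : a = ‖a‖ • w := by
        rw [hw, smul_smul, mul_inv_cancel₀ hna.ne', one_smul]
      have hax : ∀ x : EuclideanSpace ℝ (Fin p), ⟪a, x⟫ = ‖a‖ * ⟪w, x⟫ := by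
        intro x
        conv_lhs => rw [h1']
        rw [real_inner_smul_left]
      calc ∫ x, ⟪a, x⟫ * ⟪a, x⟫ ∂μ = ∫ x, ‖a‖ ^ 2 * (⟪w, x⟫ * ⟪w, x⟫) ∂μ := by
            congr 1; ext x; rw [hax x]; ring
        _ = ‖a‖ ^ 2 * ∫ x, ⟪w, x⟫ * ⟪w, x⟫ ∂μ := integral_const_mul _ _
    have hunit := B_unit hp hθ hrot hsph w hwθ hwnorm
    rw [h1, haw]
    rw [← hunit]
    field_simp
end main


/-- Conditional variance formula: in the fixed-sample setup, for `2 ≤ ℓ ≤ n`, almost surely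
`E[Y_ℓ² | X₁,…,X_{ℓ−1}] = (2/(n² E[u₁²])) Σ_{i,j=1}^{ℓ−1} uᵢuⱼ⟨Sᵢ,Sⱼ⟩`. -/
theorem statement_9
    {Ω : Type*} [MeasurableSpace Ω] (P : Measure Ω) [IsProbabilityMeasure P]
    (p n : ℕ) (hp : 2 ≤ p) (hn : 2 ≤ n)
    (θ : EuclideanSpace ℝ (Fin p)) (hθ : ‖θ‖ = 1)
    -- the observations `X i`, `1 ≤ i ≤ n`
    (X : ℕ → Ω → EuclideanSpace ℝ (Fin p))
    (hXmeas : ∀ i, 1 ≤ i → i ≤ n → Measurable (X i))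
    (hXsph : ∀ i, 1 ≤ i → i ≤ n → ∀ ω, ‖X i ω‖ = 1)
    -- i.i.d. observations with common rotationally symmetric distribution about `θ`
    (hXindep : iIndepFun
      (fun i : Fin n => X ((i : ℕ) + 1)) P)
    (hXid : ∀ i, 1 ≤ i → i ≤ n → Measure.map (X i) P = Measure.map (X 1) P)
    (hXrot : RotSym θ (Measure.map (X 1) P))
    -- the sign map `Sg`: a fixed measurable choice, equal to the normalized projection of `x`
    -- on the orthogonal complement of `θ` whenever `x ≠ ±θ`
    (Sg : EuclideanSpace ℝ (Fin p) → EuclideanSpace ℝ (Fin p))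
    (hSgmeas : Measurable Sg)
    (hSg : ∀ x, x - ⟪x, θ⟫ • θ ≠ 0 →
      Sg x = ‖x - ⟪x, θ⟫ • θ‖⁻¹ • (x - ⟪x, θ⟫ • θ))
    (hSgunit : ∀ x, ‖Sg x‖ = 1)
    (hSgperp : ∀ x, ⟪Sg x, θ⟫ = 0)
    -- `u i ω = u(X_i(ω))`
    (u : ℕ → Ω → ℝ)
    (hu : ∀ i ω, u i ω = Real.sqrt (1 - ⟪X i ω, θ⟫ ^ 2))
    -- the moments `E[u₁²]` and `E[u₁⁴]`
    (Eu2 Eu4 : ℝ)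
    (hEu2 : Eu2 = ∫ ω, (u 1 ω) ^ 2 ∂P)
    (hEu4 : Eu4 = ∫ ω, (u 1 ω) ^ 4 ∂P)
    (hEu2pos : 0 < Eu2)
    -- the martingale differences `Y_ℓ`
    (Y : ℕ → Ω → ℝ)
    (hY : ∀ ℓ ω, Y ℓ ω =
      Real.sqrt (2 * ((p : ℝ) - 1)) / (n * Eu2) *
        ∑ i ∈ Finset.Icc 1 (ℓ - 1),
          u i ω * u ℓ ω * ⟪Sg (X i ω), Sg (X ℓ ω)⟫)
    -- the σ-algebra generated by `X₁,…,X_{ℓ−1}`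
    (𝔪 : ℕ → MeasurableSpace Ω)
    (h𝔪 : ∀ ℓ, 𝔪 ℓ = ⨆ i ∈ Finset.Icc 1 (ℓ - 1),
      MeasurableSpace.comap (X i) inferInstance)
    (ℓ : ℕ) (hℓ : 2 ≤ ℓ) (hℓn : ℓ ≤ n) :
    P[fun ω => (Y ℓ ω) ^ 2 | 𝔪 ℓ]
      =ᵐ[P] fun ω =>
        2 / ((n : ℝ) ^ 2 * Eu2) *
          ∑ i ∈ Finset.Icc 1 (ℓ - 1), ∑ j ∈ Finset.Icc 1 (ℓ - 1),
            u i ω * u j ω * ⟪Sg (X i ω), Sg (X j ω)⟫ := by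
    classical
  -- numeric facts
  have hpR : (2:ℝ) ≤ (p:ℝ) := by exact_mod_cast hp
  have hp1pos : (0:ℝ) < (p:ℝ) - 1 := by linarith
  have hp1ne : ((p:ℝ) - 1) ≠ 0 := ne_of_gt hp1pos
  have hnpos : (0:ℝ) < (n:ℝ) := by
    have : (2:ℝ) ≤ (n:ℝ) := by exact_mod_cast hn
    linarith
  have hnne : (n:ℝ) ≠ 0 := ne_of_gt hnpos
  have hEu2ne : Eu2 ≠ 0 := ne_of_gt hEu2pos
  have hℓ1 : 1 ≤ ℓ := by omega
  have hIcc : ∀ i ∈ Finset.Icc 1 (ℓ - 1), 1 ≤ i ∧ i ≤ n := by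
    intro i hi
    rw [Finset.mem_Icc] at hi
    omega
  have hX1meas : Measurable (X 1) := hXmeas 1 le_rfl (by omega)
  have hXℓmeas : Measurable (X ℓ) := hXmeas ℓ hℓ1 hℓn
  -- the common law
  set μ : Measure (EuclideanSpace ℝ (Fin p)) := Measure.map (X 1) P with hμ
  haveI : IsProbabilityMeasure μ := Measure.isProbabilityMeasure_map hX1meas.aemeasurable
  have hsphμ : ∀ᵐ x ∂μ, ‖x‖ = 1 := by
    rw [hμ, ae_map_iff hX1meas.aemeasurable
      (show MeasurableSet {x : EuclideanSpace ℝ (Fin p) | ‖x‖ = 1} from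
        (isClosed_eq continuous_norm continuous_const).measurableSet)]
    exact ae_of_all _ (fun ω => hXsph 1 le_rfl (by omega) ω)
  have hXθ_le : ∀ i, 1 ≤ i → i ≤ n → ∀ ω, |⟪X i ω, θ⟫| ≤ 1 := by
    intro i h1 h2 ω
    have := abs_real_inner_le_norm (X i ω) θ
    rwa [hXsph i h1 h2 ω, hθ, one_mul] at this
  have husq : ∀ i, 1 ≤ i → i ≤ n → ∀ ω, u i ω ^ 2 = 1 - ⟪X i ω, θ⟫ ^ 2 := by
    intro i h1 h2 ω
    rw [hu]
    refine Real.sq_sqrt ?_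
    have := hXθ_le i h1 h2 ω
    nlinarith [this, abs_nonneg ⟪X i ω, θ⟫, sq_abs ⟪X i ω, θ⟫]
  have hcontθ : Continuous (fun x : EuclideanSpace ℝ (Fin p) => ⟪x, θ⟫) :=
    continuous_id.inner continuous_const
  have hEu2μ : Eu2 = ∫ x, (1 - ⟪x, θ⟫ ^ 2) ∂μ := by
    have hmeasf : AEStronglyMeasurable
        (fun x : EuclideanSpace ℝ (Fin p) => 1 - ⟪x, θ⟫ ^ 2) (Measure.map (X 1) P) :=
      (continuous_const.sub (hcontθ.pow 2)).aestronglyMeasurable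
    rw [hμ, integral_map hX1meas.aemeasurable hmeasf, hEu2]
    exact integral_congr_ae (ae_of_all _ (fun ω => husq 1 le_rfl (by omega) ω))
  -- the sigma-algebra
  have hm_le : 𝔪 ℓ ≤ (inferInstance : MeasurableSpace Ω) := by
    rw [h𝔪]
    refine iSup_le fun i => iSup_le fun hi => ?_
    exact measurable_iff_comap_le.1 (hXmeas i (hIcc i hi).1 (hIcc i hi).2)
  haveI : SigmaFinite (P.trim hm_le) := by infer_instance
  have hXmi : ∀ i ∈ Finset.Icc 1 (ℓ - 1), Measurable[𝔪 ℓ] (X i) := by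
    intro i hi
    refine measurable_iff_comap_le.2 ?_
    rw [h𝔪]
    exact le_iSup_of_le i (le_iSup_of_le hi le_rfl)
  -- independence
  have hIndep : Indep (MeasurableSpace.comap (X ℓ) inferInstance) (𝔪 ℓ) P := by
    have h_le : ∀ k : Fin n, MeasurableSpace.comap (X ((k:ℕ) + 1)) inferInstance ≤
        (inferInstance : MeasurableSpace Ω) :=
      fun k => measurable_iff_comap_le.1 (hXmeas _ (by omega) (by omega))
    have h_indep : iIndep
        (fun k : Fin n => MeasurableSpace.comap (X ((k:ℕ) + 1)) inferInstance) P := hXindep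
    have hdisj : Disjoint {k : Fin n | (k:ℕ) + 1 = ℓ} {k : Fin n | (k:ℕ) + 1 < ℓ} := by
      rw [Set.disjoint_left]
      intro k hk1 hk2
      simp only [Set.mem_setOf_eq] at hk1 hk2
      omega
    have h := indep_iSup_of_disjoint h_le h_indep hdisj
    refine indep_of_indep_of_le_right (indep_of_indep_of_le_left h ?_) ?_
    · -- comap (X ℓ) ≤ ⨆ k ∈ {k+1 = ℓ}
      have hℓn' : ℓ - 1 < n := by omega
      have hk : ((⟨ℓ - 1, hℓn'⟩ : Fin n) : ℕ) + 1 = ℓ := by show ℓ - 1 + 1 = ℓ; omega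
      have hstep : MeasurableSpace.comap (X (((⟨ℓ - 1, hℓn'⟩ : Fin n) : ℕ) + 1)) inferInstance ≤
          ⨆ k ∈ {k : Fin n | (k:ℕ) + 1 = ℓ},
            MeasurableSpace.comap (X ((k:ℕ) + 1)) inferInstance :=
        le_iSup₂ (f := fun (k : Fin n) (_ : k ∈ {k : Fin n | (k:ℕ) + 1 = ℓ}) =>
            MeasurableSpace.comap (X ((k:ℕ) + 1)) inferInstance)
          (⟨ℓ - 1, hℓn'⟩ : Fin n)
          (show (⟨ℓ - 1, hℓn'⟩ : Fin n) ∈ {k : Fin n | (k:ℕ) + 1 = ℓ} from hk)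
      rw [hk] at hstep
      exact hstep
    · rw [h𝔪]
      refine iSup_le fun i => iSup_le fun hi => ?_
      obtain ⟨h1i, h2i⟩ := Finset.mem_Icc.1 hi
      have hin : i - 1 < n := by omega
      have hk : ((⟨i - 1, hin⟩ : Fin n) : ℕ) + 1 = i := by show i - 1 + 1 = i; omega
      have hstep : MeasurableSpace.comap (X (((⟨i - 1, hin⟩ : Fin n) : ℕ) + 1)) inferInstance ≤
          ⨆ k ∈ {k : Fin n | (k:ℕ) + 1 < ℓ},
            MeasurableSpace.comap (X ((k:ℕ) + 1)) inferInstance :=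
        le_iSup₂ (f := fun (k : Fin n) (_ : k ∈ {k : Fin n | (k:ℕ) + 1 < ℓ}) =>
            MeasurableSpace.comap (X ((k:ℕ) + 1)) inferInstance)
          (⟨i - 1, hin⟩ : Fin n)
          (show (⟨i - 1, hin⟩ : Fin n) ∈ {k : Fin n | (k:ℕ) + 1 < ℓ} from
            (show i - 1 + 1 < ℓ by omega))
      rw [hk] at hstep
      exact hstep
  -- the projected vectors
  set v : ℕ → Ω → EuclideanSpace ℝ (Fin p) :=
    fun i ω => X i ω - ⟪X i ω, θ⟫ • θ with hv
  have hvcoord : ∀ i ω k, v i ω k = X i ω k - ⟪X i ω, θ⟫ * θ k := by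
    intro i ω k
    simp only [hv]
    exact coord_sub_smul _ _ _ _
  have hvθ : ∀ i ω, ⟪v i ω, θ⟫ = 0 := by
    intro i ω
    simp only [hv, inner_sub_left, real_inner_smul_left, real_inner_self_eq_norm_sq, hθ]
    ring
  have huSv : ∀ i, 1 ≤ i → i ≤ n → ∀ ω, u i ω • Sg (X i ω) = v i ω := by
    intro i h1 h2 ω
    rcases eq_or_ne (X i ω - ⟪X i ω, θ⟫ • θ) 0 with h0 | h0
    · -- then u = 0 and v = 0
      have hc : ⟪X i ω, θ⟫ ^ 2 = 1 := by
        have hx : X i ω = ⟪X i ω, θ⟫ • θ := by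
          have := sub_eq_zero.1 h0; exact this
        have := hXsph i h1 h2 ω
        rw [hx, norm_smul, hθ, mul_one, Real.norm_eq_abs] at this
        nlinarith [sq_abs ⟪X i ω, θ⟫]
      have hu0 : u i ω = 0 := by rw [hu, hc]; simp
      have hv0 : v i ω = 0 := by rw [hv]; exact h0
      rw [hu0, hv0, zero_smul]
    · have hnorm : ‖X i ω - ⟪X i ω, θ⟫ • θ‖ ^ 2 = 1 - ⟪X i ω, θ⟫ ^ 2 := by
        rw [norm_sub_sq_real, real_inner_smul_right, norm_smul, Real.norm_eq_abs,
          hθ, hXsph i h1 h2 ω]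
        have : ⟪X i ω, θ⟫ * ⟪X i ω, θ⟫ = ⟪X i ω, θ⟫ ^ 2 := by ring
        rw [this]
        have h2' : (|⟪X i ω, θ⟫| * 1) ^ 2 = ⟪X i ω, θ⟫ ^ 2 := by
          rw [mul_one, sq_abs]
        rw [h2']
        ring
      have hun : u i ω = ‖X i ω - ⟪X i ω, θ⟫ • θ‖ := by
        rw [hu, ← hnorm, Real.sqrt_sq (norm_nonneg _)]
      have hne : ‖X i ω - ⟪X i ω, θ⟫ • θ‖ ≠ 0 := norm_ne_zero_iff.2 h0
      rw [hSg _ h0, hun, smul_smul, mul_inv_cancel₀ hne, one_smul]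
  have hprod : ∀ i, 1 ≤ i → i ≤ n → ∀ j, 1 ≤ j → j ≤ n → ∀ ω,
      u i ω * u j ω * ⟪Sg (X i ω), Sg (X j ω)⟫ = ⟪v i ω, v j ω⟫ := by
    intro i hi1 hi2 j hj1 hj2 ω
    rw [← huSv i hi1 hi2 ω, ← huSv j hj1 hj2 ω, real_inner_smul_left, real_inner_smul_right]
    ring
  -- coordinate bounds
  have hvb : ∀ i, 1 ≤ i → i ≤ n → ∀ ω (k : Fin p), |v i ω k| ≤ 2 := by
    intro i h1 h2 ω k
    have hb1 : |X i ω k| ≤ 1 := by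
      have := coord_abs_le (X i ω) k
      rwa [hXsph i h1 h2 ω] at this
    have hb2 : |⟪X i ω, θ⟫ * θ k| ≤ 1 := by
      rw [abs_mul]
      have h3 : |θ k| ≤ 1 := by have := coord_abs_le θ k; rwa [hθ] at this
      have h4 := hXθ_le i h1 h2 ω
      calc |⟪X i ω, θ⟫| * |θ k| ≤ 1 * 1 :=
        mul_le_mul h4 h3 (abs_nonneg _) zero_le_one
        _ = 1 := by ring
    calc |v i ω k| = |X i ω k - ⟪X i ω, θ⟫ * θ k| := by rw [hvcoord]
      _ ≤ |X i ω k| + |⟪X i ω, θ⟫ * θ k| := abs_sub _ _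
      _ ≤ 2 := by linarith
  -- coordinate measurability
  have hvkmeas : ∀ i, 1 ≤ i → i ≤ n → ∀ k : Fin p, Measurable (fun ω => v i ω k) := by
    intro i h1 h2 k
    have h3 : Measurable (fun ω => X i ω k) :=
      (measurable_pi_apply k).comp ((WithLp.measurable_ofLp 2 _).comp (hXmeas i h1 h2))
    have h4 : Measurable (fun ω => ⟪X i ω, θ⟫) :=
      ((continuous_id.inner continuous_const).measurable).comp (hXmeas i h1 h2)
    simp only [hvcoord]
    exact h3.sub (h4.mul_const _)
  have hvkmeasm : ∀ i ∈ Finset.Icc 1 (ℓ - 1), ∀ k : Fin p,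
      Measurable[𝔪 ℓ] (fun ω => v i ω k) := by
    intro i hi k
    have h3 : Measurable[𝔪 ℓ] (fun ω => X i ω k) :=
      (measurable_pi_apply k).comp ((WithLp.measurable_ofLp 2 _).comp (hXmi i hi))
    have h4 : Measurable[𝔪 ℓ] (fun ω => ⟪X i ω, θ⟫) :=
      ((continuous_id.inner continuous_const).measurable).comp (hXmi i hi)
    simp only [hvcoord]
    exact h3.sub (h4.mul_const _)
  -- the moment matrix
  set C : ℝ := Eu2 / ((p:ℝ) - 1) with hC
  have hM : ∀ k r : Fin p,
      (∫ x : EuclideanSpace ℝ (Fin p), (x k - ⟪x, θ⟫ * θ k) * (x r - ⟪x, θ⟫ * θ r) ∂μ)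
        = C * ((if k = r then (1:ℝ) else 0) - θ k * θ r) := by
    intro k r
    set ek : EuclideanSpace ℝ (Fin p) := EuclideanSpace.single k 1 - θ k • θ with hek
    set er : EuclideanSpace ℝ (Fin p) := EuclideanSpace.single r 1 - θ r • θ with her
    have hekx : ∀ x : EuclideanSpace ℝ (Fin p), ⟪ek, x⟫ = x k - ⟪x, θ⟫ * θ k := by
      intro x
      rw [hek, inner_sub_left, real_inner_smul_left, EuclideanSpace.inner_single_left]
      simp only [map_one, one_mul]
      rw [real_inner_comm θ x]
      ring
    have herx : ∀ x : EuclideanSpace ℝ (Fin p), ⟪er, x⟫ = x r - ⟪x, θ⟫ * θ r := by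
      intro x
      rw [her, inner_sub_left, real_inner_smul_left, EuclideanSpace.inner_single_left]
      simp only [map_one, one_mul]
      rw [real_inner_comm θ x]
      ring
    have hθθ' : ⟪θ, θ⟫ = (1:ℝ) := by rw [real_inner_self_eq_norm_sq, hθ]; norm_num
    have hekθ : ⟪ek, θ⟫ = 0 := by
      rw [hek, inner_sub_left, real_inner_smul_left, EuclideanSpace.inner_single_left, hθθ']
      try simp
    have herθ : ⟪er, θ⟫ = 0 := by
      rw [her, inner_sub_left, real_inner_smul_left, EuclideanSpace.inner_single_left, hθθ']
      try simp
    have hinner : ⟪ek, er⟫ = (if k = r then (1:ℝ) else 0) - θ k * θ r := by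
      have h1 : er k = (if k = r then (1:ℝ) else 0) - θ r * θ k := by
        rw [her, coord_sub_smul]
        by_cases hkr : k = r
        · subst hkr; simp [EuclideanSpace.single_apply]
        · simp [EuclideanSpace.single_apply, hkr, Ne.symm hkr]
      rw [hekx er, herθ, h1]
      ring
    have hI := rotsym_inner_integral hp hθ hXrot hsphμ ek er hekθ herθ
    rw [← hEu2μ] at hI
    have : ∫ x : EuclideanSpace ℝ (Fin p), (x k - ⟪x, θ⟫ * θ k) * (x r - ⟪x, θ⟫ * θ r) ∂μ
        = ∫ x : EuclideanSpace ℝ (Fin p), ⟪ek, x⟫ * ⟪er, x⟫ ∂μ := by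
      refine integral_congr_ae (ae_of_all _ fun x => ?_)
      simp only [hekx, herx]
    rw [this, hC, ← hinner, div_mul_eq_mul_div, eq_div_iff hp1ne]
    linear_combination hI
    -- the coefficient
  set c₀ : ℝ := Real.sqrt (2 * ((p : ℝ) - 1)) / (n * Eu2) with hc₀
  have hc₀sq : c₀ ^ 2 = 2 * ((p:ℝ) - 1) / ((n:ℝ) ^ 2 * Eu2 ^ 2) := by
    rw [hc₀, div_pow, Real.sq_sqrt (by linarith : (0:ℝ) ≤ 2 * ((p:ℝ) - 1)), mul_pow]
  -- the index set and summands
  set s : Finset ((ℕ × ℕ) × Fin p × Fin p) :=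
    (Finset.Icc 1 (ℓ - 1) ×ˢ Finset.Icc 1 (ℓ - 1)) ×ˢ
      ((Finset.univ : Finset (Fin p)) ×ˢ (Finset.univ : Finset (Fin p))) with hs
  set F : ((ℕ × ℕ) × Fin p × Fin p) → Ω → ℝ :=
    fun q ω => c₀ ^ 2 * (v q.1.1 ω q.2.1 * v q.1.2 ω q.2.2) * (v ℓ ω q.2.1 * v ℓ ω q.2.2)
    with hF
  -- Y² as a big sum
  have hY2 : (fun ω => Y ℓ ω ^ 2) = fun ω => ∑ q ∈ s, F q ω := by
    funext ω
    have hsum_q : ∑ q ∈ s, F q ω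
        = ∑ i ∈ Finset.Icc 1 (ℓ-1), ∑ j ∈ Finset.Icc 1 (ℓ-1), ∑ k : Fin p, ∑ r : Fin p,
            c₀ ^ 2 * (v i ω k * v j ω r) * (v ℓ ω k * v ℓ ω r) := by
      simp only [hs, hF, Finset.sum_product]
    have hti : ∀ i ∈ Finset.Icc 1 (ℓ - 1),
        u i ω * u ℓ ω * ⟪Sg (X i ω), Sg (X ℓ ω)⟫ = ∑ k : Fin p, v i ω k * v ℓ ω k := by
      intro i hi
      rw [hprod i (hIcc i hi).1 (hIcc i hi).2 ℓ hℓ1 hℓn ω, ← sum_mul_eq_inner]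
    rw [hY ℓ ω, Finset.sum_congr rfl hti, hsum_q]
    calc (c₀ * ∑ i ∈ Finset.Icc 1 (ℓ-1), ∑ k : Fin p, v i ω k * v ℓ ω k) ^ 2
        = c₀ ^ 2 * ((∑ i ∈ Finset.Icc 1 (ℓ-1), ∑ k : Fin p, v i ω k * v ℓ ω k) *
            (∑ j ∈ Finset.Icc 1 (ℓ-1), ∑ r : Fin p, v j ω r * v ℓ ω r)) := by ring
      _ = c₀ ^ 2 * ∑ i ∈ Finset.Icc 1 (ℓ-1), ∑ j ∈ Finset.Icc 1 (ℓ-1),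
            ((∑ k : Fin p, v i ω k * v ℓ ω k) * (∑ r : Fin p, v j ω r * v ℓ ω r)) := by
          rw [Finset.sum_mul_sum]
      _ = ∑ i ∈ Finset.Icc 1 (ℓ-1), ∑ j ∈ Finset.Icc 1 (ℓ-1), ∑ k : Fin p, ∑ r : Fin p,
            c₀ ^ 2 * (v i ω k * v j ω r) * (v ℓ ω k * v ℓ ω r) := by
          rw [Finset.mul_sum]
          refine Finset.sum_congr rfl fun i _ => ?_
          rw [Finset.mul_sum]
          refine Finset.sum_congr rfl fun j _ => ?_
          rw [Finset.sum_mul_sum, Finset.mul_sum]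
          refine Finset.sum_congr rfl fun k _ => ?_
          rw [Finset.mul_sum]
          refine Finset.sum_congr rfl fun r _ => ?_
          ring
  -- integrability of the summands
  have hFint : ∀ q ∈ s, Integrable (F q) P := by
    rintro ⟨⟨i, j⟩, ⟨k, r⟩⟩ hq
    simp only [hs, Finset.mem_product, Finset.mem_univ, and_true] at hq
    obtain ⟨hi, hj⟩ := hq
    obtain ⟨hi1, hi2⟩ := hIcc i hi
    obtain ⟨hj1, hj2⟩ := hIcc j hj
    have hmeas : Measurable (F ((i, j), (k, r))) := by
      simp only [hF]
      exact (((hvkmeas i hi1 hi2 k).mul (hvkmeas j hj1 hj2 r)).const_mul _).mul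
        ((hvkmeas ℓ hℓ1 hℓn k).mul (hvkmeas ℓ hℓ1 hℓn r))
    refine (integrable_const (c₀ ^ 2 * 16 : ℝ)).mono' hmeas.aestronglyMeasurable
      (ae_of_all _ fun ω => ?_)
    have b1 := hvb i hi1 hi2 ω k
    have b2 := hvb j hj1 hj2 ω r
    have b3 := hvb ℓ hℓ1 hℓn ω k
    have b4 := hvb ℓ hℓ1 hℓn ω r
    have hab : |v i ω k * v j ω r| ≤ 4 := by
      rw [abs_mul]
      calc |v i ω k| * |v j ω r| ≤ 2 * 2 :=
        mul_le_mul b1 b2 (abs_nonneg _) (by norm_num)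
        _ = 4 := by norm_num
    have hcd : |v ℓ ω k * v ℓ ω r| ≤ 4 := by
      rw [abs_mul]
      calc |v ℓ ω k| * |v ℓ ω r| ≤ 2 * 2 :=
        mul_le_mul b3 b4 (abs_nonneg _) (by norm_num)
        _ = 4 := by norm_num
    have : |F ((i, j), (k, r)) ω| = c₀ ^ 2 * (|v i ω k * v j ω r| * |v ℓ ω k * v ℓ ω r|) := by
      simp only [hF]
      rw [abs_mul, abs_mul, abs_of_nonneg (sq_nonneg c₀)]
      ring
    rw [Real.norm_eq_abs, this]
    calc c₀ ^ 2 * (|v i ω k * v j ω r| * |v ℓ ω k * v ℓ ω r|) ≤ c₀ ^ 2 * (4 * 4) := by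
          refine mul_le_mul_of_nonneg_left ?_ (sq_nonneg c₀)
          exact mul_le_mul hab hcd (abs_nonneg _) (by norm_num)
      _ = c₀ ^ 2 * 16 := by norm_num
  -- conditional expectation of each summand
  have hterm : ∀ q ∈ s, P[F q | 𝔪 ℓ] =ᵐ[P]
      fun ω => c₀ ^ 2 * (v q.1.1 ω q.2.1 * v q.1.2 ω q.2.2)
        * (C * ((if q.2.1 = q.2.2 then (1:ℝ) else 0) - θ q.2.1 * θ q.2.2)) := by
    rintro ⟨⟨i, j⟩, ⟨k, r⟩⟩ hq
    have hqmem : (((i, j), (k, r)) : (ℕ × ℕ) × Fin p × Fin p) ∈ s := hq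
    simp only [hs, Finset.mem_product, Finset.mem_univ, and_true] at hq
    obtain ⟨hi, hj⟩ := hq
    obtain ⟨hi1, hi2⟩ := hIcc i hi
    obtain ⟨hj1, hj2⟩ := hIcc j hj
    set gg : Ω → ℝ := fun ω => c₀ ^ 2 * (v i ω k * v j ω r) with hgg
    set hh : Ω → ℝ := fun ω => v ℓ ω k * v ℓ ω r with hhh
    have hFgh : F ((i, j), (k, r)) = gg * hh := by
      funext ω
      simp only [hF, hgg, hhh, Pi.mul_apply]
    have hgm : StronglyMeasurable[𝔪 ℓ] gg := by
      apply Measurable.stronglyMeasurable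
      exact ((hvkmeasm i hi k).mul (hvkmeasm j hj r)).const_mul _
    have hhm : Measurable hh := (hvkmeas ℓ hℓ1 hℓn k).mul (hvkmeas ℓ hℓ1 hℓn r)
    have hhint : Integrable hh P := by
      refine (integrable_const (4:ℝ)).mono' hhm.aestronglyMeasurable (ae_of_all _ fun ω => ?_)
      rw [Real.norm_eq_abs, hhh, abs_mul]
      calc |v ℓ ω k| * |v ℓ ω r| ≤ 2 * 2 :=
        mul_le_mul (hvb ℓ hℓ1 hℓn ω k) (hvb ℓ hℓ1 hℓn ω r) (abs_nonneg _) (by norm_num)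
        _ = 4 := by norm_num
    have hghint : Integrable (gg * hh) P := hFgh ▸ hFint _ hqmem
    -- h is measurable w.r.t. the σ-algebra generated by X ℓ
    set φ : EuclideanSpace ℝ (Fin p) → ℝ :=
      fun x => (x k - ⟪x, θ⟫ * θ k) * (x r - ⟪x, θ⟫ * θ r) with hφdef
    have hφ : Measurable φ :=
      (((measurable_pi_apply k).comp (WithLp.measurable_ofLp 2 _)).sub (hcontθ.measurable.mul_const _)).mul
        (((measurable_pi_apply r).comp (WithLp.measurable_ofLp 2 _)).sub (hcontθ.measurable.mul_const _))
    have hheq : hh = fun ω => φ (X ℓ ω) := by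
      funext ω
      simp only [hhh, hφdef, hvcoord]
    have hXℓsm : StronglyMeasurable[MeasurableSpace.comap (X ℓ) inferInstance] hh := by
      rw [hheq]
      exact (hφ.comp (measurable_iff_comap_le.2 le_rfl)).stronglyMeasurable
    have hcondh : P[hh | 𝔪 ℓ] =ᵐ[P] fun _ => ∫ ω', hh ω' ∂P :=
      condExp_indep_eq (measurable_iff_comap_le.1 hXℓmeas) hm_le hXℓsm hIndep
    have hinth : ∫ ω', hh ω' ∂P = C * ((if k = r then (1:ℝ) else 0) - θ k * θ r) := by
      rw [← hM k r]
      have hmap : Measure.map (X ℓ) P = μ := by rw [hμ]; exact hXid ℓ hℓ1 hℓn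
      rw [← hmap, integral_map hXℓmeas.aemeasurable hφ.aestronglyMeasurable]
      rw [hheq]
    have hpull := condExp_mul_of_stronglyMeasurable_left hgm hghint hhint
    have : P[F ((i, j), (k, r)) | 𝔪 ℓ] = P[gg * hh | 𝔪 ℓ] := by rw [hFgh]
    rw [this]
    filter_upwards [hpull, hcondh] with ω h1 h2
    rw [h1, Pi.mul_apply, h2, hinth, hgg]
  -- put everything together
  have hce : P[fun ω => Y ℓ ω ^ 2 | 𝔪 ℓ] =ᵐ[P] ∑ q ∈ s, P[F q | 𝔪 ℓ] := by
    have h0 : (fun ω => Y ℓ ω ^ 2) = ∑ q ∈ s, F q := by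
      rw [hY2]; funext ω; rw [Finset.sum_apply]
    rw [h0]
    exact condExp_finsetSum hFint (𝔪 ℓ)
  have hae : ∀ᵐ ω ∂P, ∀ q ∈ (↑s : Set ((ℕ × ℕ) × Fin p × Fin p)), (P[F q | 𝔪 ℓ]) ω
      = c₀ ^ 2 * (v q.1.1 ω q.2.1 * v q.1.2 ω q.2.2)
        * (C * ((if q.2.1 = q.2.2 then (1:ℝ) else 0) - θ q.2.1 * θ q.2.2)) := by
    rw [ae_ball_iff (s.countable_toSet)]
    intro q hq
    exact hterm q (Finset.mem_coe.1 hq)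
  -- final algebra
  have hcoef : c₀ ^ 2 * C = 2 / ((n:ℝ) ^ 2 * Eu2) := by
    rw [hc₀sq, hC]
    field_simp
  have hkr : ∀ (a b : EuclideanSpace ℝ (Fin p)),
      (∑ k : Fin p, ∑ r : Fin p,
        c₀ ^ 2 * (a k * b r) * (C * ((if k = r then (1:ℝ) else 0) - θ k * θ r)))
        = c₀ ^ 2 * C * (⟪a, b⟫ - ⟪a, θ⟫ * ⟪b, θ⟫) := by
    intro a b
    have hrow : ∀ k : Fin p,
        (∑ r : Fin p, c₀ ^ 2 * (a k * b r) * (C * ((if k = r then (1:ℝ) else 0) - θ k * θ r)))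
          = c₀ ^ 2 * C * (a k * b k) - c₀ ^ 2 * C * (a k * θ k) * ∑ r : Fin p, b r * θ r := by
      intro k
      have hterm' : ∀ r : Fin p,
          c₀ ^ 2 * (a k * b r) * (C * ((if k = r then (1:ℝ) else 0) - θ k * θ r))
            = (if k = r then c₀ ^ 2 * C * (a k * b r) else 0)
              - c₀ ^ 2 * C * (a k * θ k) * (b r * θ r) := by
        intro r
        by_cases hkr' : k = r
        · subst hkr'; rw [if_pos rfl, if_pos rfl]; ring
        · simp only [if_neg hkr']; ring
      rw [Finset.sum_congr rfl (fun r _ => hterm' r), Finset.sum_sub_distrib,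
        Finset.sum_ite_eq, if_pos (Finset.mem_univ k), ← Finset.mul_sum]
    rw [Finset.sum_congr rfl (fun k _ => hrow k), Finset.sum_sub_distrib,
      ← Finset.mul_sum, sum_mul_eq_inner, ← Finset.sum_mul, ← Finset.mul_sum,
      sum_mul_eq_inner, sum_mul_eq_inner]
    ring
  filter_upwards [hce, hae] with ω h1 h2
  rw [h1, Finset.sum_apply, Finset.sum_congr rfl (fun q hq => h2 q (Finset.mem_coe.2 hq))]
  have hexp : ∑ q ∈ s, (fun q => c₀ ^ 2 * (v q.1.1 ω q.2.1 * v q.1.2 ω q.2.2)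
        * (C * ((if q.2.1 = q.2.2 then (1:ℝ) else 0) - θ q.2.1 * θ q.2.2))) q
      = ∑ i ∈ Finset.Icc 1 (ℓ-1), ∑ j ∈ Finset.Icc 1 (ℓ-1), ∑ k : Fin p, ∑ r : Fin p,
          c₀ ^ 2 * (v i ω k * v j ω r) * (C * ((if k = r then (1:ℝ) else 0) - θ k * θ r)) := by
    simp only [hs, Finset.sum_product]
  rw [hexp]
  have hij : ∀ i ∈ Finset.Icc 1 (ℓ-1), ∀ j ∈ Finset.Icc 1 (ℓ-1),
      (∑ k : Fin p, ∑ r : Fin p,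
        c₀ ^ 2 * (v i ω k * v j ω r) * (C * ((if k = r then (1:ℝ) else 0) - θ k * θ r)))
        = 2 / ((n:ℝ) ^ 2 * Eu2) * (u i ω * u j ω * ⟪Sg (X i ω), Sg (X j ω)⟫) := by
    intro i hi j hj
    rw [hkr (v i ω) (v j ω), hvθ i ω, hvθ j ω,
      hprod i (hIcc i hi).1 (hIcc i hi).2 j (hIcc j hj).1 (hIcc j hj).2 ω, hcoef]
    ring
  calc ∑ i ∈ Finset.Icc 1 (ℓ-1), ∑ j ∈ Finset.Icc 1 (ℓ-1), ∑ k : Fin p, ∑ r : Fin p,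
          c₀ ^ 2 * (v i ω k * v j ω r) * (C * ((if k = r then (1:ℝ) else 0) - θ k * θ r))
      = ∑ i ∈ Finset.Icc 1 (ℓ-1), ∑ j ∈ Finset.Icc 1 (ℓ-1),
          2 / ((n:ℝ) ^ 2 * Eu2) * (u i ω * u j ω * ⟪Sg (X i ω), Sg (X j ω)⟫) := by
        refine Finset.sum_congr rfl fun i hi => ?_
        refine Finset.sum_congr rfl fun j hj => ?_
        exact hij i hi j hj
    _ = 2 / ((n:ℝ) ^ 2 * Eu2) * ∑ i ∈ Finset.Icc 1 (ℓ-1), ∑ j ∈ Finset.Icc 1 (ℓ-1),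
          u i ω * u j ω * ⟪Sg (X i ω), Sg (X j ω)⟫ := by
        rw [Finset.mul_sum]
        refine Finset.sum_congr rfl fun i _ => ?_
        rw [Finset.mul_sum]
end

section
/- In the fixed-sample setup, E[ Σ_{ℓ=2}^n σ²_ℓ ] = (n−1)/n, where σ²_ℓ := E[ Y_ℓ² | X₁,…,X_{ℓ−1} ] and Y_ℓ := (√(2(p−1))/(n E[u₁²])) Σ_{i=1}^{ℓ−1} u_i u_ℓ ⟨S_i,S_ℓ⟩. -/
open MeasureTheory ProbabilityTheory Filter
open scoped BigOperators RealInnerProductSpace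

variable {p : ℕ}

local notation "E" => EuclideanSpace ℝ (Fin p)

/-- hyperplane reflection through `dᗮ` -/
noncomputable def Rd (d : E) : E ≃ₗᵢ[ℝ] E := Submodule.reflection (ℝ ∙ d)ᗮ

lemma Rd_apply (d x : E) : Rd d x = x - (2 * ⟪d, x⟫ / ‖d‖ ^ 2) • d := by
  rw [Rd, Submodule.reflection_orthogonal_apply, Submodule.reflection_singleton_apply]
  push_cast
  rw [neg_sub]
  congr 1
  rw [two_smul]
  push_cast
  rw [two_mul, add_div, add_smul]
  norm_cast

lemma Rd_apply_orthogonal (d x : E) (h : ⟪d, x⟫ = 0) : Rd d x = x := by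
  rw [Rd_apply, h]; simp

lemma Rd_apply_self (d : E) (hd : d ≠ 0) : Rd d d = -d := by
  rw [Rd_apply, real_inner_self_eq_norm_sq]
  have : ‖d‖ ^ 2 ≠ 0 := pow_ne_zero 2 (norm_ne_zero_iff.2 hd)
  rw [mul_div_assoc, div_self this]
  module

lemma Rd_swap (a b : E) (hab : ‖a‖ = ‖b‖) (hne : a ≠ b) : Rd (a - b) a = b := by
  rw [Rd_apply]
  have hd : a - b ≠ 0 := sub_ne_zero.2 hne
  have h1 : ⟪a - b, a⟫ = ‖a‖ ^ 2 - ⟪a, b⟫ := by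
    rw [inner_sub_left, real_inner_self_eq_norm_sq, real_inner_comm]
  have h2 : ‖a - b‖ ^ 2 = 2 * (‖a‖ ^ 2 - ⟪a, b⟫) := by
    rw [← real_inner_self_eq_norm_sq, inner_sub_left, inner_sub_right, inner_sub_right,
      real_inner_self_eq_norm_sq, real_inner_self_eq_norm_sq, ← hab, real_inner_comm]
    ring
  rw [h1, h2]
  have h3 : ‖a - b‖ ^ 2 ≠ 0 := pow_ne_zero 2 (norm_ne_zero_iff.2 hd)
  rw [h2] at h3
  have : (2 * (‖a‖ ^ 2 - ⟪a, b⟫)) / (2 * (‖a‖ ^ 2 - ⟪a, b⟫)) = 1 := div_self h3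
  rw [this]
  module

/-- projection of `x` onto the orthogonal complement of `θ` -/
noncomputable def Vp (θ x : E) : E := x - ⟪x, θ⟫ • θ

lemma inner_theta_self {θ : E} (hθ : ‖θ‖ = 1) : (⟪θ, θ⟫ : ℝ) = 1 := by
  rw [real_inner_self_eq_norm_sq, hθ]; norm_num

lemma Vp_inner_theta {θ : E} (hθ : ‖θ‖ = 1) (x : E) : ⟪Vp θ x, θ⟫ = 0 := by
  rw [Vp, inner_sub_left, real_inner_smul_left, inner_theta_self hθ]; ring

lemma inner_Vp_right {θ : E} (hθ : ‖θ‖ = 1) (x v : E) : ⟪Vp θ x, v⟫ = ⟪Vp θ x, Vp θ v⟫ := by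
  conv_lhs => rw [show v = Vp θ v + ⟪v, θ⟫ • θ by simp [Vp]]
  rw [inner_add_right, real_inner_smul_right, Vp_inner_theta hθ, mul_zero, add_zero]

lemma Vp_isometry {θ : E} (O : E ≃ₗᵢ[ℝ] E) (hO : O θ = θ) (x : E) :
    Vp θ (O x) = O (Vp θ x) := by
  have h1 : ⟪O x, θ⟫ = ⟪x, θ⟫ := by
    conv_lhs => rw [← hO]
    exact O.inner_map_map x θ
  simp only [Vp, h1, map_sub]
  rw [LinearIsometryEquiv.map_smul, hO]

lemma norm_Vp_sq {θ : E} (hθ : ‖θ‖ = 1) (x : E) :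
    ‖Vp θ x‖ ^ 2 = ‖x‖ ^ 2 - ⟪x, θ⟫ ^ 2 := by
  rw [Vp, norm_sub_sq_real, real_inner_smul_right, norm_smul, hθ, mul_one,
    Real.norm_eq_abs, sq_abs]
  ring

lemma Vp_cont (θ : E) : Continuous (Vp θ) :=
  continuous_id.sub ((continuous_id.inner continuous_const).fun_smul continuous_const)

lemma norm_Vp_le {θ : E} (hθ : ‖θ‖ = 1) (x : E) (hx : ‖x‖ = 1) : ‖Vp θ x‖ ≤ 1 := by
  have h := norm_Vp_sq hθ x
  rw [hx] at h
  nlinarith [norm_nonneg (Vp θ x), sq_nonneg (⟪x, θ⟫ : ℝ)]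

lemma integral_rot {θ : E} {μ : Measure E} (hrot : RotSym θ μ) (O : E ≃ₗᵢ[ℝ] E)
    (hO : O θ = θ) (f : E → ℝ) : ∫ x, f (O x) ∂μ = ∫ x, f x ∂μ := by
  conv_rhs => rw [← hrot O hO]
  have : Measure.map O μ = Measure.map O.toHomeomorph.toMeasurableEquiv μ := rfl
  rw [this, MeasureTheory.integral_map_equiv]
  rfl






section MeasureLemmas

/-- the covariance form of the projected measure -/
noncomputable def Cf (θ : E) (μ : Measure E) (v w : E) : ℝ :=
  ∫ x, ⟪Vp θ x, v⟫ * ⟪Vp θ x, w⟫ ∂μ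

lemma integrable_inner_mul_s10 {θ : E} {μ : Measure E} [IsProbabilityMeasure μ] (hθ : ‖θ‖ = 1)
    (hsph : ∀ᵐ x ∂μ, ‖x‖ = 1) (v w : E) :
    Integrable (fun x => ⟪Vp θ x, v⟫ * ⟪Vp θ x, w⟫) μ := by
  refine Integrable.mono' (integrable_const (‖v‖ * ‖w‖))
    (Continuous.aestronglyMeasurable (by
      exact (((Vp_cont θ).inner continuous_const).mul ((Vp_cont θ).inner continuous_const))))
    ?_
  filter_upwards [hsph] with x hx
  rw [norm_mul]
  have h1 : ‖Vp θ x‖ ≤ 1 := norm_Vp_le hθ x hx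
  have b1 : ‖(⟪Vp θ x, v⟫ : ℝ)‖ ≤ ‖v‖ := by
    calc ‖(⟪Vp θ x, v⟫ : ℝ)‖ ≤ ‖Vp θ x‖ * ‖v‖ := norm_inner_le_norm _ _
    _ ≤ 1 * ‖v‖ := by gcongr
    _ = ‖v‖ := one_mul _
  have b2 : ‖(⟪Vp θ x, w⟫ : ℝ)‖ ≤ ‖w‖ := by
    calc ‖(⟪Vp θ x, w⟫ : ℝ)‖ ≤ ‖Vp θ x‖ * ‖w‖ := norm_inner_le_norm _ _
    _ ≤ 1 * ‖w‖ := by gcongr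
    _ = ‖w‖ := one_mul _
  exact mul_le_mul b1 b2 (norm_nonneg _) (norm_nonneg _)

lemma Cf_comm {θ : E} {μ : Measure E} (v w : E) : Cf θ μ v w = Cf θ μ w v :=
  integral_congr_ae (Filter.Eventually.of_forall fun x => mul_comm _ _)

lemma Cf_smul_left {θ : E} {μ : Measure E} (a : ℝ) (v w : E) : Cf θ μ (a • v) w = a * Cf θ μ v w := by
  unfold Cf
  rw [← integral_const_mul]
  refine integral_congr_ae (Filter.Eventually.of_forall fun x => ?_)
  dsimp only
  rw [real_inner_smul_right]; ring

lemma Cf_Vp {θ : E} {μ : Measure E} (hθ : ‖θ‖ = 1) (v w : E) : Cf θ μ v w = Cf θ μ (Vp θ v) (Vp θ w) := by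
  refine integral_congr_ae (Filter.Eventually.of_forall fun x => ?_)
  dsimp only
  rw [← inner_Vp_right hθ x v, ← inner_Vp_right hθ x w]

/-- mean zero -/
lemma integral_inner_Vp_zero {θ : E} {μ : Measure E} (hθ : ‖θ‖ = 1) (hrot : RotSym θ μ) (w : E) :
    ∫ x, ⟪Vp θ x, w⟫ ∂μ = 0 := by
  have hθ0 : θ ≠ 0 := fun h => by simp [h] at hθ
  set O : E ≃ₗᵢ[ℝ] E := (Rd θ).trans (LinearIsometryEquiv.neg ℝ) with hOdef
  have hOapp : ∀ y : E, O y = -(Rd θ y) := fun y => rfl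
  have hOθ : O θ = θ := by rw [hOapp, Rd_apply_self θ hθ0, neg_neg]
  have hVO : ∀ x, Vp θ (O x) = -Vp θ x := by
    intro x
    rw [Vp_isometry O hOθ x, hOapp,
      Rd_apply_orthogonal θ (Vp θ x) (by rw [real_inner_comm]; exact Vp_inner_theta hθ x)]
  have h := integral_rot hrot O hOθ (fun x => ⟪Vp θ x, w⟫)
  simp only [hVO, inner_neg_left] at h
  rw [integral_neg] at h
  linarith

/-- invariance of the covariance form -/
lemma Cf_invariant {θ : E} {μ : Measure E} (hrot : RotSym θ μ) (O : E ≃ₗᵢ[ℝ] E) (hO : O θ = θ) (v w : E) :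
    Cf θ μ (O v) (O w) = Cf θ μ v w := by
  unfold Cf
  have h := integral_rot hrot O hO (fun x => ⟪Vp θ x, O v⟫ * ⟪Vp θ x, O w⟫)
  rw [← h]
  refine integral_congr_ae (Filter.Eventually.of_forall fun x => ?_)
  dsimp only
  rw [Vp_isometry O hO x, O.inner_map_map, O.inner_map_map]

lemma Cf_orthogonal_zero {θ : E} {μ : Measure E} (hrot : RotSym θ μ) (v w : E)
    (hvθ : ⟪v, θ⟫ = 0) (hwθ : ⟪w, θ⟫ = 0) (hvw : ⟪v, w⟫ = 0) : Cf θ μ v w = 0 := by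
  by_cases hw : w = 0
  · unfold Cf; simp [hw]
  have h1 : Cf θ μ (Rd w v) (Rd w w) = Cf θ μ v w :=
    Cf_invariant hrot (Rd w) (Rd_apply_orthogonal w θ hwθ) v w
  rw [Rd_apply_orthogonal w v (by rw [real_inner_comm]; exact hvw), Rd_apply_self w hw] at h1
  have h2 : Cf θ μ v (-w) = -Cf θ μ v w := by
    unfold Cf
    rw [← integral_neg]
    refine integral_congr_ae (Filter.Eventually.of_forall fun x => ?_)
    dsimp only
    rw [inner_neg_right]; ring
  rw [h2] at h1
  linarith

lemma Cf_diag_eq {θ : E} {μ : Measure E} (hrot : RotSym θ μ) (v w : E) (hv : ‖v‖ = 1) (hw : ‖w‖ = 1)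
    (hvθ : ⟪v, θ⟫ = 0) (hwθ : ⟪w, θ⟫ = 0) : Cf θ μ v v = Cf θ μ w w := by
  by_cases hvw : v = w
  · rw [hvw]
  have hd : ⟪v - w, θ⟫ = 0 := by rw [inner_sub_left, hvθ, hwθ]; ring
  have h := Cf_invariant hrot (Rd (v - w)) (Rd_apply_orthogonal _ θ hd) v v
  rw [Rd_swap v w (by rw [hv, hw]) hvw] at h
  exact h.symm


lemma Cf_zero_left {θ : E} {μ : Measure E} (w : E) : Cf θ μ 0 w = 0 := by
  unfold Cf
  have : ∀ x : E, ⟪Vp θ x, (0 : E)⟫ * ⟪Vp θ x, w⟫ = 0 := fun x => by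
    rw [inner_zero_right]; ring
  simp only [this, integral_zero]

lemma Cf_add_left {θ : E} {μ : Measure E} [IsProbabilityMeasure μ] (hθ : ‖θ‖ = 1)
    (hsph : ∀ᵐ x ∂μ, ‖x‖ = 1) (v w z : E) :
    Cf θ μ (v + w) z = Cf θ μ v z + Cf θ μ w z := by
  unfold Cf
  rw [← integral_add (integrable_inner_mul_s10 hθ hsph v z) (integrable_inner_mul_s10 hθ hsph w z)]
  refine integral_congr_ae (Filter.Eventually.of_forall fun x => ?_)
  dsimp only
  rw [inner_add_right]; ring

lemma exists_unit_orthogonal {θ : E} (hp : 2 ≤ p) (hθ : ‖θ‖ = 1) :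
    ∃ v : E, ‖v‖ = 1 ∧ ⟪v, θ⟫ = 0 := by
  have hθ0 : θ ≠ 0 := fun h => by simp [h] at hθ
  have hfin : Module.finrank ℝ (ℝ ∙ θ) + Module.finrank ℝ ((ℝ ∙ θ)ᗮ) = Module.finrank ℝ E :=
    Submodule.finrank_add_finrank_orthogonal _
  rw [finrank_span_singleton hθ0, finrank_euclideanSpace_fin] at hfin
  have hpos : 0 < Module.finrank ℝ ((ℝ ∙ θ)ᗮ : Submodule ℝ E) := by omega
  have : Nontrivial ((ℝ ∙ θ)ᗮ : Submodule ℝ E) := Module.finrank_pos_iff.mp hpos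
  obtain ⟨⟨v, hvmem⟩, hv0⟩ := exists_ne (0 : ((ℝ ∙ θ)ᗮ : Submodule ℝ E))
  have hvne : v ≠ 0 := fun h => hv0 (by simpa using h)
  refine ⟨‖v‖⁻¹ • v, ?_, ?_⟩
  · rw [norm_smul, norm_inv, norm_norm, inv_mul_cancel₀ (norm_ne_zero_iff.2 hvne)]
  · rw [real_inner_smul_left,
      Submodule.mem_orthogonal_singleton_iff_inner_left.mp hvmem, mul_zero]

lemma Cf_diag_lam {θ : E} {μ : Measure E} [IsProbabilityMeasure μ] (hθ : ‖θ‖ = 1)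
    (hrot : RotSym θ μ) {v₀ : E} (hv₀ : ‖v₀‖ = 1) (hv₀θ : ⟪v₀, θ⟫ = 0)
    (z : E) (hz : ⟪z, θ⟫ = 0) : Cf θ μ z z = Cf θ μ v₀ v₀ * ‖z‖ ^ 2 := by
  by_cases hz0 : z = 0
  · rw [hz0, Cf_zero_left]; simp
  have hnz : ‖z‖ ≠ 0 := norm_ne_zero_iff.2 hz0
  set zu : E := ‖z‖⁻¹ • z with hzu
  have hzu1 : ‖zu‖ = 1 := by
    rw [hzu, norm_smul, norm_inv, norm_norm, inv_mul_cancel₀ hnz]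
  have hzuθ : ⟪zu, θ⟫ = 0 := by rw [hzu, real_inner_smul_left, hz, mul_zero]
  have hdiag : Cf θ μ zu zu = Cf θ μ v₀ v₀ := Cf_diag_eq hrot zu v₀ hzu1 hv₀ hzuθ hv₀θ
  have hexp : z = ‖z‖ • zu := by rw [hzu, smul_smul, mul_inv_cancel₀ hnz, one_smul]
  calc Cf θ μ z z = Cf θ μ (‖z‖ • zu) (‖z‖ • zu) := by rw [← hexp]
    _ = ‖z‖ * Cf θ μ zu (‖z‖ • zu) := Cf_smul_left _ _ _
    _ = ‖z‖ * (‖z‖ * Cf θ μ zu zu) := by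
        rw [Cf_comm zu (‖z‖ • zu), Cf_smul_left, Cf_comm zu zu]
    _ = Cf θ μ v₀ v₀ * ‖z‖ ^ 2 := by rw [hdiag]; ring

lemma Cf_eq_lam_inner {θ : E} {μ : Measure E} [IsProbabilityMeasure μ] (hθ : ‖θ‖ = 1)
    (hrot : RotSym θ μ) (hsph : ∀ᵐ x ∂μ, ‖x‖ = 1) {v₀ : E} (hv₀ : ‖v₀‖ = 1)
    (hv₀θ : ⟪v₀, θ⟫ = 0) (v w : E) :
    Cf θ μ v w = Cf θ μ v₀ v₀ * ⟪Vp θ v, Vp θ w⟫ := by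
  set lam := Cf θ μ v₀ v₀ with hlam
  -- first for v, w orthogonal to θ
  have key : ∀ a b : E, ⟪a, θ⟫ = 0 → ⟪b, θ⟫ = 0 → Cf θ μ a b = lam * ⟪a, b⟫ := by
    intro a b ha hb
    have habθ : ⟪a + b, θ⟫ = 0 := by rw [inner_add_left, ha, hb]; ring
    have h1 : Cf θ μ (a + b) (a + b) = lam * ‖a + b‖ ^ 2 :=
      Cf_diag_lam hθ hrot hv₀ hv₀θ _ habθ
    have h2 : Cf θ μ a a = lam * ‖a‖ ^ 2 := Cf_diag_lam hθ hrot hv₀ hv₀θ _ ha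
    have h3 : Cf θ μ b b = lam * ‖b‖ ^ 2 := Cf_diag_lam hθ hrot hv₀ hv₀θ _ hb
    have h4 : Cf θ μ (a + b) (a + b) = Cf θ μ a a + Cf θ μ a b + Cf θ μ b a + Cf θ μ b b := by
      rw [Cf_add_left hθ hsph, Cf_comm a (a + b), Cf_comm b (a + b), Cf_add_left hθ hsph,
        Cf_add_left hθ hsph, Cf_comm a b]
      ring
    have h5 : Cf θ μ a b = Cf θ μ b a := Cf_comm _ _
    have h6 : ‖a + b‖ ^ 2 = ‖a‖ ^ 2 + 2 * ⟪a, b⟫ + ‖b‖ ^ 2 := norm_add_sq_real a b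
    rw [h1, h2, h3, h6, ← h5] at h4
    nlinarith [h4]
  rw [Cf_Vp hθ v w]
  exact key _ _ (Vp_inner_theta hθ v) (Vp_inner_theta hθ w)

lemma trace_Cf {θ : E} {μ : Measure E} [IsProbabilityMeasure μ] (hθ : ‖θ‖ = 1)
    (hsph : ∀ᵐ x ∂μ, ‖x‖ = 1) :
    ∫ x, ‖Vp θ x‖ ^ 2 ∂μ =
      ∑ k : Fin p, Cf θ μ (EuclideanSpace.single k (1 : ℝ)) (EuclideanSpace.single k 1) := by
  unfold Cf
  rw [← integral_finset_sum _ (fun k _ => integrable_inner_mul_s10 hθ hsph _ _)]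
  refine integral_congr_ae (Filter.Eventually.of_forall fun x => ?_)
  dsimp only
  have h1 : ∀ k : Fin p, (⟪Vp θ x, EuclideanSpace.single k (1 : ℝ)⟫ : ℝ) = Vp θ x k := by
    intro k
    rw [EuclideanSpace.inner_single_right]
    simp
  simp only [h1]
  rw [← real_inner_self_eq_norm_sq]
  rw [PiLp.inner_apply]
  simp [RCLike.inner_apply, sq]

lemma inner_Vp_single {θ : E} (hθ : ‖θ‖ = 1) (k m : Fin p) :
    ⟪Vp θ (EuclideanSpace.single k (1 : ℝ)), Vp θ (EuclideanSpace.single m (1 : ℝ))⟫ =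
      (if k = m then (1 : ℝ) else 0) - θ k * θ m := by
  rw [← inner_Vp_right hθ]
  rw [Vp, inner_sub_left, real_inner_smul_left]
  rw [EuclideanSpace.inner_single_left, EuclideanSpace.inner_single_left]
  simp only [map_one, one_mul, EuclideanSpace.single_apply]
  have h2 : (⟪θ, EuclideanSpace.single m (1 : ℝ)⟫ : ℝ) = θ m := by
    rw [EuclideanSpace.inner_single_right]; simp
  rw [h2]


lemma sqrt_one_sub_inner_sq {θ : E} (hθ : ‖θ‖ = 1) (a : E) (ha : ‖a‖ = 1) :
    Real.sqrt (1 - ⟪a, θ⟫ ^ 2) = ‖Vp θ a‖ := by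
  have h : ‖Vp θ a‖ ^ 2 = 1 - ⟪a, θ⟫ ^ 2 := by rw [norm_Vp_sq hθ a, ha]; norm_num
  rw [← h, Real.sqrt_sq (norm_nonneg _)]

lemma uSg_eq {θ : E} (hθ : ‖θ‖ = 1) (Sg : E → E)
    (hSg : ∀ x, x - ⟪x, θ⟫ • θ ≠ 0 → Sg x = ‖x - ⟪x, θ⟫ • θ‖⁻¹ • (x - ⟪x, θ⟫ • θ))
    (a b : E) (ha : ‖a‖ = 1) (hb : ‖b‖ = 1) :
    Real.sqrt (1 - ⟪a, θ⟫ ^ 2) * Real.sqrt (1 - ⟪b, θ⟫ ^ 2) * ⟪Sg a, Sg b⟫ =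
      ⟪Vp θ a, Vp θ b⟫ := by
  rw [sqrt_one_sub_inner_sq hθ a ha, sqrt_one_sub_inner_sq hθ b hb]
  by_cases hva : Vp θ a = 0
  · rw [hva]; simp
  by_cases hvb : Vp θ b = 0
  · rw [hvb]; simp
  have hsa : Sg a = ‖Vp θ a‖⁻¹ • Vp θ a := hSg a hva
  have hsb : Sg b = ‖Vp θ b‖⁻¹ • Vp θ b := hSg b hvb
  rw [hsa, hsb, real_inner_smul_left, real_inner_smul_right]
  have h1 : ‖Vp θ a‖ ≠ 0 := norm_ne_zero_iff.2 hva
  have h2 : ‖Vp θ b‖ ≠ 0 := norm_ne_zero_iff.2 hvb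
  field_simp

lemma inner_eq_sum_inner_single (a b : E) :
    (⟪a, b⟫ : ℝ) = ∑ k : Fin p, ⟪a, EuclideanSpace.single k (1 : ℝ)⟫ *
      ⟪b, EuclideanSpace.single k (1 : ℝ)⟫ := by
  simp only [EuclideanSpace.inner_single_right, map_one, one_mul]
  rw [PiLp.inner_apply]
  simp [RCLike.inner_apply, mul_comm]

lemma gauss_sum_Icc : ∀ n : ℕ, 1 ≤ n →
    (∑ ℓ ∈ Finset.Icc 2 n, ((ℓ : ℝ) - 1)) = (n : ℝ) * ((n : ℝ) - 1) / 2 := by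
  intro n hn
  induction n with
  | zero => omega
  | succ m ih =>
    by_cases hm : 1 ≤ m
    · rw [Finset.sum_Icc_succ_top (by omega : 2 ≤ m + 1), ih hm]
      push_cast
      ring
    · have : m = 0 := by omega
      subst this
      norm_num

end MeasureLemmas





/-- In the fixed-sample setup, `E[Σ_{ℓ=2}^n σ²_ℓ] = (n−1)/n`, where
`σ²_ℓ = E[Y_ℓ² | X₁,…,X_{ℓ−1}]`. -/
theorem statement_10
    {Ω : Type*} [MeasurableSpace Ω] (P : Measure Ω) [IsProbabilityMeasure P]
    (p n : ℕ) (hp : 2 ≤ p) (hn : 2 ≤ n)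
    (θ : EuclideanSpace ℝ (Fin p)) (hθ : ‖θ‖ = 1)
    -- the observations `X i`, `1 ≤ i ≤ n`
    (X : ℕ → Ω → EuclideanSpace ℝ (Fin p))
    (hXmeas : ∀ i, 1 ≤ i → i ≤ n → Measurable (X i))
    (hXsph : ∀ i, 1 ≤ i → i ≤ n → ∀ ω, ‖X i ω‖ = 1)
    -- i.i.d. observations with common rotationally symmetric distribution about `θ`
    (hXindep : iIndepFun
      (fun i : Fin n => X ((i : ℕ) + 1)) P)
    (hXid : ∀ i, 1 ≤ i → i ≤ n → Measure.map (X i) P = Measure.map (X 1) P)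
    (hXrot : RotSym θ (Measure.map (X 1) P))
    -- the sign map `Sg`: a fixed measurable choice, equal to the normalized projection of `x`
    -- on the orthogonal complement of `θ` whenever `x ≠ ±θ`
    (Sg : EuclideanSpace ℝ (Fin p) → EuclideanSpace ℝ (Fin p))
    (hSgmeas : Measurable Sg)
    (hSg : ∀ x, x - ⟪x, θ⟫ • θ ≠ 0 →
      Sg x = ‖x - ⟪x, θ⟫ • θ‖⁻¹ • (x - ⟪x, θ⟫ • θ))
    (hSgunit : ∀ x, ‖Sg x‖ = 1)
    (hSgperp : ∀ x, ⟪Sg x, θ⟫ = 0)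
    -- `u i ω = u(X_i(ω))`
    (u : ℕ → Ω → ℝ)
    (hu : ∀ i ω, u i ω = Real.sqrt (1 - ⟪X i ω, θ⟫ ^ 2))
    -- the moments `E[u₁²]` and `E[u₁⁴]`
    (Eu2 Eu4 : ℝ)
    (hEu2 : Eu2 = ∫ ω, (u 1 ω) ^ 2 ∂P)
    (hEu4 : Eu4 = ∫ ω, (u 1 ω) ^ 4 ∂P)
    (hEu2pos : 0 < Eu2)
    -- the martingale differences `Y_ℓ`
    (Y : ℕ → Ω → ℝ)
    (hY : ∀ ℓ ω, Y ℓ ω =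
      Real.sqrt (2 * ((p : ℝ) - 1)) / (n * Eu2) *
        ∑ i ∈ Finset.Icc 1 (ℓ - 1),
          u i ω * u ℓ ω * ⟪Sg (X i ω), Sg (X ℓ ω)⟫)
    -- the σ-algebra generated by `X₁,…,X_{ℓ−1}`
    (𝔪 : ℕ → MeasurableSpace Ω)
    (h𝔪 : ∀ ℓ, 𝔪 ℓ = ⨆ i ∈ Finset.Icc 1 (ℓ - 1),
      MeasurableSpace.comap (X i) inferInstance)
    -- the conditional variances `σ²_ℓ = E[Y_ℓ² | X₁,…,X_{ℓ−1}]`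
    (σsq : ℕ → Ω → ℝ)
    (hσsq : ∀ ℓ, σsq ℓ = P[fun ω => (Y ℓ ω) ^ 2 | 𝔪 ℓ]) :
    ∫ ω, (∑ ℓ ∈ Finset.Icc 2 n, σsq ℓ ω) ∂P = ((n : ℝ) - 1) / n := by
  classical
  have hn1 : 1 ≤ n := by omega
  have hX1meas : Measurable (X 1) := hXmeas 1 le_rfl hn1
  set μ : Measure (EuclideanSpace ℝ (Fin p)) := Measure.map (X 1) P with hμdef
  haveI hμprob : IsProbabilityMeasure μ := Measure.isProbabilityMeasure_map hX1meas.aemeasurable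
  have hμsph : ∀ᵐ x ∂μ, ‖x‖ = 1 := by
    rw [hμdef, ae_map_iff hX1meas.aemeasurable
      ((isClosed_eq continuous_norm continuous_const).measurableSet)]
    exact Filter.Eventually.of_forall fun ω => hXsph 1 le_rfl hn1 ω
  obtain ⟨v₀, hv₀, hv₀θ⟩ := exists_unit_orthogonal hp hθ
  set lam : ℝ := Cf θ μ v₀ v₀ with hlamdef
  have hCf : ∀ v w : EuclideanSpace ℝ (Fin p), Cf θ μ v w = lam * ⟪Vp θ v, Vp θ w⟫ :=
    Cf_eq_lam_inner hθ hXrot hμsph hv₀ hv₀θ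
  have hθsum : ∑ k : Fin p, θ k * θ k = 1 := by
    have h := inner_theta_self hθ
    rw [PiLp.inner_apply] at h
    simpa [RCLike.inner_apply, sq] using h
  -- Eu2 in terms of lam
  have hEu2lam : Eu2 = lam * ((p : ℝ) - 1) := by
    have h1 : Eu2 = ∫ x, ‖Vp θ x‖ ^ 2 ∂μ := by
      rw [hμdef, integral_map hX1meas.aemeasurable
        (((Vp_cont θ).norm.fun_pow 2).aestronglyMeasurable), hEu2]
      refine integral_congr_ae (Filter.Eventually.of_forall fun ω => ?_)
      dsimp only
      rw [hu 1 ω, sqrt_one_sub_inner_sq hθ _ (hXsph 1 le_rfl hn1 ω)]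
    have h2 := trace_Cf (μ := μ) hθ hμsph
    have h3 : ∀ k : Fin p, Cf θ μ (EuclideanSpace.single k (1 : ℝ))
        (EuclideanSpace.single k 1) = lam * (1 - θ k * θ k) := by
      intro k
      rw [hCf, inner_Vp_single hθ]
      simp
    rw [h1, h2, Finset.sum_congr rfl fun k _ => h3 k, ← Finset.mul_sum]
    congr 1
    rw [Finset.sum_sub_distrib, Finset.sum_const, hθsum, Finset.card_univ, Fintype.card_fin]
    simp
  have hp1pos : (0 : ℝ) < (p : ℝ) - 1 := by
    have : (2 : ℝ) ≤ (p : ℝ) := by exact_mod_cast hp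
    linarith
  have hlampos : 0 < lam := by
    by_contra h
    push_neg at h
    nlinarith
  -- sum of squared covariance matrix entries
  have hMsum : ∑ k : Fin p, ∑ m : Fin p,
      (Cf θ μ (EuclideanSpace.single k (1 : ℝ)) (EuclideanSpace.single m 1)) ^ 2
        = lam ^ 2 * ((p : ℝ) - 1) := by
    have h3 : ∀ k m : Fin p, Cf θ μ (EuclideanSpace.single k (1 : ℝ))
        (EuclideanSpace.single m 1) = lam * ((if k = m then (1 : ℝ) else 0) - θ k * θ m) :=
      fun k m => by rw [hCf, inner_Vp_single hθ]
    have hin : ∀ k : Fin p, ∑ m : Fin p,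
        ((if k = m then (1 : ℝ) else 0) - θ k * θ m) ^ 2 = 1 - θ k * θ k := by
      intro k
      have hpt : ∀ m : Fin p, ((if k = m then (1 : ℝ) else 0) - θ k * θ m) ^ 2 =
          ((if k = m then (1 : ℝ) else 0) - (if k = m then 2 * (θ k * θ m) else 0))
            + (θ k * θ k) * (θ m * θ m) := by
        intro m
        by_cases h : k = m
        · subst h; simp; ring
        · simp [h]; ring
      rw [Finset.sum_congr rfl fun m _ => hpt m, Finset.sum_add_distrib,
        Finset.sum_sub_distrib, Finset.sum_ite_eq, Finset.sum_ite_eq, ← Finset.mul_sum, hθsum]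
      simp
      ring
    calc ∑ k : Fin p, ∑ m : Fin p,
        (Cf θ μ (EuclideanSpace.single k (1 : ℝ)) (EuclideanSpace.single m 1)) ^ 2
        = ∑ k : Fin p, lam ^ 2 * (1 - θ k * θ k) := by
          refine Finset.sum_congr rfl fun k _ => ?_
          rw [Finset.sum_congr rfl fun m _ => by rw [h3 k m, mul_pow], ← Finset.mul_sum, hin k]
      _ = lam ^ 2 * ((p : ℝ) - 1) := by
          rw [← Finset.mul_sum, Finset.sum_sub_distrib, Finset.sum_const, hθsum,
            Finset.card_univ, Fintype.card_fin]
          simp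
  -- coordinate functions: measurability and bounds
  have hAmeas : ∀ i, 1 ≤ i → i ≤ n → ∀ k : Fin p,
      Measurable fun ω => (⟪Vp θ (X i ω), EuclideanSpace.single k (1 : ℝ)⟫ : ℝ) :=
    fun i h1 h2 k =>
      ((Vp_cont θ).inner continuous_const).measurable.comp (hXmeas i h1 h2)
  have hAbd : ∀ i, 1 ≤ i → i ≤ n → ∀ (k : Fin p) (ω : Ω),
      |(⟪Vp θ (X i ω), EuclideanSpace.single k (1 : ℝ)⟫ : ℝ)| ≤ 1 := by
    intro i h1 h2 k ω
    have hb := norm_Vp_le hθ (X i ω) (hXsph i h1 h2 ω)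
    have h := abs_real_inner_le_norm (Vp θ (X i ω)) (EuclideanSpace.single k (1 : ℝ))
    have he1 : ‖EuclideanSpace.single k (1 : ℝ)‖ = 1 := by
      rw [EuclideanSpace.norm_single]; norm_num
    rw [he1, mul_one] at h
    exact le_trans h hb
  have habs_mul : ∀ a b : ℝ, |a| ≤ 1 → |b| ≤ 1 → |a * b| ≤ 1 := by
    intro a b ha hb
    rw [abs_mul]
    nlinarith [abs_nonneg a, abs_nonneg b]
  have hIntBdd : ∀ (f : Ω → ℝ) (C : ℝ), Measurable f → (∀ ω, |f ω| ≤ C) →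
      Integrable f P := fun f C hf hC =>
    Integrable.mono' (integrable_const C) hf.aestronglyMeasurable
      (Filter.Eventually.of_forall fun ω => by simpa [Real.norm_eq_abs] using hC ω)
  -- identical distribution
  have hXint : ∀ i, 1 ≤ i → i ≤ n → ∀ f : EuclideanSpace ℝ (Fin p) → ℝ, Measurable f →
      ∫ ω, f (X i ω) ∂P = ∫ x, f x ∂μ := by
    intro i h1 h2 f hf
    rw [← hXid i h1 h2,
      integral_map (hXmeas i h1 h2).aemeasurable hf.aestronglyMeasurable]
  have hfammeas : ∀ i : Fin n, Measurable (X ((i : ℕ) + 1)) :=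
    fun i => hXmeas _ (by omega) (by have := i.isLt; omega)
  -- independence: pairs
  have hpair : ∀ i ℓ, 1 ≤ i → i < ℓ → ℓ ≤ n →
      ∀ f g : EuclideanSpace ℝ (Fin p) → ℝ, Measurable f → Measurable g →
      Integrable (fun ω => f (X i ω)) P → Integrable (fun ω => g (X ℓ ω)) P →
      ∫ ω, f (X i ω) * g (X ℓ ω) ∂P =
        (∫ ω, f (X i ω) ∂P) * ∫ ω, g (X ℓ ω) ∂P := by
    intro i ℓ h1 h2 h3 f g hf hg hfi hgi
    have hne : (⟨i - 1, by omega⟩ : Fin n) ≠ ⟨ℓ - 1, by omega⟩ := by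
      simp only [ne_eq, Fin.mk.injEq]
      omega
    have h := (hXindep.indepFun hne).comp hf hg
    have e1 : ((⟨i - 1, by omega⟩ : Fin n) : ℕ) + 1 = i := by simp; omega
    have e2 : ((⟨ℓ - 1, by omega⟩ : Fin n) : ℕ) + 1 = ℓ := by simp; omega
    rw [e1, e2] at h
    simpa [Function.comp] using h.integral_mul_eq_mul_integral hfi.1 hgi.1
  -- independence: one vs a pair
  have htriple : ∀ i j ℓ, 1 ≤ i → 1 ≤ j → i ≠ j → i < ℓ → j < ℓ → ℓ ≤ n →
      ∀ f g h : EuclideanSpace ℝ (Fin p) → ℝ, Measurable f → Measurable g → Measurable h →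
      Integrable (fun ω => f (X i ω)) P →
      Integrable (fun ω => g (X j ω) * h (X ℓ ω)) P →
      ∫ ω, f (X i ω) * (g (X j ω) * h (X ℓ ω)) ∂P =
        (∫ ω, f (X i ω) ∂P) * ∫ ω, g (X j ω) * h (X ℓ ω) ∂P := by
    intro i j ℓ h1 h1' hij h2 h3 h4 f g h hf hg hh hfi hgh
    have hne1 : (⟨j - 1, by omega⟩ : Fin n) ≠ ⟨i - 1, by omega⟩ := by
      simp only [ne_eq, Fin.mk.injEq]; omega
    have hne2 : (⟨ℓ - 1, by omega⟩ : Fin n) ≠ ⟨i - 1, by omega⟩ := by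
      simp only [ne_eq, Fin.mk.injEq]; omega
    have hI := hXindep.indepFun_prodMk hfammeas
      ⟨j - 1, by omega⟩ ⟨ℓ - 1, by omega⟩ ⟨i - 1, by omega⟩ hne1 hne2
    have hG : Measurable fun q : EuclideanSpace ℝ (Fin p) × EuclideanSpace ℝ (Fin p) =>
        g q.1 * h q.2 := (hg.comp measurable_fst).mul (hh.comp measurable_snd)
    have hI2 := hI.comp hG hf
    have e1 : ((⟨i - 1, by omega⟩ : Fin n) : ℕ) + 1 = i := by simp; omega
    have e2 : ((⟨j - 1, by omega⟩ : Fin n) : ℕ) + 1 = j := by simp; omega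
    have e3 : ((⟨ℓ - 1, by omega⟩ : Fin n) : ℕ) + 1 = ℓ := by simp; omega
    rw [e1, e2, e3] at hI2
    have hkey := hI2.integral_mul_eq_mul_integral hgh.1 hfi.1
    calc ∫ ω, f (X i ω) * (g (X j ω) * h (X ℓ ω)) ∂P
        = ∫ ω, (g (X j ω) * h (X ℓ ω)) * f (X i ω) ∂P := by
          refine integral_congr_ae (Filter.Eventually.of_forall fun ω => ?_)
          dsimp only
          ring
      _ = (∫ ω, g (X j ω) * h (X ℓ ω) ∂P) * ∫ ω, f (X i ω) ∂P := by
          simpa [Function.comp] using hkey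
      _ = _ := mul_comm _ _
  -- the elementary term integrals
  have hterm : ∀ i j ℓ, 1 ≤ i → i ≤ ℓ - 1 → 1 ≤ j → j ≤ ℓ - 1 → 2 ≤ ℓ → ℓ ≤ n →
      ∀ k m : Fin p,
      ∫ ω, ⟪Vp θ (X i ω), EuclideanSpace.single k (1 : ℝ)⟫ *
            ⟪Vp θ (X j ω), EuclideanSpace.single m (1 : ℝ)⟫ *
            (⟪Vp θ (X ℓ ω), EuclideanSpace.single k (1 : ℝ)⟫ *
             ⟪Vp θ (X ℓ ω), EuclideanSpace.single m (1 : ℝ)⟫) ∂P =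
        if i = j then
          Cf θ μ (EuclideanSpace.single k 1) (EuclideanSpace.single m 1) ^ 2 else 0 := by
    intro i j ℓ hi1 hiℓ hj1 hjℓ hℓ2 hℓn k m
    have hℓ1 : 1 ≤ ℓ - 1 := by omega
    have hin : i ≤ n := by omega
    have hjn : j ≤ n := by omega
    have hiℓ' : i < ℓ := by omega
    have hjℓ' : j < ℓ := by omega
    set f2 : EuclideanSpace ℝ (Fin p) → ℝ := fun x =>
      ⟪Vp θ x, EuclideanSpace.single k (1 : ℝ)⟫ * ⟪Vp θ x, EuclideanSpace.single m (1 : ℝ)⟫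
      with hf2def
    have hf2meas : Measurable f2 :=
      (((Vp_cont θ).inner continuous_const).mul
        ((Vp_cont θ).inner continuous_const)).measurable
    have hf2comp : ∀ r, 1 ≤ r → r ≤ n → Measurable fun ω => f2 (X r ω) :=
      fun r h1 h2 => hf2meas.comp (hXmeas r h1 h2)
    have hf2bd : ∀ r, 1 ≤ r → r ≤ n → ∀ ω, |f2 (X r ω)| ≤ 1 :=
      fun r h1 h2 ω => habs_mul _ _ (hAbd r h1 h2 k ω) (hAbd r h1 h2 m ω)
    have hCfint : ∀ r, 1 ≤ r → r ≤ n →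
        ∫ ω, f2 (X r ω) ∂P = Cf θ μ (EuclideanSpace.single k 1) (EuclideanSpace.single m 1) :=
      fun r h1 h2 => hXint r h1 h2 f2 hf2meas
    by_cases hij : i = j
    · subst hij
      rw [if_pos rfl]
      have hmain := hpair i ℓ hi1 hiℓ' hℓn f2 f2 hf2meas hf2meas
        (hIntBdd _ 1 (hf2comp i hi1 hin) (hf2bd i hi1 hin))
        (hIntBdd _ 1 (hf2comp ℓ (by omega) hℓn) (hf2bd ℓ (by omega) hℓn))
      calc ∫ ω, ⟪Vp θ (X i ω), EuclideanSpace.single k (1 : ℝ)⟫ *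
            ⟪Vp θ (X i ω), EuclideanSpace.single m (1 : ℝ)⟫ *
            (⟪Vp θ (X ℓ ω), EuclideanSpace.single k (1 : ℝ)⟫ *
             ⟪Vp θ (X ℓ ω), EuclideanSpace.single m (1 : ℝ)⟫) ∂P
          = ∫ ω, f2 (X i ω) * f2 (X ℓ ω) ∂P := by
            refine integral_congr_ae (Filter.Eventually.of_forall fun ω => ?_)
            rw [hf2def]
        _ = (∫ ω, f2 (X i ω) ∂P) * ∫ ω, f2 (X ℓ ω) ∂P := hmain
        _ = Cf θ μ (EuclideanSpace.single k 1) (EuclideanSpace.single m 1) ^ 2 := by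
            rw [hCfint i hi1 hin, hCfint ℓ (by omega) hℓn, sq]
    · rw [if_neg hij]
      set fk : EuclideanSpace ℝ (Fin p) → ℝ := fun x =>
        ⟪Vp θ x, EuclideanSpace.single k (1 : ℝ)⟫ with hfkdef
      set gm : EuclideanSpace ℝ (Fin p) → ℝ := fun x =>
        ⟪Vp θ x, EuclideanSpace.single m (1 : ℝ)⟫ with hgmdef
      have hfkmeas : Measurable fk := ((Vp_cont θ).inner continuous_const).measurable
      have hgmmeas : Measurable gm := ((Vp_cont θ).inner continuous_const).measurable
      have hzero : ∫ ω, fk (X i ω) ∂P = 0 := by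
        rw [hXint i hi1 hin fk hfkmeas]
        exact integral_inner_Vp_zero hθ hXrot _
      have hmain := htriple i j ℓ hi1 hj1 hij hiℓ' hjℓ' hℓn fk gm f2
        hfkmeas hgmmeas hf2meas
        (hIntBdd _ 1 (hfkmeas.comp (hXmeas i hi1 hin)) (fun ω => hAbd i hi1 hin k ω))
        (hIntBdd _ 1 ((hgmmeas.comp (hXmeas j hj1 hjn)).mul
          (hf2comp ℓ (by omega) hℓn))
          (fun ω => habs_mul _ _ (hAbd j hj1 hjn m ω) (hf2bd ℓ (by omega) hℓn ω)))
      calc ∫ ω, ⟪Vp θ (X i ω), EuclideanSpace.single k (1 : ℝ)⟫ *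
            ⟪Vp θ (X j ω), EuclideanSpace.single m (1 : ℝ)⟫ *
            (⟪Vp θ (X ℓ ω), EuclideanSpace.single k (1 : ℝ)⟫ *
             ⟪Vp θ (X ℓ ω), EuclideanSpace.single m (1 : ℝ)⟫) ∂P
          = ∫ ω, fk (X i ω) * (gm (X j ω) * f2 (X ℓ ω)) ∂P := by
            refine integral_congr_ae (Filter.Eventually.of_forall fun ω => ?_)
            rw [hfkdef, hgmdef, hf2def]
            ring
        _ = (∫ ω, fk (X i ω) ∂P) * ∫ ω, gm (X j ω) * f2 (X ℓ ω) ∂P := hmain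
        _ = 0 := by rw [hzero, zero_mul]
  set c : ℝ := Real.sqrt (2 * ((p : ℝ) - 1)) / ((n : ℝ) * Eu2) with hcdef
  have hTint : ∀ ℓ, 2 ≤ ℓ → ℓ ≤ n → ∀ i, 1 ≤ i → i ≤ ℓ - 1 → ∀ j, 1 ≤ j → j ≤ ℓ - 1 →
      ∀ k m : Fin p, Integrable (fun ω =>
        ⟪Vp θ (X i ω), EuclideanSpace.single k (1 : ℝ)⟫ *
        ⟪Vp θ (X j ω), EuclideanSpace.single m (1 : ℝ)⟫ *
        (⟪Vp θ (X ℓ ω), EuclideanSpace.single k (1 : ℝ)⟫ *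
         ⟪Vp θ (X ℓ ω), EuclideanSpace.single m (1 : ℝ)⟫)) P := by
    intro ℓ hℓ2 hℓn i hi1 hiℓ j hj1 hjℓ k m
    have hin : i ≤ n := by omega
    have hjn : j ≤ n := by omega
    refine hIntBdd _ 1 ?_ ?_
    · exact ((hAmeas i hi1 hin k).mul (hAmeas j hj1 hjn m)).mul
        ((hAmeas ℓ (by omega) hℓn k).mul (hAmeas ℓ (by omega) hℓn m))
    · intro ω
      exact habs_mul _ _ (habs_mul _ _ (hAbd i hi1 hin k ω) (hAbd j hj1 hjn m ω))
        (habs_mul _ _ (hAbd ℓ (by omega) hℓn k ω) (hAbd ℓ (by omega) hℓn m ω))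
  have hYint : ∀ ℓ, 2 ≤ ℓ → ℓ ≤ n →
      ∫ ω, Y ℓ ω ^ 2 ∂P = c ^ 2 * (((ℓ : ℝ) - 1) * (lam ^ 2 * ((p : ℝ) - 1))) := by
    intro ℓ hℓ2 hℓn
    have hYpt : ∀ ω, Y ℓ ω ^ 2 =
        c ^ 2 * ∑ i ∈ Finset.Icc 1 (ℓ - 1), ∑ j ∈ Finset.Icc 1 (ℓ - 1),
          ∑ k : Fin p, ∑ m : Fin p,
            ⟪Vp θ (X i ω), EuclideanSpace.single k (1 : ℝ)⟫ *
            ⟪Vp θ (X j ω), EuclideanSpace.single m (1 : ℝ)⟫ *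
            (⟪Vp θ (X ℓ ω), EuclideanSpace.single k (1 : ℝ)⟫ *
             ⟪Vp θ (X ℓ ω), EuclideanSpace.single m (1 : ℝ)⟫) := by
      intro ω
      have h0 : Y ℓ ω = c * ∑ i ∈ Finset.Icc 1 (ℓ - 1), ⟪Vp θ (X i ω), Vp θ (X ℓ ω)⟫ := by
        rw [hY ℓ ω]
        congr 1
        refine Finset.sum_congr rfl fun i hi => ?_
        obtain ⟨hi1, hi2⟩ := Finset.mem_Icc.mp hi
        rw [hu i ω, hu ℓ ω]
        exact uSg_eq hθ Sg hSg _ _ (hXsph i hi1 (by omega) ω) (hXsph ℓ (by omega) hℓn ω)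
      rw [h0, mul_pow]
      congr 1
      rw [sq, Finset.sum_mul_sum]
      refine Finset.sum_congr rfl fun i hi => Finset.sum_congr rfl fun j hj => ?_
      rw [inner_eq_sum_inner_single (Vp θ (X i ω)) (Vp θ (X ℓ ω)),
        inner_eq_sum_inner_single (Vp θ (X j ω)) (Vp θ (X ℓ ω)), Finset.sum_mul_sum]
      refine Finset.sum_congr rfl fun k _ => Finset.sum_congr rfl fun m _ => ?_
      ring
    rw [integral_congr_ae (Filter.Eventually.of_forall hYpt), integral_const_mul]
    congr 1
    have hmem : ∀ r, r ∈ Finset.Icc 1 (ℓ - 1) → 1 ≤ r ∧ r ≤ ℓ - 1 :=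
      fun r hr => Finset.mem_Icc.mp hr
    have hintj : ∀ i, 1 ≤ i → i ≤ ℓ - 1 → ∀ j ∈ Finset.Icc 1 (ℓ - 1),
        Integrable (fun ω => ∑ k : Fin p, ∑ m : Fin p,
          ⟪Vp θ (X i ω), EuclideanSpace.single k (1 : ℝ)⟫ *
          ⟪Vp θ (X j ω), EuclideanSpace.single m (1 : ℝ)⟫ *
          (⟪Vp θ (X ℓ ω), EuclideanSpace.single k (1 : ℝ)⟫ *
           ⟪Vp θ (X ℓ ω), EuclideanSpace.single m (1 : ℝ)⟫)) P :=
      fun i hi1 hi2 j hj => integrable_finset_sum _ fun k _ => integrable_finset_sum _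
        fun m _ => hTint ℓ hℓ2 hℓn i hi1 hi2 j (hmem j hj).1 (hmem j hj).2 k m
    rw [integral_finset_sum _ (fun i hi => integrable_finset_sum _
      (fun j hj => hintj i (hmem i hi).1 (hmem i hi).2 j hj))]
    have hper : ∀ i ∈ Finset.Icc 1 (ℓ - 1),
        (∫ ω, ∑ j ∈ Finset.Icc 1 (ℓ - 1), ∑ k : Fin p, ∑ m : Fin p,
          ⟪Vp θ (X i ω), EuclideanSpace.single k (1 : ℝ)⟫ *
          ⟪Vp θ (X j ω), EuclideanSpace.single m (1 : ℝ)⟫ *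
          (⟪Vp θ (X ℓ ω), EuclideanSpace.single k (1 : ℝ)⟫ *
           ⟪Vp θ (X ℓ ω), EuclideanSpace.single m (1 : ℝ)⟫) ∂P)
          = lam ^ 2 * ((p : ℝ) - 1) := by
      intro i hi
      obtain ⟨hi1, hi2⟩ := hmem i hi
      rw [integral_finset_sum _ (fun j hj => hintj i hi1 hi2 j hj)]
      have hj : ∀ j ∈ Finset.Icc 1 (ℓ - 1),
          (∫ ω, ∑ k : Fin p, ∑ m : Fin p,
            ⟪Vp θ (X i ω), EuclideanSpace.single k (1 : ℝ)⟫ *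
            ⟪Vp θ (X j ω), EuclideanSpace.single m (1 : ℝ)⟫ *
            (⟪Vp θ (X ℓ ω), EuclideanSpace.single k (1 : ℝ)⟫ *
             ⟪Vp θ (X ℓ ω), EuclideanSpace.single m (1 : ℝ)⟫) ∂P)
            = if i = j then lam ^ 2 * ((p : ℝ) - 1) else 0 := by
        intro j hjmem
        obtain ⟨hj1, hj2⟩ := hmem j hjmem
        rw [integral_finset_sum _ (fun k _ => integrable_finset_sum _
          (fun m _ => hTint ℓ hℓ2 hℓn i hi1 hi2 j hj1 hj2 k m))]
        rw [Finset.sum_congr rfl fun k _ => integral_finset_sum _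
          (fun m _ => hTint ℓ hℓ2 hℓn i hi1 hi2 j hj1 hj2 k m)]
        rw [Finset.sum_congr rfl fun k _ => Finset.sum_congr rfl fun m _ =>
          hterm i j ℓ hi1 hi2 hj1 hj2 hℓ2 hℓn k m]
        by_cases hij : i = j
        · rw [if_pos hij]
          subst hij
          simp only [if_pos rfl]
          exact hMsum
        · rw [if_neg hij]
          simp [hij]
      rw [Finset.sum_congr rfl hj, Finset.sum_ite_eq, if_pos hi]
    rw [Finset.sum_congr rfl hper, Finset.sum_const, Nat.card_Icc]
    simp only [nsmul_eq_mul]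
    congr 1
    have : ℓ - 1 + 1 - 1 = ℓ - 1 := by omega
    rw [this, Nat.cast_sub (by omega : 1 ≤ ℓ), Nat.cast_one]

  -- measurability and bound for Y
  have humeas : ∀ r, 1 ≤ r → r ≤ n → Measurable (u r) := by
    intro r h1 h2
    have : u r = fun ω => Real.sqrt (1 - ⟪X r ω, θ⟫ ^ 2) := funext (hu r)
    rw [this]
    exact Real.continuous_sqrt.measurable.comp
      (measurable_const.sub (((hXmeas r h1 h2).inner measurable_const).pow_const 2))
  have hubd : ∀ r, 1 ≤ r → r ≤ n → ∀ ω, |u r ω| ≤ 1 := by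
    intro r h1 h2 ω
    rw [hu r ω, abs_of_nonneg (Real.sqrt_nonneg _)]
    exact Real.sqrt_le_one.mpr (by nlinarith [sq_nonneg (⟪X r ω, θ⟫ : ℝ)])
  have hSgbd : ∀ a b : EuclideanSpace ℝ (Fin p), |(⟪Sg a, Sg b⟫ : ℝ)| ≤ 1 := by
    intro a b
    have h := abs_real_inner_le_norm (Sg a) (Sg b)
    rwa [hSgunit a, hSgunit b, mul_one] at h
  have hYmeas : ∀ ℓ, 2 ≤ ℓ → ℓ ≤ n → Measurable (Y ℓ) := by
    intro ℓ hℓ2 hℓn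
    have hfun : Y ℓ = fun ω => Real.sqrt (2 * ((p : ℝ) - 1)) / (n * Eu2) *
        ∑ i ∈ Finset.Icc 1 (ℓ - 1),
          u i ω * u ℓ ω * ⟪Sg (X i ω), Sg (X ℓ ω)⟫ := funext (hY ℓ)
    rw [hfun]
    refine Measurable.const_mul ?_ _
    refine Finset.measurable_sum _ fun i hi => ?_
    obtain ⟨hi1, hi2⟩ := Finset.mem_Icc.mp hi
    exact ((humeas i hi1 (by omega)).mul (humeas ℓ (by omega) hℓn)).mul
      ((hSgmeas.comp (hXmeas i hi1 (by omega))).inner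
        (hSgmeas.comp (hXmeas ℓ (by omega) hℓn)))
  have hYbd : ∀ ℓ, 2 ≤ ℓ → ℓ ≤ n → ∀ ω, |Y ℓ ω| ≤ |c| * ((ℓ : ℝ) - 1) := by
    intro ℓ hℓ2 hℓn ω
    rw [hY ℓ ω, abs_mul]
    refine mul_le_mul_of_nonneg_left ?_ (abs_nonneg c)
    calc |∑ i ∈ Finset.Icc 1 (ℓ - 1), u i ω * u ℓ ω * ⟪Sg (X i ω), Sg (X ℓ ω)⟫|
        ≤ ∑ i ∈ Finset.Icc 1 (ℓ - 1), |u i ω * u ℓ ω * ⟪Sg (X i ω), Sg (X ℓ ω)⟫| :=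
          Finset.abs_sum_le_sum_abs _ _
      _ ≤ ∑ _i ∈ Finset.Icc 1 (ℓ - 1), (1 : ℝ) := by
          refine Finset.sum_le_sum fun i hi => ?_
          obtain ⟨hi1, hi2⟩ := Finset.mem_Icc.mp hi
          exact habs_mul _ _ (habs_mul _ _ (hubd i hi1 (by omega) ω)
            (hubd ℓ (by omega) hℓn ω)) (hSgbd _ _)
      _ = ((ℓ : ℝ) - 1) := by
          rw [Finset.sum_const, Nat.card_Icc, nsmul_eq_mul, mul_one]
          have : ℓ - 1 + 1 - 1 = ℓ - 1 := by omega
          rw [this, Nat.cast_sub (by omega : 1 ≤ ℓ), Nat.cast_one]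
  -- conditional expectation step
  have hσint : ∀ ℓ, Integrable (σsq ℓ) P := fun ℓ => by
    rw [hσsq]
    exact integrable_condExp
  rw [integral_finset_sum _ fun ℓ _ => hσint ℓ]
  have hcond : ∀ ℓ ∈ Finset.Icc 2 n, ∫ ω, σsq ℓ ω ∂P =
      c ^ 2 * (((ℓ : ℝ) - 1) * (lam ^ 2 * ((p : ℝ) - 1))) := by
    intro ℓ hℓ
    obtain ⟨hℓ2, hℓn⟩ := Finset.mem_Icc.mp hℓ
    have hm : 𝔪 ℓ ≤ (inferInstance : MeasurableSpace Ω) := by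
      rw [h𝔪]
      refine iSup_le fun i => iSup_le fun hi => ?_
      obtain ⟨hi1, hi2⟩ := Finset.mem_Icc.mp hi
      exact measurable_iff_comap_le.mp (hXmeas i hi1 (by omega))
    have hYsqint : Integrable (fun ω => Y ℓ ω ^ 2) P := by
      refine hIntBdd _ ((|c| * ((ℓ : ℝ) - 1)) ^ 2) ((hYmeas ℓ hℓ2 hℓn).pow_const 2)
        fun ω => ?_
      rw [abs_pow]
      exact pow_le_pow_left₀ (abs_nonneg _) (hYbd ℓ hℓ2 hℓn ω) 2
    rw [hσsq ℓ, integral_condExp hm]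
    exact hYint ℓ hℓ2 hℓn
  rw [Finset.sum_congr rfl hcond]
  -- final arithmetic
  have hn0 : (0 : ℝ) < (n : ℝ) := by
    have : (2 : ℝ) ≤ (n : ℝ) := by exact_mod_cast hn
    linarith
  have hc2 : c ^ 2 = 2 * ((p : ℝ) - 1) / ((n : ℝ) * Eu2) ^ 2 := by
    rw [hcdef, div_pow, Real.sq_sqrt (by linarith : (0 : ℝ) ≤ 2 * ((p : ℝ) - 1))]
  have hcK : c ^ 2 * (lam ^ 2 * ((p : ℝ) - 1)) = 2 / (n : ℝ) ^ 2 := by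
    rw [hc2, hEu2lam]
    have h1 : lam ≠ 0 := ne_of_gt hlampos
    have h2 : ((p : ℝ) - 1) ≠ 0 := ne_of_gt hp1pos
    have h3 : (n : ℝ) ≠ 0 := ne_of_gt hn0
    field_simp
  calc ∑ ℓ ∈ Finset.Icc 2 n, c ^ 2 * (((ℓ : ℝ) - 1) * (lam ^ 2 * ((p : ℝ) - 1)))
      = ∑ ℓ ∈ Finset.Icc 2 n, (2 / (n : ℝ) ^ 2) * ((ℓ : ℝ) - 1) := by
        refine Finset.sum_congr rfl fun ℓ _ => ?_
        rw [← hcK]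
        ring
    _ = (2 / (n : ℝ) ^ 2) * ∑ ℓ ∈ Finset.Icc 2 n, ((ℓ : ℝ) - 1) := by
        rw [Finset.mul_sum]
    _ = (2 / (n : ℝ) ^ 2) * ((n : ℝ) * ((n : ℝ) - 1) / 2) := by
        rw [gauss_sum_Icc n hn1]
    _ = ((n : ℝ) - 1) / n := by
        field_simp
end

section
/- Fourth moment identity: in the fixed-sample setup, for every 2 ≤ ℓ ≤ n, E[ ( Σ_{i=1}^{ℓ−1} u_i u_ℓ ⟨S_i,S_ℓ⟩ )⁴ ] = (3(ℓ−1)/(p²−1)) (E[u₁⁴])² + (3(ℓ−1)(ℓ−2)/(p−1)²) E[u₁⁴] (E[u₁²])². -/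
open MeasureTheory ProbabilityTheory Filter
open scoped BigOperators RealInnerProductSpace

set_option maxHeartbeats 1000000

section Aux

lemma bddInt {α : Type*} [MeasurableSpace α] {ν : Measure α} [IsFiniteMeasure ν] {f : α → ℝ}
    (hf : AEStronglyMeasurable f ν) {C : ℝ} (h : ∀ x, |f x| ≤ C) : Integrable f ν :=
  ⟨hf, HasFiniteIntegral.of_bounded (C := C) (ae_of_all _ (fun x => by simpa using h x))⟩

variable {p : ℕ}

noncomputable def ufn (θ x : EuclideanSpace ℝ (Fin p)) : ℝ := Real.sqrt (1 - ⟪x, θ⟫ ^ 2)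

lemma ufn_nonneg (θ x : EuclideanSpace ℝ (Fin p)) : 0 ≤ ufn θ x := Real.sqrt_nonneg _

lemma ufn_le_one (θ x : EuclideanSpace ℝ (Fin p)) : ufn θ x ≤ 1 := by
  unfold ufn
  exact Real.sqrt_le_one.mpr (by nlinarith [sq_nonneg (⟪x, θ⟫ : ℝ)])

lemma ufn_abs_le_one (θ x : EuclideanSpace ℝ (Fin p)) : |ufn θ x| ≤ 1 := by
  rw [abs_of_nonneg (ufn_nonneg θ x)]; exact ufn_le_one θ x

lemma ufn_meas (θ : EuclideanSpace ℝ (Fin p)) : Measurable (ufn θ) :=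
  (Real.continuous_sqrt.measurable).comp
    (measurable_const.sub ((Measurable.inner_const (c := θ) measurable_id).pow_const 2))

variable {θ : EuclideanSpace ℝ (Fin p)} {μ : Measure (EuclideanSpace ℝ (Fin p))}
  {Sg : EuclideanSpace ℝ (Fin p) → EuclideanSpace ℝ (Fin p)}

lemma inner_O (O : EuclideanSpace ℝ (Fin p) ≃ₗᵢ[ℝ] EuclideanSpace ℝ (Fin p)) (hO : O θ = θ)
    (x : EuclideanSpace ℝ (Fin p)) : ⟪O x, θ⟫ = ⟪x, θ⟫ := by
  conv_lhs => rw [← hO]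
  exact O.inner_map_map x θ

lemma inner_O_symm (O : EuclideanSpace ℝ (Fin p) ≃ₗᵢ[ℝ] EuclideanSpace ℝ (Fin p))
    (a v : EuclideanSpace ℝ (Fin p)) : ⟪O a, v⟫ = ⟪a, O.symm v⟫ := by
  conv_lhs => rw [← O.apply_symm_apply v]
  exact O.inner_map_map a (O.symm v)

lemma Sg_map (hθ : ‖θ‖ = 1)
    (hSg : ∀ x, x - ⟪x, θ⟫ • θ ≠ 0 → Sg x = ‖x - ⟪x, θ⟫ • θ‖⁻¹ • (x - ⟪x, θ⟫ • θ))
    (O : EuclideanSpace ℝ (Fin p) ≃ₗᵢ[ℝ] EuclideanSpace ℝ (Fin p)) (hO : O θ = θ)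
    {x : EuclideanSpace ℝ (Fin p)} (hx : ‖x‖ = 1) (hux : ufn θ x ≠ 0) :
    Sg (O x) = O (Sg x) := by
  have hsq : (⟪x, θ⟫ : ℝ) ^ 2 < 1 := by
    by_contra h
    push_neg at h
    exact hux (Real.sqrt_eq_zero'.mpr (by linarith))
  have hne : x - ⟪x, θ⟫ • θ ≠ 0 := by
    intro h
    rw [sub_eq_zero] at h
    have h1 := congrArg norm h
    rw [norm_smul, hθ, mul_one, hx, Real.norm_eq_abs] at h1
    nlinarith [sq_abs (⟪x, θ⟫ : ℝ)]
  have hkey : O x - ⟪O x, θ⟫ • θ = O (x - ⟪x, θ⟫ • θ) := by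
    rw [inner_O O hO, map_sub, O.map_smul, hO]
  have hneO : O x - ⟪O x, θ⟫ • θ ≠ 0 := by
    rw [hkey]
    intro h
    apply hne
    have h2 := congrArg O.symm h
    simpa using h2
  rw [hSg _ hneO, hSg _ hne, hkey, O.norm_map, O.map_smul]

lemma transport (hrot : RotSym θ μ) (hsph : ∀ᵐ x ∂μ, ‖x‖ = 1) (hθ : ‖θ‖ = 1)
    (hSgmeas : Measurable Sg)
    (hSg : ∀ x, x - ⟪x, θ⟫ • θ ≠ 0 → Sg x = ‖x - ⟪x, θ⟫ • θ‖⁻¹ • (x - ⟪x, θ⟫ • θ))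
    (O : EuclideanSpace ℝ (Fin p) ≃ₗᵢ[ℝ] EuclideanSpace ℝ (Fin p)) (hO : O θ = θ)
    (m k j : ℕ) (hm : 1 ≤ m) (v w : EuclideanSpace ℝ (Fin p)) :
    ∫ x, ufn θ x ^ m * (⟪Sg x, v⟫ ^ k * ⟪Sg x, w⟫ ^ j) ∂μ
      = ∫ x, ufn θ x ^ m * (⟪Sg x, O.symm v⟫ ^ k * ⟪Sg x, O.symm w⟫ ^ j) ∂μ := by
  have hOmeas : Measurable (O : EuclideanSpace ℝ (Fin p) → EuclideanSpace ℝ (Fin p)) :=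
    O.continuous.measurable
  have hint : ∀ a b : EuclideanSpace ℝ (Fin p),
      Measurable fun x => ufn θ x ^ m * (⟪Sg x, a⟫ ^ k * ⟪Sg x, b⟫ ^ j) := fun a b =>
    ((ufn_meas θ).pow_const m).mul
      (((hSgmeas.inner_const).pow_const k).mul ((hSgmeas.inner_const).pow_const j))
  calc ∫ x, ufn θ x ^ m * (⟪Sg x, v⟫ ^ k * ⟪Sg x, w⟫ ^ j) ∂μ
      = ∫ x, ufn θ x ^ m * (⟪Sg x, v⟫ ^ k * ⟪Sg x, w⟫ ^ j) ∂(Measure.map O μ) := by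
        rw [hrot O hO]
    _ = ∫ x, ufn θ (O x) ^ m * (⟪Sg (O x), v⟫ ^ k * ⟪Sg (O x), w⟫ ^ j) ∂μ :=
        integral_map hOmeas.aemeasurable (hint v w).aestronglyMeasurable
    _ = ∫ x, ufn θ x ^ m * (⟪Sg x, O.symm v⟫ ^ k * ⟪Sg x, O.symm w⟫ ^ j) ∂μ := by
        refine integral_congr_ae (hsph.mono fun x hx => ?_)
        dsimp only
        have hufn : ufn θ (O x) = ufn θ x := by unfold ufn; rw [inner_O O hO]
        by_cases hux : ufn θ x = 0
        · rw [hufn, hux, zero_pow (by omega), zero_mul, zero_mul]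
        · rw [hufn, Sg_map hθ hSg O hO hx hux, inner_O_symm, inner_O_symm]

end Aux

section Moments

variable {p : ℕ} {θ : EuclideanSpace ℝ (Fin p)} {μ : Measure (EuclideanSpace ℝ (Fin p))}
  {Sg : EuclideanSpace ℝ (Fin p) → EuclideanSpace ℝ (Fin p)}

lemma measJ (hSgmeas : Measurable Sg) (v w : EuclideanSpace ℝ (Fin p)) (m k j : ℕ) :
    Measurable fun x => ufn θ x ^ m * (⟪Sg x, v⟫ ^ k * ⟪Sg x, w⟫ ^ j) :=
  ((ufn_meas θ).pow_const m).mul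
    (((hSgmeas.inner_const).pow_const k).mul ((hSgmeas.inner_const).pow_const j))

lemma bndJ (hSgunit : ∀ x, ‖Sg x‖ = 1) {v w : EuclideanSpace ℝ (Fin p)}
    (hv : ‖v‖ ≤ 1) (hw : ‖w‖ ≤ 1) (m k j : ℕ) (x : EuclideanSpace ℝ (Fin p)) :
    |ufn θ x ^ m * (⟪Sg x, v⟫ ^ k * ⟪Sg x, w⟫ ^ j)| ≤ 1 := by
  have hbv : |⟪Sg x, v⟫| ≤ 1 := by
    calc |⟪Sg x, v⟫| ≤ ‖Sg x‖ * ‖v‖ := abs_real_inner_le_norm _ _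
    _ ≤ 1 := by rw [hSgunit]; simpa using hv
  have hbw : |⟪Sg x, w⟫| ≤ 1 := by
    calc |⟪Sg x, w⟫| ≤ ‖Sg x‖ * ‖w‖ := abs_real_inner_le_norm _ _
    _ ≤ 1 := by rw [hSgunit]; simpa using hw
  rw [abs_mul, abs_mul, abs_pow, abs_pow, abs_pow]
  have h1 : |ufn θ x| ^ m ≤ 1 := pow_le_one₀ (abs_nonneg _) (ufn_abs_le_one θ x)
  have h2 : |⟪Sg x, v⟫| ^ k ≤ 1 := pow_le_one₀ (abs_nonneg _) hbv
  have h3 : |⟪Sg x, w⟫| ^ j ≤ 1 := pow_le_one₀ (abs_nonneg _) hbw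
  have := mul_le_one₀ h2 (pow_nonneg (abs_nonneg _) _) h3
  exact mul_le_one₀ h1 (mul_nonneg (pow_nonneg (abs_nonneg _) _)
    (pow_nonneg (abs_nonneg _) _)) this

lemma measJ2 (hSgmeas : Measurable Sg) (v : EuclideanSpace ℝ (Fin p)) (m k : ℕ) :
    Measurable fun x => ufn θ x ^ m * ⟪Sg x, v⟫ ^ k :=
  ((ufn_meas θ).pow_const m).mul ((hSgmeas.inner_const).pow_const k)

lemma bndJ2 (hSgunit : ∀ x, ‖Sg x‖ = 1) {v : EuclideanSpace ℝ (Fin p)}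
    (hv : ‖v‖ ≤ 1) (m k : ℕ) (x : EuclideanSpace ℝ (Fin p)) :
    |ufn θ x ^ m * ⟪Sg x, v⟫ ^ k| ≤ 1 := by
  simpa using bndJ (θ := θ) hSgunit hv hv m k 0 x

lemma Jodd (hrot : RotSym θ μ) (hsph : ∀ᵐ x ∂μ, ‖x‖ = 1) (hθ : ‖θ‖ = 1)
    (hSgmeas : Measurable Sg)
    (hSg : ∀ x, x - ⟪x, θ⟫ • θ ≠ 0 → Sg x = ‖x - ⟪x, θ⟫ • θ‖⁻¹ • (x - ⟪x, θ⟫ • θ))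
    {v w : EuclideanSpace ℝ (Fin p)} (hwθ : ⟪w, θ⟫ = 0) (hvw : ⟪v, w⟫ = 0)
    {m k j : ℕ} (hm : 1 ≤ m) (hj : Odd j) :
    ∫ x, ufn θ x ^ m * (⟪Sg x, v⟫ ^ k * ⟪Sg x, w⟫ ^ j) ∂μ = 0 := by
  set O := Submodule.reflection (ℝ ∙ w)ᗮ with hOdef
  have hOθ : O θ = θ :=
    Submodule.reflection_mem_subspace_eq_self
      (Submodule.mem_orthogonal_singleton_iff_inner_right.mpr hwθ)
  have h1 := transport hrot hsph hθ hSgmeas hSg O hOθ m k j hm v w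
  have hsv : O.symm v = v := by
    rw [hOdef, Submodule.reflection_symm]
    exact Submodule.reflection_mem_subspace_eq_self
      (Submodule.mem_orthogonal_singleton_iff_inner_right.mpr
        (by rw [real_inner_comm]; exact hvw))
  have hsw : O.symm w = -w := by
    rw [hOdef, Submodule.reflection_symm]
    exact Submodule.reflection_orthogonalComplement_singleton_eq_neg w
  rw [hsv, hsw] at h1
  simp only [inner_neg_right, hj.neg_pow, mul_neg, integral_neg] at h1
  linarith

lemma Jswap (hrot : RotSym θ μ) (hsph : ∀ᵐ x ∂μ, ‖x‖ = 1) (hθ : ‖θ‖ = 1)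
    (hSgmeas : Measurable Sg)
    (hSg : ∀ x, x - ⟪x, θ⟫ • θ ≠ 0 → Sg x = ‖x - ⟪x, θ⟫ • θ‖⁻¹ • (x - ⟪x, θ⟫ • θ))
    {v w : EuclideanSpace ℝ (Fin p)} (hv : ‖v‖ = 1) (hw : ‖w‖ = 1)
    (hvθ : ⟪v, θ⟫ = 0) (hwθ : ⟪w, θ⟫ = 0) (m k : ℕ) (hm : 1 ≤ m) :
    ∫ x, ufn θ x ^ m * ⟪Sg x, v⟫ ^ k ∂μ = ∫ x, ufn θ x ^ m * ⟪Sg x, w⟫ ^ k ∂μ := by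
  set O := Submodule.reflection (ℝ ∙ (v - w))ᗮ with hOdef
  have hOθ : O θ = θ :=
    Submodule.reflection_mem_subspace_eq_self
      (Submodule.mem_orthogonal_singleton_iff_inner_right.mpr
        (by rw [inner_sub_left, hvθ, hwθ, sub_zero]))
  have h1 := transport hrot hsph hθ hSgmeas hSg O hOθ m k 0 hm v v
  have hsv : O.symm v = w := by
    rw [hOdef, Submodule.reflection_symm]
    exact Submodule.reflection_sub (hv.trans hw.symm)
  rw [hsv] at h1
  simpa only [pow_zero, mul_one] using h1

end Moments

section Moments2

variable {p : ℕ} {θ : EuclideanSpace ℝ (Fin p)} {μ : Measure (EuclideanSpace ℝ (Fin p))}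
  {Sg : EuclideanSpace ℝ (Fin p) → EuclideanSpace ℝ (Fin p)}

lemma exists_onb (hθ : ‖θ‖ = 1) :
    ∃ e : Fin (p - 1) → EuclideanSpace ℝ (Fin p),
      (∀ i, ‖e i‖ = 1) ∧ (∀ i j, i ≠ j → ⟪e i, e j⟫ = 0) ∧ (∀ i, ⟪e i, θ⟫ = 0) ∧
      (∀ y, ⟪y, θ⟫ = 0 → ∑ i, ⟪y, e i⟫ ^ 2 = ‖y‖ ^ 2) := by
  have hθ0 : θ ≠ 0 := by intro h; rw [h] at hθ; simp at hθ
  have hfr : Module.finrank ℝ (EuclideanSpace ℝ (Fin p)) = p := finrank_euclideanSpace_fin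
  by_cases hp1 : p = 0
  · subst hp1
    exact absurd (Subsingleton.elim θ 0) hθ0
  haveI : Fact (Module.finrank ℝ (EuclideanSpace ℝ (Fin p)) = (p - 1) + 1) :=
    ⟨by rw [hfr]; omega⟩
  set K : Submodule ℝ (EuclideanSpace ℝ (Fin p)) := (ℝ ∙ θ)ᗮ with hK
  have hdim : Module.finrank ℝ K = p - 1 := Submodule.finrank_orthogonal_span_singleton hθ0
  let b0 := stdOrthonormalBasis ℝ K
  let b : OrthonormalBasis (Fin (p - 1)) ℝ K := b0.reindex (finCongr hdim)
  refine ⟨fun i => (b i : EuclideanSpace ℝ (Fin p)), ?_, ?_, ?_, ?_⟩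
  · intro i
    have h1 := b.orthonormal.1 i
    have h2 : ‖(b i : EuclideanSpace ℝ (Fin p))‖ = ‖b i‖ := rfl
    dsimp only
    rw [h2, h1]
  · intro i j hij
    have h1 := b.orthonormal.2 hij
    have h2 : (⟪(b i : EuclideanSpace ℝ (Fin p)), (b j : EuclideanSpace ℝ (Fin p))⟫ : ℝ)
        = ⟪b i, b j⟫ := rfl
    dsimp only
    rw [h2, h1]
  · intro i
    exact Submodule.mem_orthogonal_singleton_iff_inner_left.mp (b i).2
  · intro y hy
    have hyK : y ∈ K := Submodule.mem_orthogonal_singleton_iff_inner_left.mpr hy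
    have hpar := b.sum_inner_mul_inner (⟨y, hyK⟩ : K) (⟨y, hyK⟩ : K)
    have h2 : (⟪(⟨y, hyK⟩ : K), (⟨y, hyK⟩ : K)⟫ : ℝ) = ‖y‖ ^ 2 := by
      have h2a : (⟪(⟨y, hyK⟩ : K), (⟨y, hyK⟩ : K)⟫ : ℝ) = ⟪y, y⟫ := rfl
      rw [h2a, real_inner_self_eq_norm_sq]
    rw [h2] at hpar
    dsimp only
    rw [← hpar]
    refine Finset.sum_congr rfl fun i _ => ?_
    have h3 : (⟪(⟨y, hyK⟩ : K), b i⟫ : ℝ) = ⟪y, (b i : EuclideanSpace ℝ (Fin p))⟫ := rfl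
    have h4 : (⟪b i, (⟨y, hyK⟩ : K)⟫ : ℝ) = ⟪(b i : EuclideanSpace ℝ (Fin p)), y⟫ := rfl
    rw [h3, h4, real_inner_comm ((b i : EuclideanSpace ℝ (Fin p))) y]
    ring

lemma Ksum [IsProbabilityMeasure μ] (hp : 2 ≤ p)
    (hrot : RotSym θ μ) (hsph : ∀ᵐ x ∂μ, ‖x‖ = 1) (hθ : ‖θ‖ = 1)
    (hSgmeas : Measurable Sg)
    (hSg : ∀ x, x - ⟪x, θ⟫ • θ ≠ 0 → Sg x = ‖x - ⟪x, θ⟫ • θ‖⁻¹ • (x - ⟪x, θ⟫ • θ))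
    (hSgunit : ∀ x, ‖Sg x‖ = 1) (hSgperp : ∀ x, ⟪Sg x, θ⟫ = 0)
    {v : EuclideanSpace ℝ (Fin p)} (hv : ‖v‖ = 1) (hvθ : ⟪v, θ⟫ = 0)
    (m : ℕ) (hm : 1 ≤ m) :
    ((p : ℝ) - 1) * ∫ x, ufn θ x ^ m * ⟪Sg x, v⟫ ^ 2 ∂μ = ∫ x, ufn θ x ^ m ∂μ := by
  obtain ⟨e, he1, he2, he3, he4⟩ := exists_onb (θ := θ) hθ
  have hswap : ∀ i, ∫ x, ufn θ x ^ m * ⟪Sg x, e i⟫ ^ 2 ∂μ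
      = ∫ x, ufn θ x ^ m * ⟪Sg x, v⟫ ^ 2 ∂μ := fun i =>
    Jswap hrot hsph hθ hSgmeas hSg (he1 i) hv (he3 i) hvθ m 2 hm
  have hsum : ∑ i : Fin (p - 1), ∫ x, ufn θ x ^ m * ⟪Sg x, e i⟫ ^ 2 ∂μ
      = ∫ x, ufn θ x ^ m ∂μ := by
    rw [← integral_finset_sum]
    · refine integral_congr_ae (ae_of_all _ fun x => ?_)
      dsimp only
      rw [← Finset.mul_sum]
      have : ∑ i : Fin (p - 1), ⟪Sg x, e i⟫ ^ 2 = 1 := by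
        rw [he4 (Sg x) (hSgperp x), hSgunit x, one_pow]
      rw [this, mul_one]
    · intro i _
      exact bddInt (measJ2 (θ := θ) hSgmeas (e i) m 2).aestronglyMeasurable
        (C := 1) (bndJ2 hSgunit (le_of_eq (he1 i)) m 2)
  rw [Finset.sum_congr rfl (fun i _ => hswap i)] at hsum
  rw [Finset.sum_const, Finset.card_univ, Fintype.card_fin, nsmul_eq_mul] at hsum
  rw [← hsum]
  congr 1
  have : ((p - 1 : ℕ) : ℝ) = (p : ℝ) - 1 := by
    have : 1 ≤ p := by omega
    push_cast [this]
    ring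
  rw [this]

end Moments2

section Moments3

variable {p : ℕ} {θ : EuclideanSpace ℝ (Fin p)} {μ : Measure (EuclideanSpace ℝ (Fin p))}
  {Sg : EuclideanSpace ℝ (Fin p) → EuclideanSpace ℝ (Fin p)}

lemma K4 [IsProbabilityMeasure μ] (hp : 2 ≤ p)
    (hrot : RotSym θ μ) (hsph : ∀ᵐ x ∂μ, ‖x‖ = 1) (hθ : ‖θ‖ = 1)
    (hSgmeas : Measurable Sg)
    (hSg : ∀ x, x - ⟪x, θ⟫ • θ ≠ 0 → Sg x = ‖x - ⟪x, θ⟫ • θ‖⁻¹ • (x - ⟪x, θ⟫ • θ))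
    (hSgunit : ∀ x, ‖Sg x‖ = 1) (hSgperp : ∀ x, ⟪Sg x, θ⟫ = 0)
    {v : EuclideanSpace ℝ (Fin p)} (hv : ‖v‖ = 1) (hvθ : ⟪v, θ⟫ = 0) :
    ((p : ℝ) - 1) * ((p : ℝ) + 1) * ∫ x, ufn θ x ^ 4 * ⟪Sg x, v⟫ ^ 4 ∂μ
      = 3 * ∫ x, ufn θ x ^ 4 ∂μ := by
  obtain ⟨e, he1, he2, he3, he4⟩ := exists_onb (θ := θ) hθ
  set c := ∫ x, ufn θ x ^ 4 * ⟪Sg x, v⟫ ^ 4 ∂μ with hcdef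
  have hswap4 : ∀ w : EuclideanSpace ℝ (Fin p), ‖w‖ = 1 → ⟪w, θ⟫ = 0 →
      ∫ x, ufn θ x ^ 4 * ⟪Sg x, w⟫ ^ 4 ∂μ = c := fun w hw hwθ =>
    Jswap hrot hsph hθ hSgmeas hSg hw hv hwθ hvθ 4 4 (by norm_num)
  have hD : ∀ i j, i ≠ j →
      (3:ℝ) * ∫ x, ufn θ x ^ 4 * (⟪Sg x, e i⟫ ^ 2 * ⟪Sg x, e j⟫ ^ 2) ∂μ = c := by
    intro i j hij
    have hw12 : (⟪e i, e j⟫ : ℝ) = 0 := he2 i j hij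
    set v' : EuclideanSpace ℝ (Fin p) := (Real.sqrt 2)⁻¹ • (e i + e j) with hv'def
    have hs2 : (0:ℝ) < Real.sqrt 2 := Real.sqrt_pos.mpr (by norm_num)
    have hsq2 : Real.sqrt 2 ^ 2 = 2 := Real.sq_sqrt (by norm_num)
    have hnadd : ‖e i + e j‖ ^ 2 = 2 := by
      rw [norm_add_sq_real, he1 i, he1 j, hw12]; norm_num
    have hv' : ‖v'‖ = 1 := by
      rw [hv'def, norm_smul]
      have h1 : ‖(Real.sqrt 2)⁻¹‖ = (Real.sqrt 2)⁻¹ := by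
        rw [Real.norm_eq_abs, abs_of_pos (by positivity)]
      have h2 : ‖e i + e j‖ = Real.sqrt 2 := by
        nlinarith [norm_nonneg (e i + e j)]
      rw [h1, h2, inv_mul_cancel₀ (ne_of_gt hs2)]
    have hv'θ : (⟪v', θ⟫ : ℝ) = 0 := by
      rw [hv'def, real_inner_smul_left, inner_add_left, he3 i, he3 j]; ring
    have hmain := hswap4 v' hv' hv'θ
    have hexp : ∀ x : EuclideanSpace ℝ (Fin p), ufn θ x ^ 4 * ⟪Sg x, v'⟫ ^ 4
        = (4:ℝ)⁻¹ * (ufn θ x ^ 4 * ⟪Sg x, e i⟫ ^ 4)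
          + ((ufn θ x ^ 4 * (⟪Sg x, e i⟫ ^ 3 * ⟪Sg x, e j⟫ ^ 1))
          + ((3/2 : ℝ) * (ufn θ x ^ 4 * (⟪Sg x, e i⟫ ^ 2 * ⟪Sg x, e j⟫ ^ 2))
          + ((ufn θ x ^ 4 * (⟪Sg x, e i⟫ ^ 1 * ⟪Sg x, e j⟫ ^ 3))
          + (4:ℝ)⁻¹ * (ufn θ x ^ 4 * ⟪Sg x, e j⟫ ^ 4)))) := by
      intro x
      have h1 : (⟪Sg x, v'⟫ : ℝ) = (Real.sqrt 2)⁻¹ * (⟪Sg x, e i⟫ + ⟪Sg x, e j⟫) := by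
        rw [hv'def, real_inner_smul_right, inner_add_right]
      have h2 : ((Real.sqrt 2)⁻¹ : ℝ) ^ 4 = (4:ℝ)⁻¹ := by
        rw [inv_pow, show (4:ℕ) = 2 * 2 from rfl, pow_mul, hsq2]
        norm_num
      rw [h1, mul_pow, h2]; ring
    have I1 : Integrable (fun x => ufn θ x ^ 4 * ⟪Sg x, e i⟫ ^ 4) μ :=
      bddInt (measJ2 (θ := θ) hSgmeas (e i) 4 4).aestronglyMeasurable (C := 1)
        (bndJ2 hSgunit (le_of_eq (he1 i)) 4 4)
    have I5 : Integrable (fun x => ufn θ x ^ 4 * ⟪Sg x, e j⟫ ^ 4) μ :=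
      bddInt (measJ2 (θ := θ) hSgmeas (e j) 4 4).aestronglyMeasurable (C := 1)
        (bndJ2 hSgunit (le_of_eq (he1 j)) 4 4)
    have I2 : Integrable (fun x => ufn θ x ^ 4 * (⟪Sg x, e i⟫ ^ 3 * ⟪Sg x, e j⟫ ^ 1)) μ :=
      bddInt (measJ (θ := θ) hSgmeas (e i) (e j) 4 3 1).aestronglyMeasurable (C := 1)
        (bndJ hSgunit (le_of_eq (he1 i)) (le_of_eq (he1 j)) 4 3 1)
    have I3 : Integrable (fun x => ufn θ x ^ 4 * (⟪Sg x, e i⟫ ^ 2 * ⟪Sg x, e j⟫ ^ 2)) μ :=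
      bddInt (measJ (θ := θ) hSgmeas (e i) (e j) 4 2 2).aestronglyMeasurable (C := 1)
        (bndJ hSgunit (le_of_eq (he1 i)) (le_of_eq (he1 j)) 4 2 2)
    have I4 : Integrable (fun x => ufn θ x ^ 4 * (⟪Sg x, e i⟫ ^ 1 * ⟪Sg x, e j⟫ ^ 3)) μ :=
      bddInt (measJ (θ := θ) hSgmeas (e i) (e j) 4 1 3).aestronglyMeasurable (C := 1)
        (bndJ hSgunit (le_of_eq (he1 i)) (le_of_eq (he1 j)) 4 1 3)
    have hint2 : ∫ x, ufn θ x ^ 4 * (⟪Sg x, e i⟫ ^ 3 * ⟪Sg x, e j⟫ ^ 1) ∂μ = 0 :=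
      Jodd hrot hsph hθ hSgmeas hSg (he3 j) hw12 (by norm_num) (by decide)
    have hint4 : ∫ x, ufn θ x ^ 4 * (⟪Sg x, e i⟫ ^ 1 * ⟪Sg x, e j⟫ ^ 3) ∂μ = 0 :=
      Jodd hrot hsph hθ hSgmeas hSg (he3 j) hw12 (by norm_num) (by decide)
    have e1 : ∫ x, ufn θ x ^ 4 * ⟪Sg x, v'⟫ ^ 4 ∂μ
        = (4:ℝ)⁻¹ * (∫ x, ufn θ x ^ 4 * ⟪Sg x, e i⟫ ^ 4 ∂μ)
          + ((∫ x, ufn θ x ^ 4 * (⟪Sg x, e i⟫ ^ 3 * ⟪Sg x, e j⟫ ^ 1) ∂μ)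
          + ((3/2 : ℝ) * (∫ x, ufn θ x ^ 4 * (⟪Sg x, e i⟫ ^ 2 * ⟪Sg x, e j⟫ ^ 2) ∂μ)
          + ((∫ x, ufn θ x ^ 4 * (⟪Sg x, e i⟫ ^ 1 * ⟪Sg x, e j⟫ ^ 3) ∂μ)
          + (4:ℝ)⁻¹ * (∫ x, ufn θ x ^ 4 * ⟪Sg x, e j⟫ ^ 4 ∂μ)))) := by
      have A1 : Integrable (fun x => (4:ℝ)⁻¹ * (ufn θ x ^ 4 * ⟪Sg x, e i⟫ ^ 4)) μ :=
        I1.const_mul _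
      have A5 : Integrable (fun x => (4:ℝ)⁻¹ * (ufn θ x ^ 4 * ⟪Sg x, e j⟫ ^ 4)) μ :=
        I5.const_mul _
      have T3 : Integrable
          (fun x => (3/2 : ℝ) * (ufn θ x ^ 4 * (⟪Sg x, e i⟫ ^ 2 * ⟪Sg x, e j⟫ ^ 2))) μ :=
        I3.const_mul _
      have S4 : Integrable (fun x => (ufn θ x ^ 4 * (⟪Sg x, e i⟫ ^ 1 * ⟪Sg x, e j⟫ ^ 3))
          + (4:ℝ)⁻¹ * (ufn θ x ^ 4 * ⟪Sg x, e j⟫ ^ 4)) μ := I4.add A5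
      have S3 : Integrable
          (fun x => (3/2 : ℝ) * (ufn θ x ^ 4 * (⟪Sg x, e i⟫ ^ 2 * ⟪Sg x, e j⟫ ^ 2))
          + ((ufn θ x ^ 4 * (⟪Sg x, e i⟫ ^ 1 * ⟪Sg x, e j⟫ ^ 3))
          + (4:ℝ)⁻¹ * (ufn θ x ^ 4 * ⟪Sg x, e j⟫ ^ 4))) μ := T3.add S4
      have S2 : Integrable
          (fun x => (ufn θ x ^ 4 * (⟪Sg x, e i⟫ ^ 3 * ⟪Sg x, e j⟫ ^ 1))
          + ((3/2 : ℝ) * (ufn θ x ^ 4 * (⟪Sg x, e i⟫ ^ 2 * ⟪Sg x, e j⟫ ^ 2))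
          + ((ufn θ x ^ 4 * (⟪Sg x, e i⟫ ^ 1 * ⟪Sg x, e j⟫ ^ 3))
          + (4:ℝ)⁻¹ * (ufn θ x ^ 4 * ⟪Sg x, e j⟫ ^ 4)))) μ := I2.add S3
      rw [integral_congr_ae (ae_of_all _ hexp), integral_add A1 S2, integral_add I2 S3,
          integral_add T3 S4, integral_add I4 A5,
          integral_const_mul, integral_const_mul, integral_const_mul]
    rw [hmain, hswap4 (e i) (he1 i) (he3 i), hswap4 (e j) (he1 j) (he3 j),
        hint2, hint4] at e1
    linarith
  -- main computation
  have hppos : 0 < p - 1 := by omega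
  set i₀ : Fin (p - 1) := ⟨0, hppos⟩ with hi₀
  have hKs := Ksum hp hrot hsph hθ hSgmeas hSg hSgunit hSgperp (he1 i₀) (he3 i₀) 4
    (by norm_num)
  have hsum2 : ∑ j : Fin (p - 1), ∫ x, ufn θ x ^ 4 * (⟪Sg x, e i₀⟫ ^ 2 * ⟪Sg x, e j⟫ ^ 2) ∂μ
      = ∫ x, ufn θ x ^ 4 * ⟪Sg x, e i₀⟫ ^ 2 ∂μ := by
    rw [← integral_finset_sum]
    · refine integral_congr_ae (ae_of_all _ fun x => ?_)
      dsimp only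
      have hre : ∀ j : Fin (p - 1), ufn θ x ^ 4 * (⟪Sg x, e i₀⟫ ^ 2 * ⟪Sg x, e j⟫ ^ 2)
          = (ufn θ x ^ 4 * ⟪Sg x, e i₀⟫ ^ 2) * ⟪Sg x, e j⟫ ^ 2 := fun j => by ring
      rw [Finset.sum_congr rfl (fun j _ => hre j), ← Finset.mul_sum,
          he4 (Sg x) (hSgperp x), hSgunit x, one_pow, mul_one]
    · intro j _
      exact bddInt (measJ (θ := θ) hSgmeas (e i₀) (e j) 4 2 2).aestronglyMeasurable (C := 1)
        (bndJ hSgunit (le_of_eq (he1 i₀)) (le_of_eq (he1 j)) 4 2 2)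
  have hsplit := (Finset.add_sum_erase Finset.univ
    (fun j : Fin (p - 1) => ∫ x, ufn θ x ^ 4 * (⟪Sg x, e i₀⟫ ^ 2 * ⟪Sg x, e j⟫ ^ 2) ∂μ)
    (Finset.mem_univ i₀)).symm
  have hdiag : ∫ x, ufn θ x ^ 4 * (⟪Sg x, e i₀⟫ ^ 2 * ⟪Sg x, e i₀⟫ ^ 2) ∂μ = c := by
    rw [show (fun x => ufn θ x ^ 4 * (⟪Sg x, e i₀⟫ ^ 2 * ⟪Sg x, e i₀⟫ ^ 2))
        = (fun x => ufn θ x ^ 4 * ⟪Sg x, e i₀⟫ ^ 4) from funext fun x => by ring]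
    exact hswap4 (e i₀) (he1 i₀) (he3 i₀)
  have hoff : ∑ j ∈ Finset.univ.erase i₀,
      (∫ x, ufn θ x ^ 4 * (⟪Sg x, e i₀⟫ ^ 2 * ⟪Sg x, e j⟫ ^ 2) ∂μ)
      = ((p : ℝ) - 2) * (c / 3) := by
    rw [Finset.sum_congr rfl (fun j hj => ?_), Finset.sum_const,
        Finset.card_erase_of_mem (Finset.mem_univ i₀), Finset.card_univ, Fintype.card_fin,
        nsmul_eq_mul]
    · congr 1
      have h1 : p - 1 - 1 = p - 2 := by omega
      rw [h1]
      have : 2 ≤ p := hp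
      push_cast [this]
      ring
    · have hne : i₀ ≠ j := fun h => (Finset.mem_erase.mp hj).1 h.symm
      have := hD i₀ j hne
      linarith
  rw [hsplit, hdiag, hoff] at hsum2
  linear_combination 3 * hKs + 3 * ((p:ℝ) - 1) * hsum2

end Moments3

section Peel

variable {Ω : Type*} [MeasurableSpace Ω] {P : Measure Ω} [IsProbabilityMeasure P]

lemma peel {p : ℕ} {μ : Measure (EuclideanSpace ℝ (Fin p))} [IsProbabilityMeasure μ]
    {β : Type*} [MeasurableSpace β]
    {A : Ω → EuclideanSpace ℝ (Fin p)} {Z : Ω → β}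
    (hA : Measurable A) (hZ : Measurable Z) (hlaw : P.map A = μ)
    (hInd : IndepFun A Z P)
    (G : EuclideanSpace ℝ (Fin p) → β → ℝ) (R : β → ℝ)
    (hG : Measurable fun q : EuclideanSpace ℝ (Fin p) × β => G q.1 q.2)
    (hR : Measurable R)
    (hGb : ∀ x w, |G x w| ≤ 1) (hRb : ∀ w, |R w| ≤ 1)
    (c : ℝ) (hc : ∀ w, ∫ x, G x w ∂μ = c) :
    ∫ ω, G (A ω) (Z ω) * R (Z ω) ∂P = c * ∫ ω, R (Z ω) ∂P := by
  set ν := P.map Z with hν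
  haveI : IsProbabilityMeasure ν := Measure.isProbabilityMeasure_map hZ.aemeasurable
  have hmap : P.map (fun ω => (A ω, Z ω)) = μ.prod ν := by
    rw [← hlaw, hν]
    exact (ProbabilityTheory.indepFun_iff_map_prod_eq_prod_map_map
      hA.aemeasurable hZ.aemeasurable).mp hInd
  have hGR : Measurable fun q : EuclideanSpace ℝ (Fin p) × β => G q.1 q.2 * R q.2 :=
    hG.mul (hR.comp measurable_snd)
  have h1 : ∫ ω, G (A ω) (Z ω) * R (Z ω) ∂P
      = ∫ q : EuclideanSpace ℝ (Fin p) × β, G q.1 q.2 * R q.2 ∂(μ.prod ν) := by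
    rw [← hmap, integral_map (hA.prodMk hZ).aemeasurable hGR.aestronglyMeasurable]
  have hint : Integrable (fun q : EuclideanSpace ℝ (Fin p) × β => G q.1 q.2 * R q.2)
      (μ.prod ν) :=
    bddInt hGR.aestronglyMeasurable (C := 1) (fun q => by
      calc |G q.1 q.2 * R q.2| = |G q.1 q.2| * |R q.2| := abs_mul _ _
      _ ≤ 1 := mul_le_one₀ (hGb q.1 q.2) (abs_nonneg _) (hRb q.2))
  rw [h1, integral_prod_symm _ hint]
  have h2 : ∀ w, ∫ x, G x w * R w ∂μ = c * R w := fun w => by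
    rw [integral_mul_const, hc w, mul_comm]
  rw [integral_congr_ae (ae_of_all _ fun w => h2 w), integral_const_mul]
  congr 1
  rw [hν, integral_map hZ.aemeasurable hR.aestronglyMeasurable]

lemma indep13 {ι β : Type*} [mβ : MeasurableSpace β] {f : ι → Ω → β}
    (h : iIndepFun f P) (hf : ∀ i, Measurable (f i))
    (a b c d : ι) (h1 : a ≠ b) (h2 : a ≠ c) (h3 : a ≠ d) :
    IndepFun (f a) (fun ω => (f b ω, f c ω, f d ω)) P := by
  classical
  have hd : Disjoint ({a} : Finset ι) ({b, c, d} : Finset ι) := by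
    simp only [Finset.disjoint_left, Finset.mem_singleton, Finset.mem_insert]
    rintro x rfl
    simp [h1, h2, h3]
  have h0 := h.indepFun_finset {a} {b, c, d} hd hf
  let φ : (({a} : Finset ι) → β) → β := fun v => v ⟨a, by simp⟩
  let ψ : (({b, c, d} : Finset ι) → β) → β × β × β := fun v =>
    (v ⟨b, by simp⟩, v ⟨c, by simp⟩, v ⟨d, by simp⟩)
  have hφ : Measurable φ := measurable_pi_apply _
  have hψ : Measurable ψ := (measurable_pi_apply _).prodMk
    ((measurable_pi_apply _).prodMk (measurable_pi_apply _))
  exact h0.comp hφ hψ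

lemma indep14 {ι β : Type*} [mβ : MeasurableSpace β] {f : ι → Ω → β}
    (h : iIndepFun f P) (hf : ∀ i, Measurable (f i))
    (a b c d e : ι) (h1 : a ≠ b) (h2 : a ≠ c) (h3 : a ≠ d) (h4 : a ≠ e) :
    IndepFun (f a) (fun ω => (f b ω, f c ω, f d ω, f e ω)) P := by
  classical
  have hd : Disjoint ({a} : Finset ι) ({b, c, d, e} : Finset ι) := by
    simp only [Finset.disjoint_left, Finset.mem_singleton, Finset.mem_insert]
    rintro x rfl
    simp [h1, h2, h3, h4]
  have h0 := h.indepFun_finset {a} {b, c, d, e} hd hf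
  let φ : (({a} : Finset ι) → β) → β := fun v => v ⟨a, by simp⟩
  let ψ : (({b, c, d, e} : Finset ι) → β) → β × β × β × β := fun v =>
    (v ⟨b, by simp⟩, v ⟨c, by simp⟩, v ⟨d, by simp⟩, v ⟨e, by simp⟩)
  have hφ : Measurable φ := measurable_pi_apply _
  have hψ : Measurable ψ := (measurable_pi_apply _).prodMk
    ((measurable_pi_apply _).prodMk
      ((measurable_pi_apply _).prodMk (measurable_pi_apply _)))
  exact h0.comp hφ hψ

end Peel

section PatternVals

variable {Ω : Type*} [MeasurableSpace Ω] {P : Measure Ω} [IsProbabilityMeasure P]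
  {p : ℕ} {θ : EuclideanSpace ℝ (Fin p)} {μ : Measure (EuclideanSpace ℝ (Fin p))}
  [IsProbabilityMeasure μ] {Sg : EuclideanSpace ℝ (Fin p) → EuclideanSpace ℝ (Fin p)}

lemma gmeas (hSgmeas : Measurable Sg) :
    Measurable (fun q : EuclideanSpace ℝ (Fin p) × EuclideanSpace ℝ (Fin p) =>
      ufn θ q.1 * ⟪Sg q.1, Sg q.2⟫) :=
  ((ufn_meas θ).comp measurable_fst).mul
    ((hSgmeas.comp measurable_fst).inner (hSgmeas.comp measurable_snd))

lemma gbnd (hSgunit : ∀ x, ‖Sg x‖ = 1) (x z : EuclideanSpace ℝ (Fin p)) :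
    |ufn θ x * ⟪Sg x, Sg z⟫| ≤ 1 := by
  rw [abs_mul]
  refine mul_le_one₀ (ufn_abs_le_one θ x) (abs_nonneg _) ?_
  calc |⟪Sg x, Sg z⟫| ≤ ‖Sg x‖ * ‖Sg z‖ := abs_real_inner_le_norm _ _
  _ ≤ 1 := by rw [hSgunit, hSgunit]; norm_num

lemma gfullbnd (hSgunit : ∀ x, ‖Sg x‖ = 1) (x z : EuclideanSpace ℝ (Fin p)) :
    |ufn θ x * ufn θ z * ⟪Sg x, Sg z⟫| ≤ 1 := by
  rw [show ufn θ x * ufn θ z * ⟪Sg x, Sg z⟫ = ufn θ z * (ufn θ x * ⟪Sg x, Sg z⟫) by ring,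
    abs_mul]
  exact mul_le_one₀ (ufn_abs_le_one θ z) (abs_nonneg _) (gbnd hSgunit x z)

lemma intlaw4 {F : Ω → EuclideanSpace ℝ (Fin p)} (hF : Measurable F) (hlaw : P.map F = μ) :
    ∫ ω, ufn θ (F ω) ^ 4 ∂P = ∫ x, ufn θ x ^ 4 ∂μ := by
  rw [← hlaw, integral_map hF.aemeasurable ((ufn_meas θ).pow_const 4).aestronglyMeasurable]

lemma peel4 {A Zl : Ω → EuclideanSpace ℝ (Fin p)}
    (hA : Measurable A) (hZl : Measurable Zl)
    (hlawA : P.map A = μ) (hlawZ : P.map Zl = μ) (hInd : IndepFun A Zl P)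
    (hSgmeas : Measurable Sg) (hSgunit : ∀ x, ‖Sg x‖ = 1)
    {c4 Eu4 : ℝ}
    (hc4 : ∀ z, ∫ x, (ufn θ x * ⟪Sg x, Sg z⟫) ^ 4 ∂μ = c4)
    (hM4 : ∫ x, ufn θ x ^ 4 ∂μ = Eu4) :
    ∫ ω, (ufn θ (A ω) * ufn θ (Zl ω) * ⟪Sg (A ω), Sg (Zl ω)⟫) ^ 4 ∂P = c4 * Eu4 := by
  have h0 : ∫ ω, (ufn θ (A ω) * ufn θ (Zl ω) * ⟪Sg (A ω), Sg (Zl ω)⟫) ^ 4 ∂P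
      = ∫ ω, (ufn θ (A ω) * ⟪Sg (A ω), Sg (Zl ω)⟫) ^ 4 * (ufn θ (Zl ω)) ^ 4 ∂P :=
    integral_congr_ae (ae_of_all _ fun ω => by ring)
  rw [h0, peel hA hZl hlawA hInd
    (fun x z => (ufn θ x * ⟪Sg x, Sg z⟫) ^ 4) (fun z => ufn θ z ^ 4)
    ((gmeas hSgmeas).pow_const 4) ((ufn_meas θ).pow_const 4)
    (fun x w => by rw [abs_pow]; exact pow_le_one₀ (abs_nonneg _) (gbnd hSgunit x w))
    (fun w => by rw [abs_pow]; exact pow_le_one₀ (abs_nonneg _) (ufn_abs_le_one θ w))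
    c4 hc4, intlaw4 hZl hlawZ, hM4]

lemma peel31 {A B Zl : Ω → EuclideanSpace ℝ (Fin p)}
    (hA : Measurable A) (hB : Measurable B) (hZl : Measurable Zl)
    (hlawB : P.map B = μ)
    (hInd : IndepFun B (fun ω => (A ω, Zl ω)) P)
    (hSgmeas : Measurable Sg) (hSgunit : ∀ x, ‖Sg x‖ = 1)
    (hodd1 : ∀ z, ∫ x, ufn θ x * ⟪Sg x, Sg z⟫ ∂μ = 0) :
    ∫ ω, (ufn θ (A ω) * ufn θ (Zl ω) * ⟪Sg (A ω), Sg (Zl ω)⟫) ^ 3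
      * (ufn θ (B ω) * ufn θ (Zl ω) * ⟪Sg (B ω), Sg (Zl ω)⟫) ∂P = 0 := by
  have hG : Measurable (fun q : EuclideanSpace ℝ (Fin p) ×
      (EuclideanSpace ℝ (Fin p) × EuclideanSpace ℝ (Fin p)) =>
        ufn θ q.1 * ⟪Sg q.1, Sg q.2.2⟫) :=
    ((ufn_meas θ).comp measurable_fst).mul
      ((hSgmeas.comp measurable_fst).inner
        (hSgmeas.comp (measurable_snd.comp measurable_snd)))
  have hR : Measurable (fun w : EuclideanSpace ℝ (Fin p) × EuclideanSpace ℝ (Fin p) =>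
      (ufn θ w.1 * ufn θ w.2 * ⟪Sg w.1, Sg w.2⟫) ^ 3 * ufn θ w.2) :=
    ((((ufn_meas θ).comp measurable_fst).mul ((ufn_meas θ).comp measurable_snd)).mul
      ((hSgmeas.comp measurable_fst).inner (hSgmeas.comp measurable_snd))).pow_const 3
      |>.mul ((ufn_meas θ).comp measurable_snd)
  have hGb : ∀ (x : EuclideanSpace ℝ (Fin p))
      (w : EuclideanSpace ℝ (Fin p) × EuclideanSpace ℝ (Fin p)),
      |ufn θ x * ⟪Sg x, Sg w.2⟫| ≤ 1 := fun x w => gbnd hSgunit x w.2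
  have hRb : ∀ w : EuclideanSpace ℝ (Fin p) × EuclideanSpace ℝ (Fin p),
      |(ufn θ w.1 * ufn θ w.2 * ⟪Sg w.1, Sg w.2⟫) ^ 3 * ufn θ w.2| ≤ 1 := fun w => by
    rw [abs_mul]
    refine mul_le_one₀ ?_ (abs_nonneg _) (ufn_abs_le_one θ w.2)
    rw [abs_pow]
    exact pow_le_one₀ (abs_nonneg _) (gfullbnd hSgunit w.1 w.2)
  have hpeel := peel hB (hA.prodMk hZl) hlawB hInd
    (fun x w => ufn θ x * ⟪Sg x, Sg w.2⟫)
    (fun w => (ufn θ w.1 * ufn θ w.2 * ⟪Sg w.1, Sg w.2⟫) ^ 3 * ufn θ w.2)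
    hG hR hGb hRb 0 (fun w => hodd1 w.2)
  rw [zero_mul] at hpeel
  rw [← hpeel]
  exact integral_congr_ae (ae_of_all _ fun ω => by dsimp only; ring)

lemma peel22 {A B Zl : Ω → EuclideanSpace ℝ (Fin p)}
    (hA : Measurable A) (hB : Measurable B) (hZl : Measurable Zl)
    (hlawA : P.map A = μ) (hlawB : P.map B = μ) (hlawZ : P.map Zl = μ)
    (hInd1 : IndepFun A (fun ω => (B ω, Zl ω)) P) (hInd2 : IndepFun B Zl P)
    (hSgmeas : Measurable Sg) (hSgunit : ∀ x, ‖Sg x‖ = 1)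
    {c2 Eu4 : ℝ}
    (hc2 : ∀ z, ∫ x, (ufn θ x * ⟪Sg x, Sg z⟫) ^ 2 ∂μ = c2)
    (hM4 : ∫ x, ufn θ x ^ 4 ∂μ = Eu4) :
    ∫ ω, (ufn θ (A ω) * ufn θ (Zl ω) * ⟪Sg (A ω), Sg (Zl ω)⟫) ^ 2
      * (ufn θ (B ω) * ufn θ (Zl ω) * ⟪Sg (B ω), Sg (Zl ω)⟫) ^ 2 ∂P
      = c2 * (c2 * Eu4) := by
  have hG2 : Measurable (fun q : EuclideanSpace ℝ (Fin p) × EuclideanSpace ℝ (Fin p) =>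
      (ufn θ q.1 * ⟪Sg q.1, Sg q.2⟫) ^ 2) := (gmeas hSgmeas).pow_const 2
  have hR2 : Measurable (fun z : EuclideanSpace ℝ (Fin p) => ufn θ z ^ 4) :=
    (ufn_meas θ).pow_const 4
  have h2 : ∫ ω, (ufn θ (B ω) * ⟪Sg (B ω), Sg (Zl ω)⟫) ^ 2 * ufn θ (Zl ω) ^ 4 ∂P
      = c2 * Eu4 := by
    rw [peel hB hZl hlawB hInd2 (fun y z => (ufn θ y * ⟪Sg y, Sg z⟫) ^ 2)
      (fun z => ufn θ z ^ 4) hG2 hR2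
      (fun x w => by rw [abs_pow]; exact pow_le_one₀ (abs_nonneg _) (gbnd hSgunit x w))
      (fun w => by rw [abs_pow]; exact pow_le_one₀ (abs_nonneg _) (ufn_abs_le_one θ w))
      c2 hc2, intlaw4 hZl hlawZ, hM4]
  have hG : Measurable (fun q : EuclideanSpace ℝ (Fin p) ×
      (EuclideanSpace ℝ (Fin p) × EuclideanSpace ℝ (Fin p)) =>
        (ufn θ q.1 * ⟪Sg q.1, Sg q.2.2⟫) ^ 2) :=
    (((ufn_meas θ).comp measurable_fst).mul
      ((hSgmeas.comp measurable_fst).inner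
        (hSgmeas.comp (measurable_snd.comp measurable_snd)))).pow_const 2
  have hR : Measurable (fun w : EuclideanSpace ℝ (Fin p) × EuclideanSpace ℝ (Fin p) =>
      (ufn θ w.1 * ⟪Sg w.1, Sg w.2⟫) ^ 2 * ufn θ w.2 ^ 4) :=
    ((gmeas hSgmeas).pow_const 2).mul (((ufn_meas θ).comp measurable_snd).pow_const 4)
  have hpeel1 := peel hA (hB.prodMk hZl) hlawA hInd1
    (fun x w => (ufn θ x * ⟪Sg x, Sg w.2⟫) ^ 2)
    (fun w => (ufn θ w.1 * ⟪Sg w.1, Sg w.2⟫) ^ 2 * ufn θ w.2 ^ 4)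
    hG hR
    (fun x w => by rw [abs_pow]; exact pow_le_one₀ (abs_nonneg _) (gbnd hSgunit x w.2))
    (fun w => by
      rw [abs_mul, abs_pow, abs_pow]
      exact mul_le_one₀ (pow_le_one₀ (abs_nonneg _) (gbnd hSgunit w.1 w.2))
        (pow_nonneg (abs_nonneg _) _)
        (pow_le_one₀ (abs_nonneg _) (ufn_abs_le_one θ w.2)))
    c2 (fun w => hc2 w.2)
  have hfinal : ∫ ω, (ufn θ (A ω) * ⟪Sg (A ω), Sg (Zl ω)⟫) ^ 2
      * ((ufn θ (B ω) * ⟪Sg (B ω), Sg (Zl ω)⟫) ^ 2 * ufn θ (Zl ω) ^ 4) ∂P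
      = c2 * (c2 * Eu4) := by
    rw [hpeel1]
    exact congrArg (fun t => c2 * t) h2
  rw [← hfinal]
  exact integral_congr_ae (ae_of_all _ fun ω => by ring)

lemma peel211 {A B C Zl : Ω → EuclideanSpace ℝ (Fin p)}
    (hA : Measurable A) (hB : Measurable B) (hC : Measurable C) (hZl : Measurable Zl)
    (hlawC : P.map C = μ)
    (hInd : IndepFun C (fun ω => (A ω, B ω, Zl ω)) P)
    (hSgmeas : Measurable Sg) (hSgunit : ∀ x, ‖Sg x‖ = 1)
    (hodd1 : ∀ z, ∫ x, ufn θ x * ⟪Sg x, Sg z⟫ ∂μ = 0) :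
    ∫ ω, (ufn θ (A ω) * ufn θ (Zl ω) * ⟪Sg (A ω), Sg (Zl ω)⟫) ^ 2
      * (ufn θ (B ω) * ufn θ (Zl ω) * ⟪Sg (B ω), Sg (Zl ω)⟫)
      * (ufn θ (C ω) * ufn θ (Zl ω) * ⟪Sg (C ω), Sg (Zl ω)⟫) ∂P = 0 := by
  have hG : Measurable (fun q : EuclideanSpace ℝ (Fin p) ×
      (EuclideanSpace ℝ (Fin p) × EuclideanSpace ℝ (Fin p) × EuclideanSpace ℝ (Fin p)) =>
        ufn θ q.1 * ⟪Sg q.1, Sg q.2.2.2⟫) :=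
    ((ufn_meas θ).comp measurable_fst).mul
      ((hSgmeas.comp measurable_fst).inner
        (hSgmeas.comp ((measurable_snd.comp measurable_snd).comp measurable_snd)))
  have hmz : Measurable (fun w : EuclideanSpace ℝ (Fin p) × EuclideanSpace ℝ (Fin p)
      × EuclideanSpace ℝ (Fin p) => w.2.2) := measurable_snd.comp measurable_snd
  have hm1 : Measurable (fun w : EuclideanSpace ℝ (Fin p) × EuclideanSpace ℝ (Fin p)
      × EuclideanSpace ℝ (Fin p) =>
      ufn θ w.1 * ufn θ w.2.2 * ⟪Sg w.1, Sg w.2.2⟫) :=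
    (((ufn_meas θ).comp measurable_fst).mul ((ufn_meas θ).comp hmz)).mul
      ((hSgmeas.comp measurable_fst).inner (hSgmeas.comp hmz))
  have hm2 : Measurable (fun w : EuclideanSpace ℝ (Fin p) × EuclideanSpace ℝ (Fin p)
      × EuclideanSpace ℝ (Fin p) =>
      ufn θ w.2.1 * ufn θ w.2.2 * ⟪Sg w.2.1, Sg w.2.2⟫) :=
    (((ufn_meas θ).comp (measurable_fst.comp measurable_snd)).mul
      ((ufn_meas θ).comp hmz)).mul
      ((hSgmeas.comp (measurable_fst.comp measurable_snd)).inner (hSgmeas.comp hmz))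
  have hR : Measurable (fun w : EuclideanSpace ℝ (Fin p) × EuclideanSpace ℝ (Fin p)
      × EuclideanSpace ℝ (Fin p) =>
      (ufn θ w.1 * ufn θ w.2.2 * ⟪Sg w.1, Sg w.2.2⟫) ^ 2
        * (ufn θ w.2.1 * ufn θ w.2.2 * ⟪Sg w.2.1, Sg w.2.2⟫) * ufn θ w.2.2) :=
    ((hm1.pow_const 2).mul hm2).mul ((ufn_meas θ).comp hmz)
  have hRb : ∀ w : EuclideanSpace ℝ (Fin p) × EuclideanSpace ℝ (Fin p)
      × EuclideanSpace ℝ (Fin p),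
      |(ufn θ w.1 * ufn θ w.2.2 * ⟪Sg w.1, Sg w.2.2⟫) ^ 2
        * (ufn θ w.2.1 * ufn θ w.2.2 * ⟪Sg w.2.1, Sg w.2.2⟫) * ufn θ w.2.2| ≤ 1 := by
    intro w
    rw [abs_mul, abs_mul, abs_pow]
    refine mul_le_one₀ (mul_le_one₀ ?_ (abs_nonneg _) ?_) (abs_nonneg _)
      (ufn_abs_le_one θ w.2.2)
    · exact pow_le_one₀ (abs_nonneg _) (gfullbnd hSgunit w.1 w.2.2)
    · exact gfullbnd hSgunit w.2.1 w.2.2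
  have hpeel := peel hC (hA.prodMk (hB.prodMk hZl)) hlawC hInd
    (fun x w => ufn θ x * ⟪Sg x, Sg w.2.2⟫)
    (fun w => (ufn θ w.1 * ufn θ w.2.2 * ⟪Sg w.1, Sg w.2.2⟫) ^ 2
      * (ufn θ w.2.1 * ufn θ w.2.2 * ⟪Sg w.2.1, Sg w.2.2⟫) * ufn θ w.2.2)
    hG hR (fun x w => gbnd hSgunit x w.2.2) hRb 0 (fun w => hodd1 w.2.2)
  rw [zero_mul] at hpeel
  rw [← hpeel]
  exact integral_congr_ae (ae_of_all _ fun ω => by dsimp only; ring)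

lemma peel1111 {A B C D Zl : Ω → EuclideanSpace ℝ (Fin p)}
    (hA : Measurable A) (hB : Measurable B) (hC : Measurable C) (hD : Measurable D)
    (hZl : Measurable Zl) (hlawA : P.map A = μ)
    (hInd : IndepFun A (fun ω => (B ω, C ω, D ω, Zl ω)) P)
    (hSgmeas : Measurable Sg) (hSgunit : ∀ x, ‖Sg x‖ = 1)
    (hodd1 : ∀ z, ∫ x, ufn θ x * ⟪Sg x, Sg z⟫ ∂μ = 0) :
    ∫ ω, (ufn θ (A ω) * ufn θ (Zl ω) * ⟪Sg (A ω), Sg (Zl ω)⟫)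
      * (ufn θ (B ω) * ufn θ (Zl ω) * ⟪Sg (B ω), Sg (Zl ω)⟫)
      * (ufn θ (C ω) * ufn θ (Zl ω) * ⟪Sg (C ω), Sg (Zl ω)⟫)
      * (ufn θ (D ω) * ufn θ (Zl ω) * ⟪Sg (D ω), Sg (Zl ω)⟫) ∂P = 0 := by
  have hmz : Measurable (fun w : EuclideanSpace ℝ (Fin p) × EuclideanSpace ℝ (Fin p)
      × EuclideanSpace ℝ (Fin p) × EuclideanSpace ℝ (Fin p) => w.2.2.2) :=
    (measurable_snd.comp measurable_snd).comp measurable_snd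
  have hG : Measurable (fun q : EuclideanSpace ℝ (Fin p) ×
      (EuclideanSpace ℝ (Fin p) × EuclideanSpace ℝ (Fin p) × EuclideanSpace ℝ (Fin p)
        × EuclideanSpace ℝ (Fin p)) => ufn θ q.1 * ⟪Sg q.1, Sg q.2.2.2.2⟫) :=
    ((ufn_meas θ).comp measurable_fst).mul
      ((hSgmeas.comp measurable_fst).inner (hSgmeas.comp (hmz.comp measurable_snd)))
  have hm1 : Measurable (fun w : EuclideanSpace ℝ (Fin p) × EuclideanSpace ℝ (Fin p)
      × EuclideanSpace ℝ (Fin p) × EuclideanSpace ℝ (Fin p) =>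
      ufn θ w.1 * ufn θ w.2.2.2 * ⟪Sg w.1, Sg w.2.2.2⟫) :=
    (((ufn_meas θ).comp measurable_fst).mul ((ufn_meas θ).comp hmz)).mul
      ((hSgmeas.comp measurable_fst).inner (hSgmeas.comp hmz))
  have hm2 : Measurable (fun w : EuclideanSpace ℝ (Fin p) × EuclideanSpace ℝ (Fin p)
      × EuclideanSpace ℝ (Fin p) × EuclideanSpace ℝ (Fin p) =>
      ufn θ w.2.1 * ufn θ w.2.2.2 * ⟪Sg w.2.1, Sg w.2.2.2⟫) :=
    (((ufn_meas θ).comp (measurable_fst.comp measurable_snd)).mul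
      ((ufn_meas θ).comp hmz)).mul
      ((hSgmeas.comp (measurable_fst.comp measurable_snd)).inner (hSgmeas.comp hmz))
  have hm3 : Measurable (fun w : EuclideanSpace ℝ (Fin p) × EuclideanSpace ℝ (Fin p)
      × EuclideanSpace ℝ (Fin p) × EuclideanSpace ℝ (Fin p) =>
      ufn θ w.2.2.1 * ufn θ w.2.2.2 * ⟪Sg w.2.2.1, Sg w.2.2.2⟫) :=
    (((ufn_meas θ).comp ((measurable_fst.comp measurable_snd).comp measurable_snd)).mul
      ((ufn_meas θ).comp hmz)).mul
      ((hSgmeas.comp ((measurable_fst.comp measurable_snd).comp measurable_snd)).inner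
        (hSgmeas.comp hmz))
  have hR : Measurable (fun w : EuclideanSpace ℝ (Fin p) × EuclideanSpace ℝ (Fin p)
      × EuclideanSpace ℝ (Fin p) × EuclideanSpace ℝ (Fin p) =>
      (ufn θ w.1 * ufn θ w.2.2.2 * ⟪Sg w.1, Sg w.2.2.2⟫)
        * (ufn θ w.2.1 * ufn θ w.2.2.2 * ⟪Sg w.2.1, Sg w.2.2.2⟫)
        * (ufn θ w.2.2.1 * ufn θ w.2.2.2 * ⟪Sg w.2.2.1, Sg w.2.2.2⟫)
        * ufn θ w.2.2.2) :=
    (((hm1.mul hm2).mul hm3)).mul ((ufn_meas θ).comp hmz)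
  have hRb : ∀ w : EuclideanSpace ℝ (Fin p) × EuclideanSpace ℝ (Fin p)
      × EuclideanSpace ℝ (Fin p) × EuclideanSpace ℝ (Fin p),
      |(ufn θ w.1 * ufn θ w.2.2.2 * ⟪Sg w.1, Sg w.2.2.2⟫)
        * (ufn θ w.2.1 * ufn θ w.2.2.2 * ⟪Sg w.2.1, Sg w.2.2.2⟫)
        * (ufn θ w.2.2.1 * ufn θ w.2.2.2 * ⟪Sg w.2.2.1, Sg w.2.2.2⟫)
        * ufn θ w.2.2.2| ≤ 1 := by
    intro w
    rw [abs_mul, abs_mul, abs_mul]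
    refine mul_le_one₀ (mul_le_one₀ (mul_le_one₀ ?_ (abs_nonneg _) ?_) (abs_nonneg _) ?_)
      (abs_nonneg _) (ufn_abs_le_one θ w.2.2.2)
    · exact gfullbnd hSgunit w.1 w.2.2.2
    · exact gfullbnd hSgunit w.2.1 w.2.2.2
    · exact gfullbnd hSgunit w.2.2.1 w.2.2.2
  have hpeel := peel hA (hB.prodMk (hC.prodMk (hD.prodMk hZl))) hlawA hInd
    (fun x w => ufn θ x * ⟪Sg x, Sg w.2.2.2⟫)
    (fun w => (ufn θ w.1 * ufn θ w.2.2.2 * ⟪Sg w.1, Sg w.2.2.2⟫)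
      * (ufn θ w.2.1 * ufn θ w.2.2.2 * ⟪Sg w.2.1, Sg w.2.2.2⟫)
      * (ufn θ w.2.2.1 * ufn θ w.2.2.2 * ⟪Sg w.2.2.1, Sg w.2.2.2⟫)
      * ufn θ w.2.2.2)
    hG hR (fun x w => gbnd hSgunit x w.2.2.2) hRb 0 (fun w => hodd1 w.2.2.2)
  rw [zero_mul] at hpeel
  rw [← hpeel]
  exact integral_congr_ae (ae_of_all _ fun ω => by dsimp only; ring)

end PatternVals

section CombHelp

lemma sum_ite_eq_of_mem {s : Finset ℕ} {b : ℕ} (hb : b ∈ s) (c : ℝ) :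
    (∑ m ∈ s, if b = m then c else 0) = c := by
  rw [Finset.sum_ite_eq]; simp [hb]

lemma sum_ite_ne_of_mem {s : Finset ℕ} {i : ℕ} (hi : i ∈ s) (c : ℝ) :
    (∑ k ∈ s, if i = k then 0 else c) = (s.card : ℝ) * c - c := by
  have h : ∀ k ∈ s, (if i = k then 0 else c) = c - (if i = k then c else 0) := by
    intro k _; by_cases h : i = k <;> simp [h]
  rw [Finset.sum_congr rfl h, Finset.sum_sub_distrib, Finset.sum_const,
    sum_ite_eq_of_mem hi, nsmul_eq_mul]

end CombHelp


/-- Fourth moment identity: in the fixed-sample setup, for `2 ≤ ℓ ≤ n`,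
`E[(Σ_{i=1}^{ℓ−1} uᵢu_ℓ⟨Sᵢ,S_ℓ⟩)⁴] = (3(ℓ−1)/(p²−1))(E[u₁⁴])²
  + (3(ℓ−1)(ℓ−2)/(p−1)²)E[u₁⁴](E[u₁²])²`. -/
theorem statement_13
    {Ω : Type*} [MeasurableSpace Ω] (P : Measure Ω) [IsProbabilityMeasure P]
    (p n : ℕ) (hp : 2 ≤ p) (hn : 2 ≤ n)
    (θ : EuclideanSpace ℝ (Fin p)) (hθ : ‖θ‖ = 1)
    -- the observations `X i`, `1 ≤ i ≤ n`
    (X : ℕ → Ω → EuclideanSpace ℝ (Fin p))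
    (hXmeas : ∀ i, 1 ≤ i → i ≤ n → Measurable (X i))
    (hXsph : ∀ i, 1 ≤ i → i ≤ n → ∀ ω, ‖X i ω‖ = 1)
    -- i.i.d. observations with common rotationally symmetric distribution about `θ`
    (hXindep : iIndepFun
      (fun i : Fin n => X ((i : ℕ) + 1)) P)
    (hXid : ∀ i, 1 ≤ i → i ≤ n → Measure.map (X i) P = Measure.map (X 1) P)
    (hXrot : RotSym θ (Measure.map (X 1) P))
    -- the sign map `Sg`: a fixed measurable choice, equal to the normalized projection of `x`
    -- on the orthogonal complement of `θ` whenever `x ≠ ±θ`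
    (Sg : EuclideanSpace ℝ (Fin p) → EuclideanSpace ℝ (Fin p))
    (hSgmeas : Measurable Sg)
    (hSg : ∀ x, x - ⟪x, θ⟫ • θ ≠ 0 →
      Sg x = ‖x - ⟪x, θ⟫ • θ‖⁻¹ • (x - ⟪x, θ⟫ • θ))
    (hSgunit : ∀ x, ‖Sg x‖ = 1)
    (hSgperp : ∀ x, ⟪Sg x, θ⟫ = 0)
    -- `u i ω = u(X_i(ω))`
    (u : ℕ → Ω → ℝ)
    (hu : ∀ i ω, u i ω = Real.sqrt (1 - ⟪X i ω, θ⟫ ^ 2))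
    -- the moments `E[u₁²]` and `E[u₁⁴]`
    (Eu2 Eu4 : ℝ)
    (hEu2 : Eu2 = ∫ ω, (u 1 ω) ^ 2 ∂P)
    (hEu4 : Eu4 = ∫ ω, (u 1 ω) ^ 4 ∂P)
    (hEu2pos : 0 < Eu2)
    (ℓ : ℕ) (hℓ : 2 ≤ ℓ) (hℓn : ℓ ≤ n) :
    ∫ ω, (∑ i ∈ Finset.Icc 1 (ℓ - 1),
        u i ω * u ℓ ω * ⟪Sg (X i ω), Sg (X ℓ ω)⟫) ^ 4 ∂P =
      3 * ((ℓ : ℝ) - 1) / ((p : ℝ) ^ 2 - 1) * Eu4 ^ 2 +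
      3 * ((ℓ : ℝ) - 1) * ((ℓ : ℝ) - 2) / ((p : ℝ) - 1) ^ 2 * Eu4 * Eu2 ^ 2 := by

  classical
  have hX1meas : Measurable (X 1) := hXmeas 1 le_rfl (by omega)
  set μ : Measure (EuclideanSpace ℝ (Fin p)) := Measure.map (X 1) P with hμdef
  haveI hPμ : IsProbabilityMeasure μ := Measure.isProbabilityMeasure_map hX1meas.aemeasurable
  have hrot : RotSym θ μ := hXrot
  have hsph : ∀ᵐ x ∂μ, ‖x‖ = 1 := by
    rw [hμdef]
    refine (ae_map_iff hX1meas.aemeasurable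
      (isClosed_eq continuous_norm continuous_const).measurableSet).mpr ?_
    exact ae_of_all _ fun ω => hXsph 1 le_rfl (by omega) ω
  have hlaw : ∀ i, 1 ≤ i → i ≤ n → Measure.map (X i) P = μ := hXid
  have hu' : ∀ i ω, u i ω = ufn θ (X i ω) := fun i ω => hu i ω
  -- moments over μ
  have hM2 : ∫ x, ufn θ x ^ 2 ∂μ = Eu2 := by
    rw [hEu2, hμdef, integral_map hX1meas.aemeasurable
      ((ufn_meas θ).pow_const 2).aestronglyMeasurable]
    exact integral_congr_ae (ae_of_all _ fun ω => by simp only [hu'])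
  have hM4 : ∫ x, ufn θ x ^ 4 ∂μ = Eu4 := by
    rw [hEu4, hμdef, integral_map hX1meas.aemeasurable
      ((ufn_meas θ).pow_const 4).aestronglyMeasurable]
    exact integral_congr_ae (ae_of_all _ fun ω => by simp only [hu'])
  -- cast facts
  have hpR : (2 : ℝ) ≤ (p : ℝ) := by exact_mod_cast hp
  have hp1ne : ((p : ℝ) - 1) ≠ 0 := by linarith
  have hp2ne : ((p : ℝ) + 1) ≠ 0 := by linarith
  set c2 : ℝ := Eu2 / ((p : ℝ) - 1) with hc2def
  set c4 : ℝ := 3 * Eu4 / (((p : ℝ) - 1) * ((p : ℝ) + 1)) with hc4def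
  have hc2 : ∀ z, ∫ x, (ufn θ x * ⟪Sg x, Sg z⟫) ^ 2 ∂μ = c2 := by
    intro z
    have h0 : ∫ x, (ufn θ x * ⟪Sg x, Sg z⟫) ^ 2 ∂μ
        = ∫ x, ufn θ x ^ 2 * ⟪Sg x, Sg z⟫ ^ 2 ∂μ :=
      integral_congr_ae (ae_of_all _ fun x => by ring)
    have h := Ksum hp hrot hsph hθ hSgmeas hSg hSgunit hSgperp (hSgunit z) (hSgperp z)
      2 one_le_two
    rw [hM2] at h
    rw [h0, hc2def, eq_div_iff hp1ne]
    linarith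
  have hc4' : ∀ z, ∫ x, (ufn θ x * ⟪Sg x, Sg z⟫) ^ 4 ∂μ = c4 := by
    intro z
    have h0 : ∫ x, (ufn θ x * ⟪Sg x, Sg z⟫) ^ 4 ∂μ
        = ∫ x, ufn θ x ^ 4 * ⟪Sg x, Sg z⟫ ^ 4 ∂μ :=
      integral_congr_ae (ae_of_all _ fun x => by ring)
    have h := K4 hp hrot hsph hθ hSgmeas hSg hSgunit hSgperp (hSgunit z) (hSgperp z)
    rw [hM4] at h
    rw [h0, hc4def, eq_div_iff (mul_ne_zero hp1ne hp2ne)]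
    linarith
  have hodd1 : ∀ z, ∫ x, ufn θ x * ⟪Sg x, Sg z⟫ ∂μ = 0 := by
    intro z
    have h := Jodd hrot hsph hθ hSgmeas hSg (v := (0 : EuclideanSpace ℝ (Fin p)))
      (w := Sg z) (hSgperp z) (inner_zero_left _) (m := 1) (k := 0) (j := 1) le_rfl odd_one
    simpa using h
  -- index plumbing
  have hℓ1 : 1 ≤ ℓ := by omega
  have hℓmeas : Measurable (X ℓ) := hXmeas ℓ hℓ1 hℓn
  set I : Finset ℕ := Finset.Icc 1 (ℓ - 1) with hIdef
  have hbase : ∀ i ∈ I, 1 ≤ i ∧ i ≤ n ∧ i ≠ ℓ := by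
    intro i hi
    rw [hIdef, Finset.mem_Icc] at hi
    omega
  have hYmeas : ∀ r : Fin n, Measurable (X ((r : ℕ) + 1)) := fun r =>
    hXmeas _ (by omega) (by have := r.isLt; omega)
  -- independence plumbing
  have hind2 : ∀ a b : ℕ, 1 ≤ a → a ≤ n → 1 ≤ b → b ≤ n → a ≠ b →
      IndepFun (X a) (X b) P := by
    intro a b ha1 ha2 hb1 hb2 hne
    have hne' : (⟨a - 1, by omega⟩ : Fin n) ≠ (⟨b - 1, by omega⟩ : Fin n) := by
      intro h
      simp only [Fin.mk.injEq] at h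
      omega
    have h := hXindep.indepFun hne'
    simp only [Nat.sub_add_cancel ha1, Nat.sub_add_cancel hb1] at h
    exact h
  have hind1_2 : ∀ a b c : ℕ, 1 ≤ a → a ≤ n → 1 ≤ b → b ≤ n → 1 ≤ c → c ≤ n →
      a ≠ b → a ≠ c → IndepFun (X a) (fun ω => (X b ω, X c ω)) P := by
    intro a b c ha1 ha2 hb1 hb2 hc1 hc2' hab hac
    have h := (hXindep.indepFun_prodMk hYmeas ⟨b - 1, by omega⟩ ⟨c - 1, by omega⟩
      ⟨a - 1, by omega⟩ (by intro h; simp only [Fin.mk.injEq] at h; omega)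
      (by intro h; simp only [Fin.mk.injEq] at h; omega)).symm
    simp only [Nat.sub_add_cancel ha1, Nat.sub_add_cancel hb1, Nat.sub_add_cancel hc1] at h
    exact h
  have hind1_3 : ∀ a b c d : ℕ, 1 ≤ a → a ≤ n → 1 ≤ b → b ≤ n → 1 ≤ c → c ≤ n →
      1 ≤ d → d ≤ n → a ≠ b → a ≠ c → a ≠ d →
      IndepFun (X a) (fun ω => (X b ω, X c ω, X d ω)) P := by
    intro a b c d ha1 ha2 hb1 hb2 hc1 hc2' hd1 hd2 hab hac had
    have h := indep13 hXindep hYmeas ⟨a - 1, by omega⟩ ⟨b - 1, by omega⟩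
      ⟨c - 1, by omega⟩ ⟨d - 1, by omega⟩
      (by intro h; simp only [Fin.mk.injEq] at h; omega)
      (by intro h; simp only [Fin.mk.injEq] at h; omega)
      (by intro h; simp only [Fin.mk.injEq] at h; omega)
    simp only [Nat.sub_add_cancel ha1, Nat.sub_add_cancel hb1, Nat.sub_add_cancel hc1,
      Nat.sub_add_cancel hd1] at h
    exact h
  have hind1_4 : ∀ a b c d e : ℕ, 1 ≤ a → a ≤ n → 1 ≤ b → b ≤ n → 1 ≤ c → c ≤ n →
      1 ≤ d → d ≤ n → 1 ≤ e → e ≤ n → a ≠ b → a ≠ c → a ≠ d → a ≠ e →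
      IndepFun (X a) (fun ω => (X b ω, X c ω, X d ω, X e ω)) P := by
    intro a b c d e ha1 ha2 hb1 hb2 hc1 hc2' hd1 hd2 he1 he2 hab hac had hae
    have h := indep14 hXindep hYmeas ⟨a - 1, by omega⟩ ⟨b - 1, by omega⟩
      ⟨c - 1, by omega⟩ ⟨d - 1, by omega⟩ ⟨e - 1, by omega⟩
      (by intro h; simp only [Fin.mk.injEq] at h; omega)
      (by intro h; simp only [Fin.mk.injEq] at h; omega)
      (by intro h; simp only [Fin.mk.injEq] at h; omega)
      (by intro h; simp only [Fin.mk.injEq] at h; omega)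
    simp only [Nat.sub_add_cancel ha1, Nat.sub_add_cancel hb1, Nat.sub_add_cancel hc1,
      Nat.sub_add_cancel hd1, Nat.sub_add_cancel he1] at h
    exact h
  -- the summands
  obtain ⟨a, ha⟩ : ∃ a : ℕ → Ω → ℝ, a = fun i ω =>
      ufn θ (X i ω) * ufn θ (X ℓ ω) * ⟪Sg (X i ω), Sg (X ℓ ω)⟫ := ⟨_, rfl⟩
  have hapt : ∀ i ω, a i ω = ufn θ (X i ω) * ufn θ (X ℓ ω) * ⟪Sg (X i ω), Sg (X ℓ ω)⟫ :=
    fun i ω => by rw [ha]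
  have hameas : ∀ i, 1 ≤ i → i ≤ n → Measurable (a i) := by
    intro i h1 h2
    rw [ha]
    exact (((ufn_meas θ).comp (hXmeas i h1 h2)).mul ((ufn_meas θ).comp hℓmeas)).mul
      ((hSgmeas.comp (hXmeas i h1 h2)).inner (hSgmeas.comp hℓmeas))
  have habnd : ∀ i ω, |a i ω| ≤ 1 := fun i ω => by
    rw [hapt]; exact gfullbnd hSgunit (X i ω) (X ℓ ω)
  have hIone : ∀ i ∈ I, ∀ j ∈ I, ∀ k ∈ I, ∀ m ∈ I,
      Integrable (fun ω => a i ω * a j ω * a k ω * a m ω) P := by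
    intro i hi j hj k hk m hm
    obtain ⟨hi1, hi2, -⟩ := hbase i hi
    obtain ⟨hj1, hj2, -⟩ := hbase j hj
    obtain ⟨hk1, hk2, -⟩ := hbase k hk
    obtain ⟨hm1, hm2, -⟩ := hbase m hm
    refine bddInt ((((hameas i hi1 hi2).mul (hameas j hj1 hj2)).mul
      (hameas k hk1 hk2)).mul (hameas m hm1 hm2)).aestronglyMeasurable (C := 1) fun ω => ?_
    rw [abs_mul, abs_mul, abs_mul]
    exact mul_le_one₀ (mul_le_one₀ (mul_le_one₀ (habnd i ω) (abs_nonneg _) (habnd j ω))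
      (abs_nonneg _) (habnd k ω)) (abs_nonneg _) (habnd m ω)
  -- canonical pattern values
  have hV4 : ∀ i ∈ I, ∫ ω, a i ω * a i ω * a i ω * a i ω ∂P = c4 * Eu4 := by
    intro i hi
    obtain ⟨hi1, hi2, hiℓ⟩ := hbase i hi
    have h := peel4 (hXmeas i hi1 hi2) hℓmeas (hlaw i hi1 hi2) (hlaw ℓ hℓ1 hℓn)
      (hind2 i ℓ hi1 hi2 hℓ1 hℓn hiℓ) hSgmeas hSgunit hc4' hM4
    rw [← h]
    exact integral_congr_ae (ae_of_all _ fun ω => by simp only [hapt]; try ring)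
  have hV22 : ∀ i ∈ I, ∀ k ∈ I, i ≠ k →
      ∫ ω, a i ω * a i ω * a k ω * a k ω ∂P = c2 * (c2 * Eu4) := by
    intro i hi k hk hik
    obtain ⟨hi1, hi2, hiℓ⟩ := hbase i hi
    obtain ⟨hk1, hk2, hkℓ⟩ := hbase k hk
    have h := peel22 (hXmeas i hi1 hi2) (hXmeas k hk1 hk2) hℓmeas (hlaw i hi1 hi2)
      (hlaw k hk1 hk2) (hlaw ℓ hℓ1 hℓn)
      (hind1_2 i k ℓ hi1 hi2 hk1 hk2 hℓ1 hℓn hik hiℓ)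
      (hind2 k ℓ hk1 hk2 hℓ1 hℓn hkℓ) hSgmeas hSgunit hc2 hM4
    rw [← h]
    exact integral_congr_ae (ae_of_all _ fun ω => by simp only [hapt]; try ring)
  have hV31 : ∀ i ∈ I, ∀ k ∈ I, i ≠ k →
      ∫ ω, a i ω * a i ω * a i ω * a k ω ∂P = 0 := by
    intro i hi k hk hik
    obtain ⟨hi1, hi2, hiℓ⟩ := hbase i hi
    obtain ⟨hk1, hk2, hkℓ⟩ := hbase k hk
    have h := peel31 (hXmeas i hi1 hi2) (hXmeas k hk1 hk2) hℓmeas (hlaw k hk1 hk2)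
      (hind1_2 k i ℓ hk1 hk2 hi1 hi2 hℓ1 hℓn (Ne.symm hik) hkℓ) hSgmeas hSgunit hodd1
    rw [← h]
    exact integral_congr_ae (ae_of_all _ fun ω => by simp only [hapt]; try ring)
  have hV211 : ∀ i ∈ I, ∀ j ∈ I, ∀ k ∈ I, i ≠ j → i ≠ k → j ≠ k →
      ∫ ω, a i ω * a i ω * a j ω * a k ω ∂P = 0 := by
    intro i hi j hj k hk hij hik hjk
    obtain ⟨hi1, hi2, hiℓ⟩ := hbase i hi
    obtain ⟨hj1, hj2, hjℓ⟩ := hbase j hj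
    obtain ⟨hk1, hk2, hkℓ⟩ := hbase k hk
    have h := peel211 (hXmeas i hi1 hi2) (hXmeas j hj1 hj2) (hXmeas k hk1 hk2) hℓmeas
      (hlaw k hk1 hk2)
      (hind1_3 k i j ℓ hk1 hk2 hi1 hi2 hj1 hj2 hℓ1 hℓn (Ne.symm hik) (Ne.symm hjk) hkℓ)
      hSgmeas hSgunit hodd1
    rw [← h]
    exact integral_congr_ae (ae_of_all _ fun ω => by simp only [hapt]; try ring)
  have hV1111 : ∀ i ∈ I, ∀ j ∈ I, ∀ k ∈ I, ∀ m ∈ I,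
      i ≠ j → i ≠ k → i ≠ m → j ≠ k → j ≠ m → k ≠ m →
      ∫ ω, a i ω * a j ω * a k ω * a m ω ∂P = 0 := by
    intro i hi j hj k hk m hm hij hik him hjk hjm hkm
    obtain ⟨hi1, hi2, hiℓ⟩ := hbase i hi
    obtain ⟨hj1, hj2, hjℓ⟩ := hbase j hj
    obtain ⟨hk1, hk2, hkℓ⟩ := hbase k hk
    obtain ⟨hm1, hm2, hmℓ⟩ := hbase m hm
    have h := peel1111 (hXmeas i hi1 hi2) (hXmeas j hj1 hj2) (hXmeas k hk1 hk2)
      (hXmeas m hm1 hm2) hℓmeas (hlaw i hi1 hi2)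
      (hind1_4 i j k m ℓ hi1 hi2 hj1 hj2 hk1 hk2 hm1 hm2 hℓ1 hℓn hij hik him hiℓ)
      hSgmeas hSgunit hodd1
    rw [← h]
    exact integral_congr_ae (ae_of_all _ fun ω => by simp only [hapt]; try ring)
  -- classification of all quadruples
  have hVval : ∀ i ∈ I, ∀ j ∈ I, ∀ k ∈ I, ∀ m ∈ I,
      ∫ ω, a i ω * a j ω * a k ω * a m ω ∂P
      = (if k = m then (if j = k then (if i = j then c4 * Eu4 else 0) else 0) else 0)
      + ((if k = m then (if i = j then (if i = k then 0 else c2 * (c2 * Eu4)) else 0) else 0)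
      + ((if j = m then (if i = k then (if i = j then 0 else c2 * (c2 * Eu4)) else 0) else 0)
      + (if i = m then (if j = k then (if i = j then 0 else c2 * (c2 * Eu4)) else 0) else 0))) := by
    intro i hi j hj k hk m hm
    by_cases hij : i = j
    · subst hij
      by_cases hik : i = k
      · subst hik
        by_cases him : i = m
        · subst him
          rw [hV4 i hi]
          simp
        · rw [hV31 i hi m hm him]
          simp [him]
      · by_cases him : i = m
        · subst him
          rw [show (∫ ω, a i ω * a i ω * a k ω * a i ω ∂P)
              = ∫ ω, a i ω * a i ω * a i ω * a k ω ∂P from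
            integral_congr_ae (ae_of_all _ fun ω => by ring),
            hV31 i hi k hk hik]
          simp [hik, Ne.symm hik]
        · by_cases hkm : k = m
          · subst hkm
            rw [hV22 i hi k hk hik]
            simp [hik, Ne.symm hik]
          · rw [hV211 i hi k hk m hm hik him hkm]
            simp [hik, him, hkm, Ne.symm hik, Ne.symm him, Ne.symm hkm]
    · by_cases hik : i = k
      · subst hik
        by_cases hjm : j = m
        · subst hjm
          rw [show (∫ ω, a i ω * a j ω * a i ω * a j ω ∂P)
              = ∫ ω, a i ω * a i ω * a j ω * a j ω ∂P from
            integral_congr_ae (ae_of_all _ fun ω => by ring),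
            hV22 i hi j hj hij]
          simp [hij, Ne.symm hij]
        · by_cases him : i = m
          · subst him
            rw [show (∫ ω, a i ω * a j ω * a i ω * a i ω ∂P)
                = ∫ ω, a i ω * a i ω * a i ω * a j ω ∂P from
              integral_congr_ae (ae_of_all _ fun ω => by ring),
              hV31 i hi j hj hij]
            simp [hij, Ne.symm hij, hjm, Ne.symm hjm]
          · rw [show (∫ ω, a i ω * a j ω * a i ω * a m ω ∂P)
                = ∫ ω, a i ω * a i ω * a j ω * a m ω ∂P from
              integral_congr_ae (ae_of_all _ fun ω => by ring),
              hV211 i hi j hj m hm hij him hjm]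
            simp [hij, him, hjm, Ne.symm hij, Ne.symm him, Ne.symm hjm]
      · by_cases him : i = m
        · subst him
          by_cases hjk : j = k
          · subst hjk
            rw [show (∫ ω, a i ω * a j ω * a j ω * a i ω ∂P)
                = ∫ ω, a i ω * a i ω * a j ω * a j ω ∂P from
              integral_congr_ae (ae_of_all _ fun ω => by ring),
              hV22 i hi j hj hij]
            simp [hij, Ne.symm hij]
          · rw [show (∫ ω, a i ω * a j ω * a k ω * a i ω ∂P)
                = ∫ ω, a i ω * a i ω * a j ω * a k ω ∂P from
              integral_congr_ae (ae_of_all _ fun ω => by ring),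
              hV211 i hi j hj k hk hij hik hjk]
            simp [hij, hik, hjk, Ne.symm hij, Ne.symm hik, Ne.symm hjk]
        · by_cases hjk : j = k
          · subst hjk
            by_cases hjm : j = m
            · subst hjm
              rw [show (∫ ω, a i ω * a j ω * a j ω * a j ω ∂P)
                  = ∫ ω, a j ω * a j ω * a j ω * a i ω ∂P from
                integral_congr_ae (ae_of_all _ fun ω => by ring),
                hV31 j hj i hi (Ne.symm hij)]
              simp [hij, Ne.symm hij]
            · rw [show (∫ ω, a i ω * a j ω * a j ω * a m ω ∂P)
                  = ∫ ω, a j ω * a j ω * a i ω * a m ω ∂P from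
                integral_congr_ae (ae_of_all _ fun ω => by ring),
                hV211 j hj i hi m hm (Ne.symm hij) hjm him]
              simp [hij, him, hjm, Ne.symm hij, Ne.symm him, Ne.symm hjm]
          · by_cases hjm : j = m
            · subst hjm
              rw [show (∫ ω, a i ω * a j ω * a k ω * a j ω ∂P)
                  = ∫ ω, a j ω * a j ω * a i ω * a k ω ∂P from
                integral_congr_ae (ae_of_all _ fun ω => by ring),
                hV211 j hj i hi k hk (Ne.symm hij) hjk hik]
              simp [hij, hik, hjk, Ne.symm hij, Ne.symm hik, Ne.symm hjk]
            · by_cases hkm : k = m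
              · subst hkm
                rw [show (∫ ω, a i ω * a j ω * a k ω * a k ω ∂P)
                    = ∫ ω, a k ω * a k ω * a i ω * a j ω ∂P from
                  integral_congr_ae (ae_of_all _ fun ω => by ring),
                  hV211 k hk i hi j hj (Ne.symm hik) (Ne.symm hjk) hij]
                simp [hij, hik, hjk, Ne.symm hij, Ne.symm hik, Ne.symm hjk]
              · rw [hV1111 i hi j hj k hk m hm hij hik him hjk hjm hkm]
                simp [hij, hik, him, hjk, hjm, hkm]
  -- expansion of the fourth power
  have hT4 : ∀ ω, (∑ i ∈ I, a i ω) ^ 4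
      = ∑ i ∈ I, ∑ j ∈ I, ∑ k ∈ I, ∑ m ∈ I, a i ω * a j ω * a k ω * a m ω := by
    intro ω
    rw [show (∑ i ∈ I, a i ω) ^ 4
        = ((∑ i ∈ I, a i ω) * (∑ i ∈ I, a i ω)) * ((∑ i ∈ I, a i ω) * (∑ i ∈ I, a i ω))
        from by ring]
    rw [Finset.sum_mul_sum I I, Finset.sum_mul_sum I I]
    refine Finset.sum_congr rfl fun i _ => ?_
    refine Finset.sum_congr rfl fun j _ => ?_
    rw [Finset.sum_mul_sum I I]
    exact Finset.sum_congr rfl fun k _ => Finset.sum_congr rfl fun m _ => by ring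
  have hexp : ∫ ω, (∑ i ∈ I, a i ω) ^ 4 ∂P
      = ∑ i ∈ I, ∑ j ∈ I, ∑ k ∈ I, ∑ m ∈ I, ∫ ω, a i ω * a j ω * a k ω * a m ω ∂P := by
    rw [integral_congr_ae (ae_of_all _ hT4)]
    rw [integral_finset_sum I (fun i hi => integrable_finset_sum I fun j hj =>
      integrable_finset_sum I fun k hk => integrable_finset_sum I fun m hm =>
        hIone i hi j hj k hk m hm)]
    refine Finset.sum_congr rfl fun i hi => ?_
    rw [integral_finset_sum I (fun j hj => integrable_finset_sum I fun k hk =>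
      integrable_finset_sum I fun m hm => hIone i hi j hj k hk m hm)]
    refine Finset.sum_congr rfl fun j hj => ?_
    rw [integral_finset_sum I (fun k hk => integrable_finset_sum I fun m hm =>
      hIone i hi j hj k hk m hm)]
    refine Finset.sum_congr rfl fun k hk => ?_
    exact integral_finset_sum I fun m hm => hIone i hi j hj k hk m hm
  -- evaluating the four indicator sums
  have hS1 : ∑ i ∈ I, ∑ j ∈ I, ∑ k ∈ I, ∑ m ∈ I,
      (if k = m then (if j = k then (if i = j then c4 * Eu4 else 0) else 0) else 0)
      = (I.card : ℝ) * (c4 * Eu4) := by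
    have h1 : ∀ i ∈ I, (∑ j ∈ I, ∑ k ∈ I, ∑ m ∈ I,
        (if k = m then (if j = k then (if i = j then c4 * Eu4 else 0) else 0) else 0))
        = c4 * Eu4 := by
      intro i hi
      have h2 : ∀ j ∈ I, (∑ k ∈ I, ∑ m ∈ I,
          (if k = m then (if j = k then (if i = j then c4 * Eu4 else 0) else 0) else 0))
          = if i = j then c4 * Eu4 else 0 := by
        intro j hj
        have h3 : ∀ k ∈ I, (∑ m ∈ I,
            (if k = m then (if j = k then (if i = j then c4 * Eu4 else 0) else 0) else 0))
            = if j = k then (if i = j then c4 * Eu4 else 0) else 0 := fun k hk =>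
          sum_ite_eq_of_mem hk _
        rw [Finset.sum_congr rfl h3]
        exact sum_ite_eq_of_mem hj _
      rw [Finset.sum_congr rfl h2]
      exact sum_ite_eq_of_mem hi _
    rw [Finset.sum_congr rfl h1, Finset.sum_const, nsmul_eq_mul]
  have hS2 : ∑ i ∈ I, ∑ j ∈ I, ∑ k ∈ I, ∑ m ∈ I,
      (if k = m then (if i = j then (if i = k then 0 else c2 * (c2 * Eu4)) else 0) else 0)
      = (I.card : ℝ) * ((I.card : ℝ) * (c2 * (c2 * Eu4)) - c2 * (c2 * Eu4)) := by
    have h1 : ∀ i ∈ I, (∑ j ∈ I, ∑ k ∈ I, ∑ m ∈ I,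
        (if k = m then (if i = j then (if i = k then 0 else c2 * (c2 * Eu4)) else 0) else 0))
        = (I.card : ℝ) * (c2 * (c2 * Eu4)) - c2 * (c2 * Eu4) := by
      intro i hi
      have h2 : ∀ j ∈ I, (∑ k ∈ I, ∑ m ∈ I,
          (if k = m then (if i = j then (if i = k then 0 else c2 * (c2 * Eu4)) else 0) else 0))
          = if i = j then ((I.card : ℝ) * (c2 * (c2 * Eu4)) - c2 * (c2 * Eu4)) else 0 := by
        intro j hj
        have h3 : ∀ k ∈ I, (∑ m ∈ I,
            (if k = m then (if i = j then (if i = k then 0 else c2 * (c2 * Eu4)) else 0) else 0))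
            = if i = j then (if i = k then 0 else c2 * (c2 * Eu4)) else 0 := fun k hk =>
          sum_ite_eq_of_mem hk _
        rw [Finset.sum_congr rfl h3]
        by_cases hij : i = j
        · simp only [if_pos hij]
          exact sum_ite_ne_of_mem hi _
        · simp [hij]
      rw [Finset.sum_congr rfl h2]
      exact sum_ite_eq_of_mem hi _
    rw [Finset.sum_congr rfl h1, Finset.sum_const, nsmul_eq_mul]
  have hS3 : ∑ i ∈ I, ∑ j ∈ I, ∑ k ∈ I, ∑ m ∈ I,
      (if j = m then (if i = k then (if i = j then 0 else c2 * (c2 * Eu4)) else 0) else 0)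
      = (I.card : ℝ) * ((I.card : ℝ) * (c2 * (c2 * Eu4)) - c2 * (c2 * Eu4)) := by
    have h1 : ∀ i ∈ I, (∑ j ∈ I, ∑ k ∈ I, ∑ m ∈ I,
        (if j = m then (if i = k then (if i = j then 0 else c2 * (c2 * Eu4)) else 0) else 0))
        = (I.card : ℝ) * (c2 * (c2 * Eu4)) - c2 * (c2 * Eu4) := by
      intro i hi
      have h2 : ∀ j ∈ I, (∑ k ∈ I, ∑ m ∈ I,
          (if j = m then (if i = k then (if i = j then 0 else c2 * (c2 * Eu4)) else 0) else 0))
          = if i = j then 0 else c2 * (c2 * Eu4) := by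
        intro j hj
        have h3 : ∀ k ∈ I, (∑ m ∈ I,
            (if j = m then (if i = k then (if i = j then 0 else c2 * (c2 * Eu4)) else 0) else 0))
            = if i = k then (if i = j then 0 else c2 * (c2 * Eu4)) else 0 := fun k hk =>
          sum_ite_eq_of_mem hj _
        rw [Finset.sum_congr rfl h3]
        exact sum_ite_eq_of_mem hi _
      rw [Finset.sum_congr rfl h2]
      exact sum_ite_ne_of_mem hi _
    rw [Finset.sum_congr rfl h1, Finset.sum_const, nsmul_eq_mul]
  have hS4 : ∑ i ∈ I, ∑ j ∈ I, ∑ k ∈ I, ∑ m ∈ I,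
      (if i = m then (if j = k then (if i = j then 0 else c2 * (c2 * Eu4)) else 0) else 0)
      = (I.card : ℝ) * ((I.card : ℝ) * (c2 * (c2 * Eu4)) - c2 * (c2 * Eu4)) := by
    have h1 : ∀ i ∈ I, (∑ j ∈ I, ∑ k ∈ I, ∑ m ∈ I,
        (if i = m then (if j = k then (if i = j then 0 else c2 * (c2 * Eu4)) else 0) else 0))
        = (I.card : ℝ) * (c2 * (c2 * Eu4)) - c2 * (c2 * Eu4) := by
      intro i hi
      have h2 : ∀ j ∈ I, (∑ k ∈ I, ∑ m ∈ I,
          (if i = m then (if j = k then (if i = j then 0 else c2 * (c2 * Eu4)) else 0) else 0))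
          = if i = j then 0 else c2 * (c2 * Eu4) := by
        intro j hj
        have h3 : ∀ k ∈ I, (∑ m ∈ I,
            (if i = m then (if j = k then (if i = j then 0 else c2 * (c2 * Eu4)) else 0) else 0))
            = if j = k then (if i = j then 0 else c2 * (c2 * Eu4)) else 0 := fun k hk =>
          sum_ite_eq_of_mem hi _
        rw [Finset.sum_congr rfl h3]
        exact sum_ite_eq_of_mem hj _
      rw [Finset.sum_congr rfl h2]
      exact sum_ite_ne_of_mem hi _
    rw [Finset.sum_congr rfl h1, Finset.sum_const, nsmul_eq_mul]
  -- put everything together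
  have hcard : (I.card : ℝ) = (ℓ : ℝ) - 1 := by
    rw [hIdef, Nat.card_Icc]
    have h1 : ℓ - 1 + 1 - 1 = ℓ - 1 := by omega
    rw [h1, Nat.cast_sub hℓ1, Nat.cast_one]
  have hgoal0 : ∫ ω, (∑ i ∈ I, u i ω * u ℓ ω * ⟪Sg (X i ω), Sg (X ℓ ω)⟫) ^ 4 ∂P
      = ∫ ω, (∑ i ∈ I, a i ω) ^ 4 ∂P := by
    refine integral_congr_ae (ae_of_all _ fun ω => ?_)
    dsimp only
    congr 1
    refine Finset.sum_congr rfl fun i _ => ?_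
    simp only [hapt, hu']
  rw [hgoal0, hexp]
  rw [Finset.sum_congr rfl (fun i hi => Finset.sum_congr rfl fun j hj =>
    Finset.sum_congr rfl fun k hk => Finset.sum_congr rfl fun m hm =>
      hVval i hi j hj k hk m hm)]
  simp only [Finset.sum_add_distrib]
  rw [hS1, hS2, hS3, hS4, hcard]
  rw [hc2def, hc4def]
  rw [show ((p : ℝ) ^ 2 - 1) = ((p : ℝ) - 1) * ((p : ℝ) + 1) from by ring]
  field_simp
  ring
end
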